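/- arXiv:2509.10070 — 3 statements merged into one kernel-verified Lean document; each statement's English description precedes it below -/
import Mathlib

section
/- Let G be a finite simple graph with n vertices, m edges, and c connected components. Then every graphic parity network for G has size at least m + n − c. -/
/-- Apply a CNOT gate `g = (control, target)` to a state `t : V → Finset V`:
the target wire receives the symmetric difference of the control and target terms,
all other wires are unchanged. -/
def applyGate {V : Type*} [DecidableEq V] (g : V × V) (t : V → Finset V) : V → Finset V :=
  fun w => if w = g.2 then symmDiff (t g.1) (t g.2) else t w

/-- Run a circuit (a list of CNOT gates) from the initial state `term v = {v}`. -/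
def runCircuit {V : Type*} [DecidableEq V] (C : List (V × V)) : V → Finset V :=
  C.foldl (fun t g => applyGate g t) (fun v => {v})

/-- `C` is a graphic parity network for the graph `G`:
every gate has distinct control and target, every edge `{u, v}` of `G` appears as the
term of some wire after some prefix of the circuit, and the final state is the initial
state. Its size is `C.length`. -/
def IsGPN {V : Type*} [DecidableEq V] (G : SimpleGraph V) (C : List (V × V)) : Prop :=
  (∀ g ∈ C, g.1 ≠ g.2) ∧
  (∀ u v : V, G.Adj u v → ∃ (k : ℕ) (w : V), runCircuit (C.take k) w = {u, v}) ∧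
  (∀ v : V, runCircuit C v = {v})

namespace GPNaux
variable {V : Type*} [DecidableEq V]

lemma runCircuit_take_succ (C : List (V × V)) (k : ℕ) (hk : k < C.length) :
    runCircuit (C.take (k+1)) = applyGate (C.get ⟨k, hk⟩) (runCircuit (C.take k)) := by
  unfold runCircuit
  rw [List.take_succ, List.foldl_append]
  simp [List.getElem?_eq_getElem hk]

lemma runCircuit_take_of_le (C : List (V × V)) {k : ℕ} (hk : C.length ≤ k) :
    runCircuit (C.take k) = runCircuit C := by
  rw [List.take_of_length_le hk]

/-- the state matrix -/
noncomputable def toMat [Fintype V] (t : V → Finset V) : Matrix V V (ZMod 2) :=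
  Matrix.of fun w v => if v ∈ t w then 1 else 0

lemma toMat_applyGate [Fintype V] (g : V × V) (hg : g.1 ≠ g.2) (t : V → Finset V) :
    toMat (applyGate g t) = Matrix.transvection g.2 g.1 1 * toMat t := by
  ext w v
  rw [Matrix.transvection, Matrix.add_mul, Matrix.one_mul]
  rw [Matrix.single]
  simp only [toMat, applyGate, Matrix.of_apply, Matrix.add_apply, Matrix.mul_apply, smul_eq_mul, one_mul]
  by_cases hw : w = g.2
  · subst hw
    simp only [if_pos rfl]
    rw [Finset.sum_eq_single g.1]
    · by_cases h1 : v ∈ t g.1 <;> by_cases h2 : v ∈ t g.2 <;>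
        simp only [Finset.mem_symmDiff, h1, h2, if_true, if_false] <;>
        first | decide | simp [h1, h2]
    · intro b _ hb
      simp [Ne.symm hb]
    · simp
  · simp only [if_neg hw]
    rw [Finset.sum_eq_zero, add_zero]
    intro b _
    simp [Ne.symm hw, hw]


lemma toMat_det [Fintype V] (C : List (V × V)) (hC : ∀ g ∈ C, g.1 ≠ g.2) (k : ℕ) :
    (toMat (runCircuit (C.take k))).det = 1 := by
  induction k with
  | zero =>
    have : toMat (runCircuit (C.take 0) : V → Finset V) = 1 := by
      ext w v
      simp only [toMat, runCircuit, List.take_zero, List.foldl_nil, Matrix.of_apply,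
        Finset.mem_singleton, Matrix.one_apply]
      by_cases h : v = w
      · simp [h]
      · simp only [h, if_false]
        exact (if_neg (fun hh : w = v => h hh.symm)).symm
    rw [this, Matrix.det_one]
  | succ k ih =>
    by_cases hk : k < C.length
    · have hg := hC (C.get ⟨k, hk⟩) (C.get_mem _)
      rw [runCircuit_take_succ C k hk, toMat_applyGate _ hg, Matrix.det_mul,
        Matrix.det_transvection_of_ne _ _ (Ne.symm hg), ih, one_mul]
    · push_neg at hk
      rw [runCircuit_take_of_le C (by omega), ← runCircuit_take_of_le C hk]
      exact ih

lemma term_nonempty [Fintype V] (C : List (V × V)) (hC : ∀ g ∈ C, g.1 ≠ g.2) (k : ℕ) (w : V) :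
    runCircuit (C.take k) w ≠ ∅ := by
  intro hemp
  have hdet := toMat_det C hC k
  have : (toMat (runCircuit (C.take k))).det = 0 := by
    apply Matrix.det_eq_zero_of_row_eq_zero w
    intro j
    simp [toMat, hemp]
  rw [hdet] at this
  exact one_ne_zero this


variable {V : Type*} [DecidableEq V]

def mergeSetoid (s : Setoid V) (i j : V) : Setoid V where
  r a b := s.r a b ∨ (s.r a i ∧ s.r j b) ∨ (s.r a j ∧ s.r i b)
  iseqv := by
    constructor
    · intro a; exact Or.inl (s.refl a)
    · rintro a b (hab | ⟨h1, h2⟩ | ⟨h1, h2⟩)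
      · exact Or.inl (s.symm hab)
      · exact Or.inr (Or.inr ⟨s.symm h2, s.symm h1⟩)
      · exact Or.inr (Or.inl ⟨s.symm h2, s.symm h1⟩)
    · rintro a b c (hab | ⟨h1, h2⟩ | ⟨h1, h2⟩) (hbc | ⟨g1, g2⟩ | ⟨g1, g2⟩)
      · exact Or.inl (s.trans hab hbc)
      · exact Or.inr (Or.inl ⟨s.trans hab g1, g2⟩)
      · exact Or.inr (Or.inr ⟨s.trans hab g1, g2⟩)
      · exact Or.inr (Or.inl ⟨h1, s.trans h2 hbc⟩)
      · exact Or.inl (s.trans h1 (s.trans (s.symm (s.trans h2 g1)) g2))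
      · exact Or.inl (s.trans h1 g2)
      · exact Or.inr (Or.inr ⟨h1, s.trans h2 hbc⟩)
      · exact Or.inl (s.trans h1 g2)
      · exact Or.inl (s.trans h1 (s.trans (s.symm (s.trans h2 g1)) g2))

lemma mergeSetoid_le (s : Setoid V) (i j : V) {a b : V} (h : s.r a b) :
    (mergeSetoid s i j).r a b := Or.inl h

lemma mergeSetoid_pair (s : Setoid V) (i j : V) : (mergeSetoid s i j).r i j :=
  Or.inr (Or.inl ⟨s.refl i, s.refl j⟩)

lemma mergeSetoid_eq_of_rel (s : Setoid V) {i j : V} (hij : s.r i j) :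
    mergeSetoid s i j = s := by
  apply Setoid.ext
  intro a b
  constructor
  · rintro (hab | ⟨h1, h2⟩ | ⟨h1, h2⟩)
    · exact hab
    · exact s.trans h1 (s.trans hij h2)
    · exact s.trans h1 (s.trans (s.symm hij) h2)
  · exact Or.inl

def eqS : Setoid V := ⟨Eq, ⟨fun _ => rfl, Eq.symm, Eq.trans⟩⟩

def stepFold (l : List (V × V)) (s : Setoid V) : Setoid V :=
  l.foldl (fun s g => mergeSetoid s g.1 g.2) s

def connSetoid (C : List (V × V)) : Setoid V := stepFold C eqS

lemma stepFold_append (l1 l2 : List (V × V)) (s : Setoid V) :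
    stepFold (l1 ++ l2) s = stepFold l2 (stepFold l1 s) := by
  simp [stepFold, List.foldl_append]

lemma stepFold_le (l : List (V × V)) (s : Setoid V) {a b : V} (h : s.r a b) :
    (stepFold l s).r a b := by
  induction l generalizing s with
  | nil => exact h
  | cons g l ih => exact ih _ (mergeSetoid_le _ _ _ h)

lemma connSetoid_mono (C : List (V × V)) {k k' : ℕ} (hk : k ≤ k') {a b : V}
    (h : (connSetoid (C.take k)).r a b) : (connSetoid (C.take k')).r a b := by
  have : C.take k' = C.take k ++ (C.drop k).take (k' - k) := by
    rw [← List.take_add]; congr 1; omega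
  rw [this, connSetoid, stepFold_append]
  exact stepFold_le _ _ h

lemma connSetoid_take_le (C : List (V × V)) (k : ℕ) {a b : V}
    (h : (connSetoid (C.take k)).r a b) : (connSetoid C).r a b := by
  have h2 := connSetoid_mono C (le_max_left k C.length) h
  rwa [List.take_of_length_le (le_max_right _ _)] at h2

lemma connSetoid_take_succ (C : List (V × V)) (k : ℕ) (hk : k < C.length) :
    connSetoid (C.take (k+1)) =
      mergeSetoid (connSetoid (C.take k)) (C.get ⟨k, hk⟩).1 (C.get ⟨k, hk⟩).2 := by
  unfold connSetoid
  rw [List.take_succ, List.getElem?_eq_getElem hk, stepFold_append]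
  rfl

-- counting lemmas
lemma card_quot_merge [Finite V] (s : Setoid V) (i j : V) :
    Nat.card (Quotient s) ≤ Nat.card (Quotient (mergeSetoid s i j)) + 1 := by
  classical
  set t := mergeSetoid s i j
  let π : Quotient s → Quotient t := Quotient.map id (fun a b h => Or.inl h)
  let f : Quotient s → Option (Quotient t) := fun x =>
    if x = Quotient.mk s i then none else some (π x)
  have hinj : Function.Injective f := by
    intro x y hxy
    by_cases hx : x = Quotient.mk s i <;> by_cases hy : y = Quotient.mk s i
    · rw [hx, hy]
    · simp only [f, if_pos hx, if_neg hy] at hxy; exact absurd hxy (by simp)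
    · simp only [f, if_neg hx, if_pos hy] at hxy; exact absurd hxy (by simp)
    · simp only [f, if_neg hx, if_neg hy, Option.some_inj] at hxy
      obtain ⟨a, rfl⟩ := Quotient.exists_rep x
      obtain ⟨b, rfl⟩ := Quotient.exists_rep y
      have : t.r a b := Quotient.exact hxy
      rcases this with hab | ⟨h1, h2⟩ | ⟨h1, h2⟩
      · exact Quotient.sound hab
      · exact absurd (Quotient.sound h1) hx
      · exact absurd (Quotient.sound (s.symm h2)) hy
  haveI : Finite (Quotient t) := Quotient.finite t
  haveI := Fintype.ofFinite (Quotient t)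
  calc Nat.card (Quotient s) ≤ Nat.card (Option (Quotient t)) :=
        Nat.card_le_card_of_injective f hinj
    _ = Nat.card (Quotient t) + 1 := by
        simp [Nat.card_eq_fintype_card]

lemma card_quot_eqS [Finite V] : Nat.card (Quotient (eqS : Setoid V)) = Nat.card V := by
  symm
  apply Nat.card_eq_of_bijective (fun x => Quotient.mk eqS x)
  constructor
  · intro a b hab; exact Quotient.exact hab
  · intro x; exact Quotient.exists_rep x


set_option linter.unusedSectionVars false

variable (C : List (V × V))

lemma term_subset_conn (k : ℕ) (w : V) :
    ∀ x ∈ runCircuit (C.take k) w, (connSetoid (C.take k)).r w x := by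
  induction k generalizing w with
  | zero =>
    intro x hx
    simp only [List.take_zero, runCircuit, List.foldl_nil, Finset.mem_singleton] at hx
    cases hx
    exact (connSetoid _).refl _
  | succ k ih =>
    by_cases hk : k < C.length
    · intro x hx
      rw [runCircuit_take_succ C k hk] at hx
      rw [connSetoid_take_succ C k hk]
      set g := C.get ⟨k, hk⟩
      set s := connSetoid (C.take k)
      by_cases hw : w = g.2
      · rw [applyGate, if_pos hw] at hx
        rw [Finset.mem_symmDiff] at hx
        subst hw
        rcases hx with ⟨h1, _⟩ | ⟨h2, _⟩
        · exact Or.inr (Or.inr ⟨s.refl g.2, ih g.1 x h1⟩)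
        · exact Or.inl (ih g.2 x h2)
      · rw [applyGate, if_neg hw] at hx
        exact mergeSetoid_le _ _ _ (ih w x hx)
    · push_neg at hk
      intro x hx
      rw [List.take_of_length_le (by omega : C.length ≤ k + 1)] at hx ⊢
      rw [← List.take_of_length_le hk] at hx ⊢
      exact ih w x hx

section Main

variable [Inhabited V]

def gate (k : ℕ) : V × V := C.getD k default

def appears (s : Finset V) (k : ℕ) : Prop := ∃ w, runCircuit (C.take k) w = s

def firstAt (s : Finset V) (k : ℕ) : Prop := appears C s k ∧ ∀ k' < k, ¬ appears C s k'

def ProducerAt (k : ℕ) : Prop := ∃ s : Finset V, s.card = 2 ∧ firstAt C s (k+1)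

def BridgingAt (k : ℕ) : Prop :=
  ¬ (connSetoid (C.take k)).r (gate C k).1 (gate C k).2

lemma gate_eq (k : ℕ) (hk : k < C.length) : gate C k = C.get ⟨k, hk⟩ := by
  simp [gate, List.getD_eq_getElem, List.getElem?_eq_getElem hk]

lemma firstAt_le_length {s : Finset V} {k : ℕ} (hf : firstAt C s k) (hs : s.card = 2) :
    1 ≤ k ∧ k ≤ C.length := by
  constructor
  · rcases Nat.eq_zero_or_pos k with rfl | hpos
    · exfalso
      obtain ⟨w, hw⟩ := hf.1
      simp only [List.take_zero, runCircuit, List.foldl_nil] at hw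
      rw [← hw] at hs
      simp at hs
    · exact hpos
  · by_contra hlen
    push_neg at hlen
    obtain ⟨w, hw⟩ := hf.1
    rw [runCircuit_take_of_le C (by omega)] at hw
    exact hf.2 C.length hlen ⟨w, by rwa [runCircuit_take_of_le C le_rfl]⟩

lemma producer_term {k : ℕ} (hp : ProducerAt C k) :
    k < C.length ∧ ∃ s : Finset V, s.card = 2 ∧
      runCircuit (C.take (k+1)) (gate C k).2 = s := by
  obtain ⟨s, hs, hf⟩ := hp
  have hk : k < C.length := by
    have := (firstAt_le_length C hf hs).2; omega
  refine ⟨hk, s, hs, ?_⟩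
  obtain ⟨w, hw⟩ := hf.1
  rw [gate_eq C k hk]
  by_cases hwt : w = (C.get ⟨k, hk⟩).2
  · rwa [← hwt]
  · exfalso
    rw [runCircuit_take_succ C k hk, applyGate, if_neg hwt] at hw
    exact hf.2 k (by omega) ⟨w, hw⟩


variable [Fintype V]

lemma bridging_size {k : ℕ} (hk : k < C.length) (hb : BridgingAt C k)
    (hC : ∀ g ∈ C, g.1 ≠ g.2) :
    2 ≤ (runCircuit (C.take (k+1)) (gate C k).2).card ∧
    (runCircuit (C.take (k+1)) (gate C k).2).card =
      (runCircuit (C.take k) (gate C k).1).card +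
      (runCircuit (C.take k) (gate C k).2).card := by
  set g := gate C k
  set t1 := runCircuit (C.take k) g.1
  set t2 := runCircuit (C.take k) g.2
  have hdisj : Disjoint t1 t2 := by
    rw [Finset.disjoint_left]
    intro x hx1 hx2
    exact hb ((connSetoid (C.take k)).trans (term_subset_conn C k g.1 x hx1)
      ((connSetoid (C.take k)).symm (term_subset_conn C k g.2 x hx2)))
  have hrun : runCircuit (C.take (k+1)) g.2 = symmDiff t1 t2 := by
    rw [runCircuit_take_succ C k hk, applyGate,
      show (C.get ⟨k, hk⟩) = g from (gate_eq C k hk).symm, if_pos rfl]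
  have hcard : (symmDiff t1 t2).card = t1.card + t2.card := by
    rw [hdisj.symmDiff_eq_sup]
    exact Finset.card_union_of_disjoint hdisj
  have h1 : t1.Nonempty := Finset.nonempty_iff_ne_empty.2 (term_nonempty C hC k g.1)
  have h2 : t2.Nonempty := Finset.nonempty_iff_ne_empty.2 (term_nonempty C hC k g.2)
  rw [hrun, hcard]
  have := Finset.card_pos.2 h1
  have := Finset.card_pos.2 h2
  omega

lemma size_invariant (hC : ∀ g ∈ C, g.1 ≠ g.2) (j : V) (a b : ℕ) (hab : a ≤ b)
    (hyp : ∀ k, a ≤ k → k < b → k < C.length → (gate C k).2 = j →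
      BridgingAt C k ∨ ProducerAt C k)
    (ha : 2 ≤ (runCircuit (C.take a) j).card) :
    2 ≤ (runCircuit (C.take b) j).card := by
  induction b with
  | zero =>
    have : a = 0 := by omega
    subst this; exact ha
  | succ b ih =>
    rcases Nat.lt_or_ge a (b+1) with hlt | hge
    · have hb : a ≤ b := by omega
      have hihb : 2 ≤ (runCircuit (C.take b) j).card :=
        ih hb (fun k hk1 hk2 hk3 hk4 => hyp k hk1 (by omega) hk3 hk4)
      by_cases hkb : b < C.length
      · by_cases htj : (gate C b).2 = j
        · rcases hyp b hb (by omega) hkb htj with hbr | hpr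
          · have := (bridging_size C hkb hbr hC).1
            rwa [htj] at this
          · obtain ⟨_, s, hs2, hterm⟩ := producer_term C hpr
            rw [htj] at hterm
            rw [hterm]; omega
        · rw [runCircuit_take_succ C b hkb, applyGate, if_neg (fun hh => htj (by rw [gate_eq C b hkb]; exact hh.symm))]
          exact hihb
      · push_neg at hkb
        rw [List.take_of_length_le (by omega : C.length ≤ b + 1)]
        rwa [List.take_of_length_le hkb] at hihb
    · have : a = b + 1 := by omega
      subst this; exact ha

noncomputable def repairSet (j : V) (k : ℕ) : Finset ℕ := by
  classical
  exact (Finset.range C.length).filter fun k' =>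
    k < k' ∧ (gate C k').2 = j ∧ ¬ BridgingAt C k' ∧ ¬ ProducerAt C k'

lemma mem_repairSet {j : V} {k k' : ℕ} :
    k' ∈ repairSet C j k ↔ k' < C.length ∧ k < k' ∧ (gate C k').2 = j ∧
      ¬ BridgingAt C k' ∧ ¬ ProducerAt C k' := by
  classical
  simp only [repairSet, Finset.mem_filter, Finset.mem_range]

lemma repair_exists (hC : ∀ g ∈ C, g.1 ≠ g.2) (hfin : ∀ v, runCircuit C v = {v})
    {k : ℕ} (hk : k < C.length) (hb : BridgingAt C k) (hp : ProducerAt C k) :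
    (repairSet C (gate C k).2 k).Nonempty := by
  by_contra hne
  rw [Finset.not_nonempty_iff_eq_empty] at hne
  set j := (gate C k).2 with hj
  have h2 : 2 ≤ (runCircuit (C.take (k+1)) j).card := (bridging_size C hk hb hC).1
  have hinv := size_invariant C hC j (k+1) C.length (by omega)
    (fun k' h1 h2' h3 h4 => by
      by_contra hcon; push_neg at hcon
      have : k' ∈ repairSet C j k := (mem_repairSet C).2 ⟨h3, by omega, h4, hcon.1, hcon.2⟩
      rw [hne] at this
      exact absurd this (Finset.notMem_empty _)) h2
  rw [List.take_length, hfin j] at hinv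
  simp at hinv

lemma bp_before {k : ℕ} (hk : k < C.length) (hb : BridgingAt C k) (hp : ProducerAt C k)
    (hC : ∀ g ∈ C, g.1 ≠ g.2) :
    (runCircuit (C.take k) (gate C k).2).card = 1 := by
  obtain ⟨_, s, hs2, hterm⟩ := producer_term C hp
  have hbs := (bridging_size C hk hb hC).2
  have h1 : 1 ≤ (runCircuit (C.take k) (gate C k).1).card :=
    Finset.card_pos.2 (Finset.nonempty_iff_ne_empty.2 (term_nonempty C hC k _))
  have h2 : 1 ≤ (runCircuit (C.take k) (gate C k).2).card :=
    Finset.card_pos.2 (Finset.nonempty_iff_ne_empty.2 (term_nonempty C hC k _))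
  rw [hterm, hs2] at hbs
  omega

attribute [local instance] Classical.propDecidable

lemma firstAt_term {s : Finset V} {k : ℕ} (hs : s.card = 2) (hf : firstAt C s (k+1)) :
    k < C.length ∧ runCircuit (C.take (k+1)) (gate C k).2 = s := by
  have hk : k < C.length := by
    have := (firstAt_le_length C hf hs).2; omega
  refine ⟨hk, ?_⟩
  obtain ⟨w, hw⟩ := hf.1
  rw [gate_eq C k hk]
  by_cases hwt : w = (C.get ⟨k, hk⟩).2
  · rwa [← hwt]
  · exfalso
    rw [runCircuit_take_succ C k hk, applyGate, if_neg hwt] at hw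
    exact hf.2 k (by omega) ⟨w, hw⟩

lemma bp_le_nn (hC : ∀ g ∈ C, g.1 ≠ g.2) (hfin : ∀ v, runCircuit C v = {v}) :
    (((Finset.range C.length).filter
        (fun k => BridgingAt C k ∧ ProducerAt C k)).card : ℕ) ≤
    ((Finset.range C.length).filter
        (fun k => ¬ BridgingAt C k ∧ ¬ ProducerAt C k)).card := by
  classical
  set f : ℕ → ℕ := fun k => sInf {n | n ∈ repairSet C (gate C k).2 k} with hf
  have hmemf : ∀ k < C.length, BridgingAt C k → ProducerAt C k →
      f k ∈ repairSet C (gate C k).2 k := by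
    intro k hk hb hp
    have hne := repair_exists C hC hfin hk hb hp
    obtain ⟨x, hx⟩ := hne
    exact Nat.sInf_mem (⟨x, hx⟩ : {n | n ∈ repairSet C (gate C k).2 k}.Nonempty)
  have key : ∀ k1 k2, k1 ∈ (Finset.range C.length).filter
        (fun k => BridgingAt C k ∧ ProducerAt C k) →
      k2 ∈ (Finset.range C.length).filter
        (fun k => BridgingAt C k ∧ ProducerAt C k) →
      k1 < k2 → f k1 = f k2 → False := by
    intro k1 k2 hk1 hk2 hlt heq
    simp only [Finset.mem_filter, Finset.mem_range] at hk1 hk2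
    obtain ⟨hl1, hb1, hp1⟩ := hk1
    obtain ⟨hl2, hb2, hp2⟩ := hk2
    have hm1 := hmemf k1 hl1 hb1 hp1
    have hm2 := hmemf k2 hl2 hb2 hp2
    rw [mem_repairSet] at hm1 hm2
    have hjj : (gate C k1).2 = (gate C k2).2 := by
      rw [← hm1.2.2.1, heq, hm2.2.2.1]
    set j := (gate C k1).2 with hj
    -- before k2, the term of j has size 1
    have hone : (runCircuit (C.take k2) j).card = 1 := by
      rw [hjj]; exact bp_before C hl2 hb2 hp2 hC
    -- but size invariant forces ≥ 2
    obtain ⟨s, hs2, hfst⟩ := hp1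
    have hterm := firstAt_term C hs2 hfst
    have hstart : 2 ≤ (runCircuit (C.take (k1+1)) j).card := by
      rw [hterm.2, hs2]
    have h2le := size_invariant C hC j (k1+1) k2 (by omega)
      (fun k' h1 h2' h3 h4 => by
        by_contra hcon; push_neg at hcon
        have hmem' : k' ∈ repairSet C j k1 :=
          (mem_repairSet C).2 ⟨h3, by omega, h4, hcon.1, hcon.2⟩
        have : f k1 ≤ k' := Nat.sInf_le hmem'
        have : k2 < f k1 := by rw [heq]; exact hm2.2.1
        omega) hstart
    omega
  apply Finset.card_le_card_of_injOn f
  · intro k hk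
    simp only [Finset.coe_filter, Set.mem_setOf_eq, Finset.mem_coe, Finset.mem_filter, Finset.mem_range] at hk
    obtain ⟨hkl, hb, hp⟩ := hk
    have := (mem_repairSet C).1 (hmemf k hkl hb hp)
    simp only [Finset.coe_filter, Set.mem_setOf_eq, Finset.mem_coe, Finset.mem_filter, Finset.mem_range]
    exact ⟨this.1, this.2.2.2⟩
  · intro k1 hk1 k2 hk2 heq
    rcases lt_trichotomy k1 k2 with h | h | h
    · exact absurd (key k1 k2 (by simpa using hk1) (by simpa using hk2) h heq) not_false
    · exact h
    · exact absurd (key k2 k1 (by simpa using hk2) (by simpa using hk1) h heq.symm) not_false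

lemma bridging_count :
    Fintype.card V ≤ ((Finset.range C.length).filter (BridgingAt C)).card +
      Nat.card (Quotient (connSetoid C)) := by
  classical
  suffices hh : ∀ k, k ≤ C.length → Fintype.card V ≤
      ((Finset.range k).filter (BridgingAt C)).card +
      Nat.card (Quotient (connSetoid (C.take k))) by
    have := hh C.length le_rfl
    rwa [List.take_length] at this
  intro k
  induction k with
  | zero =>
    intro _
    simp only [Finset.range_zero, Finset.filter_empty, Finset.card_empty, List.take_zero]
    have : connSetoid ([] : List (V × V)) = (eqS : Setoid V) := rfl
    rw [this, card_quot_eqS, Nat.card_eq_fintype_card, zero_add]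
  | succ k ih =>
    intro hk1
    have hk' : k < C.length := by omega
    have ihk := ih (by omega)
    rw [Finset.range_add_one, Finset.filter_insert]
    by_cases hb : BridgingAt C k
    · rw [if_pos hb, Finset.card_insert_of_notMem (by simp)]
      have hle := card_quot_merge (connSetoid (C.take k)) (C.get ⟨k, hk'⟩).1 (C.get ⟨k, hk'⟩).2
      rw [← connSetoid_take_succ C k hk'] at hle
      omega
    · rw [if_neg hb]
      have hrel : (connSetoid (C.take k)).r (C.get ⟨k, hk'⟩).1 (C.get ⟨k, hk'⟩).2 := by
        unfold BridgingAt at hb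
        push_neg at hb
        rwa [gate_eq C k hk'] at hb
      rw [connSetoid_take_succ C k hk', mergeSetoid_eq_of_rel _ hrel]
      exact ihk

def pairF : Sym2 V → Finset V :=
  Sym2.lift ⟨fun u v => ({u, v} : Finset V), fun u v => Finset.pair_comm u v⟩

lemma pairF_mk (u v : V) : pairF (s(u, v)) = ({u, v} : Finset V) := rfl

lemma pairF_inj {e1 e2 : Sym2 V} (h : pairF e1 = pairF e2) : e1 = e2 := by
  induction e1 using Sym2.ind with
  | _ a b =>
    induction e2 using Sym2.ind with
    | _ c d =>
      rw [pairF_mk, pairF_mk] at h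
      have ha : a ∈ ({c, d} : Finset V) := by rw [← h]; simp
      have hb : b ∈ ({c, d} : Finset V) := by rw [← h]; simp
      have hc : c ∈ ({a, b} : Finset V) := by rw [h]; simp
      have hd : d ∈ ({a, b} : Finset V) := by rw [h]; simp
      simp only [Finset.mem_insert, Finset.mem_singleton] at ha hb hc hd
      rw [Sym2.eq_iff]
      tauto

lemma producers_card (G : SimpleGraph V)
    (hadj : ∀ u v : V, G.Adj u v → ∃ (k : ℕ) (w : V), runCircuit (C.take k) w = {u, v}) :
    Nat.card G.edgeSet ≤ ((Finset.range C.length).filter (ProducerAt C)).card := by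
  classical
  have hex : ∀ e : Sym2 V, e ∈ G.edgeSet → ∃ k, appears C (pairF e) k := by
    intro e he
    induction e using Sym2.ind with
    | _ u v =>
      rw [SimpleGraph.mem_edgeSet] at he
      obtain ⟨k, w, hw⟩ := hadj u v he
      exact ⟨k, w, by rw [hw, pairF_mk]⟩
  have hcard2 : ∀ e : Sym2 V, e ∈ G.edgeSet → (pairF e).card = 2 := by
    intro e he
    induction e using Sym2.ind with
    | _ u v =>
      rw [SimpleGraph.mem_edgeSet] at he
      rw [pairF_mk, Finset.card_pair (G.ne_of_adj he)]
  set F : Sym2 V → ℕ := fun e =>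
    (if hx : ∃ k, appears C (pairF e) k then Nat.find hx else 0) with hF
  have hfirst : ∀ e : Sym2 V, e ∈ G.edgeSet → firstAt C (pairF e) (F e) := by
    intro e he
    simp only [hF]
    rw [dif_pos (hex e he)]
    exact ⟨Nat.find_spec (hex e he), fun k' hk' => Nat.find_min (hex e he) hk'⟩
  have hpos : ∀ e : Sym2 V, e ∈ G.edgeSet → 1 ≤ F e ∧ F e ≤ C.length := by
    intro e he
    exact firstAt_le_length C (hfirst e he) (hcard2 e he)
  let f : G.edgeSet → {k // k ∈ (Finset.range C.length).filter (ProducerAt C)} := fun e => by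
    refine ⟨F e.val - 1, ?_⟩
    have he := e.prop
    have h1 := hpos e.val he
    have hfa : firstAt C (pairF e.val) ((F e.val - 1) + 1) := by
      have : (F e.val - 1) + 1 = F e.val := by omega
      rw [this]
      exact hfirst e.val he
    have hprod : ProducerAt C (F e.val - 1) := ⟨pairF e.val, hcard2 e.val he, hfa⟩
    have hlt := (firstAt_term C (hcard2 e.val he) hfa).1
    simp only [Finset.mem_filter, Finset.mem_range]
    exact ⟨hlt, hprod⟩
  have hinj : Function.Injective f := by
    intro e1 e2 hee
    have h1 := hpos e1.val e1.prop
    have h2 := hpos e2.val e2.prop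
    have heq : F e1.val - 1 = F e2.val - 1 := congrArg Subtype.val hee
    have heq2 : F e1.val = F e2.val := by omega
    have hfa1 : firstAt C (pairF e1.val) ((F e1.val - 1) + 1) := by
      have : (F e1.val - 1) + 1 = F e1.val := by omega
      rw [this]; exact hfirst e1.val e1.prop
    have hfa2 : firstAt C (pairF e2.val) ((F e2.val - 1) + 1) := by
      have : (F e2.val - 1) + 1 = F e2.val := by omega
      rw [this]; exact hfirst e2.val e2.prop
    have ht1 := (firstAt_term C (hcard2 e1.val e1.prop) hfa1).2
    have ht2 := (firstAt_term C (hcard2 e2.val e2.prop) hfa2).2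
    rw [heq] at ht1
    have : pairF e1.val = pairF e2.val := by rw [← ht1, ← ht2]
    exact Subtype.ext (pairF_inj this)
  calc Nat.card G.edgeSet
      ≤ Nat.card {k // k ∈ (Finset.range C.length).filter (ProducerAt C)} :=
        Nat.card_le_card_of_injective f hinj
    _ = ((Finset.range C.length).filter (ProducerAt C)).card := by
        rw [Nat.card_eq_fintype_card, Fintype.card_coe]

lemma conn_card_le (G : SimpleGraph V)
    (hadj : ∀ u v : V, G.Adj u v → (connSetoid C).r u v) :
    Nat.card (Quotient (connSetoid C)) ≤ Nat.card G.ConnectedComponent := by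
  classical
  have hreach : ∀ a b : V, G.Reachable a b → (connSetoid C).r a b := by
    intro a b hr
    obtain ⟨w⟩ := hr
    induction w with
    | nil => exact (connSetoid C).refl _
    | cons h' p ih => exact (connSetoid C).trans (hadj _ _ h') ih
  let f : G.ConnectedComponent → Quotient (connSetoid C) :=
    Quot.lift (fun v => Quotient.mk (connSetoid C) v)
      (fun a b hab => Quotient.sound (hreach a b hab))
  haveI : Finite G.ConnectedComponent :=
    Finite.of_surjective (fun v => G.connectedComponentMk v) (fun cc => cc.exists_rep)
  apply Nat.card_le_card_of_surjective f
  intro y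
  obtain ⟨v, hv⟩ := Quotient.exists_rep y
  exact ⟨G.connectedComponentMk v, hv⟩

end Main
end GPNaux

open GPNaux in
/-- Every graphic parity network for a graph with `n` vertices, `m` edges and `c`
connected components has size at least `m + n - c`. -/
theorem stmt0 {V : Type*} [Fintype V] [DecidableEq V] (G : SimpleGraph V)
    (C : List (V × V)) (h : IsGPN G C) :
    Nat.card G.edgeSet + Fintype.card V - Nat.card G.ConnectedComponent ≤ C.length := by
  classical
  obtain ⟨hC, hadj, hfin⟩ := h
  rcases eq_or_ne C [] with rfl | hne
  · have hnoadj : ∀ u v : V, ¬ G.Adj u v := by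
      intro u v huv
      obtain ⟨k, w, hw⟩ := hadj u v huv
      have heq : ({w} : Finset V) = {u, v} := by
        simpa [runCircuit] using hw
      have hcard := congrArg Finset.card heq
      rw [Finset.card_singleton, Finset.card_pair (G.ne_of_adj huv)] at hcard
      omega
    have hm : Nat.card G.edgeSet = 0 := by
      have hemp : G.edgeSet = ∅ := by
        ext e
        induction e using Sym2.ind with
        | _ u v => simp [SimpleGraph.mem_edgeSet, hnoadj u v]
      rw [hemp]; simp
    have hn : Fintype.card V ≤ Nat.card G.ConnectedComponent := by
      haveI : Finite G.ConnectedComponent :=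
        Finite.of_surjective (fun v => G.connectedComponentMk v) (fun cc => cc.exists_rep)
      rw [← Nat.card_eq_fintype_card]
      apply Nat.card_le_card_of_injective (fun v => G.connectedComponentMk v)
      intro a b hab
      have hr := SimpleGraph.ConnectedComponent.exact hab
      obtain ⟨w⟩ := hr
      cases w with
      | nil => rfl
      | cons h' p => exact absurd h' (hnoadj _ _)
    simp only [List.length_nil]
    omega
  · haveI : Inhabited V := ⟨(C.head hne).1⟩
    have hm := producers_card C G hadj
    have hbp := bp_le_nn C hC hfin
    have hn := bridging_count C (V := V)
    have hconn : ∀ u v : V, G.Adj u v → (connSetoid C).r u v := by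
      intro u v huv
      obtain ⟨k, w, hw⟩ := hadj u v huv
      have hu : (connSetoid (C.take k)).r w u :=
        term_subset_conn C k w u (by rw [hw]; simp)
      have hv : (connSetoid (C.take k)).r w v :=
        term_subset_conn C k w v (by rw [hw]; simp)
      exact connSetoid_take_le C k
        ((connSetoid (C.take k)).trans ((connSetoid (C.take k)).symm hu) hv)
    have hc := conn_card_le C G hconn
    set R := Finset.range C.length with hR
    set P := R.filter (ProducerAt C) with hP
    set BP := R.filter (fun k => BridgingAt C k ∧ ProducerAt C k) with hBP
    set BnP := R.filter (fun k => BridgingAt C k ∧ ¬ ProducerAt C k) with hBnP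
    set NN := R.filter (fun k => ¬ BridgingAt C k ∧ ¬ ProducerAt C k) with hNN
    set Ball := R.filter (BridgingAt C) with hBall
    have hsplit : Ball.card = BP.card + BnP.card := by
      have hsp := Finset.card_filter_add_card_filter_not
        (s := Ball) (ProducerAt C)
      rw [hBall, Finset.filter_filter, Finset.filter_filter] at hsp
      rw [hBP, hBnP, ← hsp]
    have hdisj1 : Disjoint P BnP := by
      rw [Finset.disjoint_left]
      intro a ha hb
      rw [hP, Finset.mem_filter] at ha
      rw [hBnP, Finset.mem_filter] at hb
      exact hb.2.2 ha.2
    have hdisj2 : Disjoint (P ∪ BnP) NN := by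
      rw [Finset.disjoint_left]
      intro a ha hb
      rw [hNN, Finset.mem_filter] at hb
      rcases Finset.mem_union.1 ha with ha' | ha'
      · rw [hP, Finset.mem_filter] at ha'
        exact hb.2.2 ha'.2
      · rw [hBnP, Finset.mem_filter] at ha'
        exact hb.2.1 ha'.2.1
    have hsum : P.card + BnP.card + NN.card ≤ C.length := by
      calc P.card + BnP.card + NN.card = (P ∪ BnP ∪ NN).card := by
            rw [Finset.card_union_of_disjoint hdisj2, Finset.card_union_of_disjoint hdisj1]
        _ ≤ R.card := Finset.card_le_card (by
            intro a ha
            rcases Finset.mem_union.1 ha with ha' | ha'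
            · rcases Finset.mem_union.1 ha' with ha'' | ha''
              · exact Finset.filter_subset _ _ ha''
              · exact Finset.filter_subset _ _ ha''
            · exact Finset.filter_subset _ _ ha')
        _ = C.length := Finset.card_range _
    -- align instance-differing filters
    have hbp' : BP.card ≤ NN.card := by
      rw [hBP, hNN]
      convert hbp using 2 <;> simp [hR]
    have hn' : Fintype.card V ≤ Ball.card + Nat.card (Quotient (connSetoid C)) := by
      rw [hBall]
      convert hn using 3
    have hm' : Nat.card G.edgeSet ≤ P.card := by
      rw [hP]
      convert hm using 2
    omega
end

section
/- There exists a real constant C > 0 such that every finite simple graph G on n ≥ 2 vertices with m edges admits a graphic parity network of size at most m + C · n^(3/2) · √(ln n). -/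
namespace GPNAux

attribute [local instance] Classical.propDecidable

/-! ### Generic list lemmas -/

section ListLemmas

variable {α : Type*}

lemma infix_cons_of_infix {l L : List α} {a : α} (h : l <:+: L) : l <:+: a :: L := by
  obtain ⟨s, t, rfl⟩ := h
  exact ⟨a :: s, t, rfl⟩

lemma infix_pair_lt {S : List α} {r : α → α → Prop} (hS : S.Pairwise r) {x y : α}
    (h : [x, y] <:+: S) : r x y := by
  have := hS.sublist h.sublist
  simpa using this

lemma infix_pair_mem {S : List α} {x y : α} (h : [x, y] <:+: S) : x ∈ S ∧ y ∈ S := by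
  constructor
  · exact h.subset (by simp)
  · exact h.subset (by simp)

lemma not_between_of_infix [LinearOrder α] {S : List α} (hS : S.Pairwise (· < ·))
    {x y z : α} (h : [x, y] <:+: S) (hz : z ∈ S) : ¬ (x < z ∧ z < y) := by
  rintro ⟨h1, h2⟩
  obtain ⟨s, t, rfl⟩ := h
  rw [show s ++ [x, y] ++ t = s ++ (x :: y :: t) by simp] at hS hz
  rw [List.pairwise_append] at hS
  obtain ⟨hs, hrest, hcross⟩ := hS
  rcases List.mem_append.1 hz with hzs | hz2
  · have := hcross z hzs x (by simp)
    exact absurd h1 (by exact not_lt.2 (le_of_lt this))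
  · rcases List.mem_cons.1 hz2 with rfl | hz3
    · exact lt_irrefl z h1
    · rcases List.mem_cons.1 hz3 with rfl | hzt
      · exact lt_irrefl z h2
      · have hy := List.rel_of_pairwise_cons (List.pairwise_cons.1 hrest).2 hzt
        exact absurd h2 (not_lt.2 (le_of_lt hy))

lemma pred_unique_of_infix [LinearOrder α] {S : List α} (hS : S.Pairwise (· < ·))
    {x x' y : α} (h : [x, y] <:+: S) (h' : [x', y] <:+: S) : x = x' := by
  have hx : x < y := infix_pair_lt hS h
  have hx' : x' < y := infix_pair_lt hS h'
  have hxm : x ∈ S := (infix_pair_mem h).1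
  have hx'm : x' ∈ S := (infix_pair_mem h').1
  rcases lt_trichotomy x x' with hlt | heq | hgt
  · exact absurd (not_between_of_infix hS h hx'm) (by tauto)
  · exact heq
  · exact absurd (not_between_of_infix hS h' hxm) (by tauto)

lemma head_or_infix_of_mem {S : List α} {v : α} (hv : v ∈ S) :
    S.head? = some v ∨ ∃ x, [x, v] <:+: S := by
  induction S with
  | nil => simp at hv
  | cons a t ih =>
    rcases List.mem_cons.1 hv with rfl | hvt
    · left; rfl
    · rcases ih hvt with hh | ⟨x, hx⟩
      · right
        refine ⟨a, ?_⟩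
        cases t with
        | nil => simp at hh
        | cons b t' =>
          obtain rfl : b = v := by simpa using hh
          exact ⟨[], t', rfl⟩
      · exact Or.inr ⟨x, infix_cons_of_infix hx⟩

lemma getLast?_of_max {r : α → α → Prop} {l : List α} (hl : l.Pairwise r)
    (hasym : ∀ a b, r a b → r b a → False) {p : α} (hp : p ∈ l)
    (hmax : ∀ q ∈ l, q ≠ p → r q p) : l.getLast? = some p := by
  induction l with
  | nil => simp at hp
  | cons a t ih =>
    rcases List.pairwise_cons.1 hl with ⟨hat, ht⟩
    by_cases hpt : p ∈ t
    · have ht' : t ≠ [] := by rintro rfl; simp at hpt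
      cases t with
      | nil => simp at hpt
      | cons b t' =>
        rw [List.getLast?_cons_cons]
        exact ih ht hpt (fun q hq hqp => hmax q (by simp [hq]) hqp)
    · have hpa : p = a := by
        rcases List.mem_cons.1 hp with h | h
        · exact h
        · exact absurd h hpt
      subst hpa
      cases t with
      | nil => rfl
      | cons b t' =>
        exfalso
        have hab : r p b := hat b (by simp)
        have hbp : r b p := by
          refine hmax b (by simp) ?_
          rintro rfl
          exact hpt (by simp)
        exact hasym p b hab hbp

lemma head?_le_of_sorted [LinearOrder α] {S : List α} (hS : S.Pairwise (· < ·)) {x z : α}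
    (hh : S.head? = some x) (hz : z ∈ S) : x ≤ z := by
  cases S with
  | nil => simp at hh
  | cons a t =>
    obtain rfl : a = x := by simpa using hh
    rcases List.mem_cons.1 hz with rfl | hzt
    · exact le_refl _
    · exact le_of_lt (List.rel_of_pairwise_cons hS hzt)

lemma eq_singleton_of_head_eq_getLast {S : List α} (hnd : S.Nodup) {v : α}
    (hh : S.head? = some v) (hl : S.getLast? = some v) : S = [v] := by
  cases S with
  | nil => simp at hh
  | cons a t =>
    have hav : a = v := by simpa using hh
    subst hav
    cases t with
    | nil => rfl
    | cons b t' =>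
      exfalso
      have h1 : (a :: b :: t').getLast? = (b :: t').getLast? := List.getLast?_cons_cons
      have h2 : (b :: t').getLast? = some ((b :: t').getLast (by simp)) :=
        List.getLast?_eq_getLast _
      have h3 : some ((b :: t').getLast (by simp)) = some a := by rw [← h2, ← h1, hl]
      have hmem : a ∈ b :: t' := by
        rw [show a = (b :: t').getLast (by simp) from by simpa using h3.symm]
        exact List.getLast_mem _
      rcases List.mem_cons.1 hmem with h | h
      · simp [List.nodup_cons] at hnd; tauto
      · simp [List.nodup_cons] at hnd; tauto

end ListLemmas

/-! ### Run lemmas -/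

section Run

variable {n : ℕ}

def init (n : ℕ) : Fin n → Finset (Fin n) := fun v => {v}

def run (t : Fin n → Finset (Fin n)) (C : List (Fin n × Fin n)) : Fin n → Finset (Fin n) :=
  C.foldl (fun t g => applyGate g t) t

@[simp] lemma run_nil (t : Fin n → Finset (Fin n)) : run t [] = t := rfl

@[simp] lemma run_cons (t : Fin n → Finset (Fin n)) (g : Fin n × Fin n) (C : List (Fin n × Fin n)) :
    run t (g :: C) = run (applyGate g t) C := rfl

lemma run_append (t : Fin n → Finset (Fin n)) (A B : List (Fin n × Fin n)) :
    run t (A ++ B) = run (run t A) B := by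
  simp [run, List.foldl_append]

lemma runCircuit_eq (C : List (Fin n × Fin n)) : runCircuit C = run (init n) C := rfl

lemma applyGate_apply (g : Fin n × Fin n) (t : Fin n → Finset (Fin n)) (w : Fin n) :
    applyGate g t w = if w = g.2 then symmDiff (t g.1) (t g.2) else t w := rfl

/-- Running a family of independently-targeted gates. -/
lemma run_fan (ctrl : Fin n → Fin n) (us : List (Fin n)) (t : Fin n → Finset (Fin n))
    (hnd : us.Nodup) (hc : ∀ u ∈ us, ∀ u' ∈ us, ctrl u ≠ u') (w : Fin n) :
    run t (us.map (fun u => (ctrl u, u))) w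
      = if w ∈ us then symmDiff (t (ctrl w)) (t w) else t w := by
  induction us generalizing t with
  | nil => simp
  | cons u rest ih =>
    have hnd' := (List.nodup_cons.1 hnd).2
    have hu : u ∉ rest := (List.nodup_cons.1 hnd).1
    simp only [List.map_cons, run_cons]
    rw [ih _ hnd' (fun a ha b hb => hc a (by simp [ha]) b (by simp [hb]))]
    by_cases hw : w ∈ rest
    · have hwu : w ≠ u := fun h => hu (h ▸ hw)
      have h1 : applyGate (ctrl u, u) t w = t w := by
        simp [applyGate_apply, hwu]
      have h2 : applyGate (ctrl u, u) t (ctrl w) = t (ctrl w) := by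
        have : ctrl w ≠ u := hc w (by simp [hw]) u (by simp)
        simp [applyGate_apply, this]
      simp [hw, hwu, h1, h2, List.mem_cons]
    · by_cases hwu : w = u
      · subst hwu
        have h1 : applyGate (ctrl w, w) t w = symmDiff (t (ctrl w)) (t w) := by
          simp [applyGate_apply]
        simp [hw, h1]
      · have h1 : applyGate (ctrl u, u) t w = t w := by simp [applyGate_apply, hwu]
        simp [hw, hwu, h1, List.mem_cons]

end Run

/-! ### symmDiff computations on Finsets -/

section SD

variable {n : ℕ}

lemma sd_singleton_singleton {x y : Fin n} (h : x ≠ y) :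
    symmDiff ({x} : Finset (Fin n)) {y} = {y, x} := by
  ext z
  simp only [Finset.mem_symmDiff, Finset.mem_singleton, Finset.mem_insert]
  constructor
  · tauto
  · rintro (rfl | rfl) <;> tauto

lemma sd_singleton_pair {c u : Fin n} (h : c ≠ u) :
    symmDiff ({c} : Finset (Fin n)) {u, c} = {u} := by
  ext z
  simp only [Finset.mem_symmDiff, Finset.mem_singleton, Finset.mem_insert]
  constructor
  · rintro (⟨rfl, hz⟩ | ⟨h1 | h1, h2⟩) <;> tauto
  · rintro rfl; tauto

lemma sd_pair_pair {x y u : Fin n} (hxy : x ≠ y) (hux : u ≠ x) (huy : u ≠ y) :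
    symmDiff ({y, x} : Finset (Fin n)) {u, x} = {u, y} := by
  ext z
  simp only [Finset.mem_symmDiff, Finset.mem_insert, Finset.mem_singleton]
  constructor
  · rintro (⟨rfl | rfl, hz⟩ | ⟨rfl | rfl, hz⟩) <;> tauto
  · rintro (rfl | rfl) <;> tauto

lemma sd_singleton_pair' {x y : Fin n} (hxy : x ≠ y) :
    symmDiff ({x} : Finset (Fin n)) {y, x} = {y} := by
  ext z
  simp only [Finset.mem_symmDiff, Finset.mem_insert, Finset.mem_singleton]
  constructor
  · rintro (⟨rfl, hz⟩ | ⟨rfl | rfl, hz⟩) <;> tauto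
  · rintro rfl; tauto

end SD


/-! ### The construction -/

section Construction

variable {n : ℕ} (G : SimpleGraph (Fin n)) (b : ℕ)

/-- The sorted list of the block `j` (vertices `v` with `v / b = j`). -/
noncomputable def blockL (j : ℕ) : List (Fin n) :=
  (Finset.univ.filter (fun v : Fin n => v.val / b = j)).sort (· ≤ ·)

/-- The sorted list of neighbours of `u` in block `j` that `u` must visit as a walker. -/
noncomputable def Sl (j : ℕ) (u : Fin n) : List (Fin n) :=
  (Finset.univ.filter
    (fun v : Fin n => v.val / b = j ∧ ¬ (u.val / b = j) ∧ G.Adj u v ∧ u < v)).sort (· ≤ ·)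

/-- All ordered pairs of block `j`, in colexicographic order. -/
noncomputable def pairsL (j : ℕ) : List (Fin n × Fin n) :=
  (blockL (n := n) b j).flatMap
    (fun y => ((blockL (n := n) b j).filter (fun x => decide (x < y))).map (fun x => (x, y)))

/-- Walkers that make the move `x → y` when the pair `{x,y}` is presented. -/
noncomputable def fires (j : ℕ) (x y : Fin n) : List (Fin n) :=
  (List.finRange n).filter (fun u => decide ([x, y] <:+: Sl G b j u))

/-- The episode fragment for one presented pair. -/
noncomputable def pairEp (j : ℕ) (q : Fin n × Fin n) : List (Fin n × Fin n) :=
  q :: ((fires G b j q.1 q.2).map (fun u => (q.2, u)) ++ [q])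

/-- Walkers active in block `j`. -/
noncomputable def active (j : ℕ) : List (Fin n) :=
  (List.finRange n).filter (fun u => decide (Sl G b j u ≠ []))

noncomputable def entries (j : ℕ) : List (Fin n × Fin n) :=
  (active G b j).map (fun u => ((Sl G b j u).head?.getD u, u))

noncomputable def exits (j : ℕ) : List (Fin n × Fin n) :=
  (active G b j).map (fun u => ((Sl G b j u).getLast?.getD u, u))

noncomputable def episode (j : ℕ) : List (Fin n × Fin n) :=
  entries G b j ++ (pairsL (n := n) b j).flatMap (pairEp G b j) ++ exits G b j

noncomputable def circuit : List (Fin n × Fin n) :=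
  (List.range (n / b + 1)).flatMap (episode G b)

/-! ### Membership lemmas -/

lemma mem_blockL {j : ℕ} {v : Fin n} : v ∈ blockL (n := n) b j ↔ v.val / b = j := by
  simp [blockL]

lemma blockL_sorted (j : ℕ) : (blockL (n := n) b j).Pairwise (· < ·) :=
  List.sortedLT_iff_pairwise.1 (Finset.sortedLT_sort _)

lemma mem_Sl {j : ℕ} {u v : Fin n} :
    v ∈ Sl G b j u ↔ v.val / b = j ∧ ¬ (u.val / b = j) ∧ G.Adj u v ∧ u < v := by
  simp [Sl]

lemma Sl_sorted (j : ℕ) (u : Fin n) : (Sl G b j u).Pairwise (· < ·) :=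
  List.sortedLT_iff_pairwise.1 (Finset.sortedLT_sort _)

lemma Sl_nodup (j : ℕ) (u : Fin n) : (Sl G b j u).Nodup := Finset.sort_nodup _ _

lemma Sl_eq_nil_of_block {j : ℕ} {u : Fin n} (h : u.val / b = j) : Sl G b j u = [] := by
  rcases List.eq_nil_or_concat (Sl G b j u) with h' | ⟨l, a, h'⟩
  · exact h'
  · exfalso
    have : a ∈ Sl G b j u := by rw [h']; simp
    exact ((mem_Sl G b).1 this).2.1 h

lemma mem_pairsL {j : ℕ} {q : Fin n × Fin n} :
    q ∈ pairsL (n := n) b j ↔ q.1.val / b = j ∧ q.2.val / b = j ∧ q.1 < q.2 := by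
  cases q with
  | mk x y =>
    simp only [pairsL, List.mem_flatMap, List.mem_map, List.mem_filter, mem_blockL,
      decide_eq_true_eq, Prod.mk.injEq]
    constructor
    · rintro ⟨y', hy', x', ⟨⟨hx', hlt⟩, rfl, rfl⟩⟩
      exact ⟨hx', hy', hlt⟩
    · rintro ⟨hx, hy, hlt⟩
      exact ⟨y, hy, x, ⟨⟨hx, hlt⟩, rfl, rfl⟩⟩

lemma mem_fires {j : ℕ} {x y u : Fin n} :
    u ∈ fires G b j x y ↔ [x, y] <:+: Sl G b j u := by
  simp [fires, List.mem_filter, List.mem_finRange]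

lemma fires_nodup (j : ℕ) (x y : Fin n) : (fires G b j x y).Nodup :=
  (List.nodup_finRange n).filter _

lemma mem_active {j : ℕ} {u : Fin n} : u ∈ active G b j ↔ Sl G b j u ≠ [] := by
  simp [active, List.mem_filter, List.mem_finRange]

lemma active_nodup (j : ℕ) : (active G b j).Nodup := (List.nodup_finRange n).filter _

/-- The colex order on pairs. -/
def colex (a c : Fin n × Fin n) : Prop := a.2 < c.2 ∨ (a.2 = c.2 ∧ a.1 < c.1)

lemma colex_irrefl (a : Fin n × Fin n) : ¬ colex a a := by
  simp [colex]

lemma colex_asymm (a c : Fin n × Fin n) : colex a c → colex c a → False := by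
  rintro (h | ⟨h1, h2⟩) (h' | ⟨h1', h2'⟩)
  · exact absurd h (not_lt.2 (le_of_lt h'))
  · exact absurd h (not_lt.2 (le_of_eq h1'))
  · exact absurd h' (not_lt.2 (le_of_eq h1))
  · exact absurd h2 (not_lt.2 (le_of_lt h2'))

lemma pairsOf_pairwise (L : List (Fin n)) (hL : L.Pairwise (· < ·)) :
    ∀ l : List (Fin n), l.Pairwise (· < ·) →
      (l.flatMap (fun y =>
        (L.filter (fun x => decide (x < y))).map (fun x => (x, y)))).Pairwise
        (colex (n := n)) := by
  intro l hl
  induction l with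
  | nil => simp
  | cons y rest ih =>
    rw [List.flatMap_cons, List.pairwise_append]
    refine ⟨?_, ih (List.pairwise_cons.1 hl).2, ?_⟩
    · rw [List.pairwise_map]
      have hf : (List.filter (fun x => decide (x < y)) L).Pairwise (· < ·) :=
        hL.sublist List.filter_sublist
      exact hf.imp (fun h => Or.inr ⟨rfl, h⟩)
    · intro a ha c hc
      simp only [List.mem_map, List.mem_filter] at ha
      obtain ⟨x, hx, rfl⟩ := ha
      simp only [List.mem_flatMap, List.mem_map, List.mem_filter] at hc
      obtain ⟨y', hy', x', hx', rfl⟩ := hc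
      exact Or.inl (List.rel_of_pairwise_cons hl hy')

lemma pairsL_pairwise (j : ℕ) : (pairsL (n := n) b j).Pairwise colex :=
  pairsOf_pairwise _ (blockL_sorted b j) _ (blockL_sorted b j)

lemma pairsL_nodup (j : ℕ) : (pairsL (n := n) b j).Nodup := by
  refine (pairsL_pairwise b j).imp ?_
  intro a c h
  rintro rfl
  exact colex_irrefl a h


/-! ### Parking bookkeeping -/

noncomputable def parkStep (j : ℕ) (q : Fin n × Fin n) (p : Fin n → Option (Fin n)) :
    Fin n → Option (Fin n) :=
  fun u => if [q.1, q.2] <:+: Sl G b j u then some q.2 else p u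

noncomputable def park0 (j : ℕ) : Fin n → Option (Fin n) := fun u => (Sl G b j u).head?

noncomputable def parkAfter (j : ℕ) (done : List (Fin n × Fin n)) : Fin n → Option (Fin n) :=
  done.foldl (fun p q => parkStep G b j q p) (park0 G b j)

/-- Characterisation of the park map after processing `done`. -/
lemma parkAfter_eq (j : ℕ) (done : List (Fin n × Fin n)) (u : Fin n) :
    parkAfter G b j done u =
      match (done.filter (fun q => decide ([q.1, q.2] <:+: Sl G b j u))).getLast? with
      | some q => some q.2
      | none => (Sl G b j u).head? := by
  induction done using List.reverseRecOn with
  | nil => simp [parkAfter, park0]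
  | append_singleton d q ih =>
    have hfold : parkAfter G b j (d ++ [q]) u = parkStep G b j q (parkAfter G b j d) u := by
      simp [parkAfter, List.foldl_append]
    rw [hfold, parkStep]
    by_cases h : [q.1, q.2] <:+: Sl G b j u
    · rw [if_pos h, List.filter_append]
      have : List.filter (fun q' => decide ([q'.1, q'.2] <:+: Sl G b j u)) [q] = [q] := by
        simp [h]
      rw [this, List.getLast?_concat]
    · rw [if_neg h, List.filter_append]
      have : List.filter (fun q' => decide ([q'.1, q'.2] <:+: Sl G b j u)) [q] = [] := by
        simp [h]
      rw [this, List.append_nil, ih]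

lemma parkAfter_of_block {j : ℕ} (done : List (Fin n × Fin n)) {w : Fin n}
    (hw : w.val / b = j) : parkAfter G b j done w = none := by
  rw [parkAfter_eq]
  have hnil : Sl G b j w = [] := Sl_eq_nil_of_block G b hw
  have : (done.filter (fun q => decide ([q.1, q.2] <:+: Sl G b j w))) = [] := by
    apply List.filter_eq_nil_iff.2
    intro q hq
    simp only [decide_eq_true_eq, hnil, List.infix_nil]
    simp
  rw [this, hnil]
  rfl

/-- The set of pairs consecutive in `S` that occur in `done` is what determines the park. -/
lemma mem_done_of_colex {j : ℕ} {s t : List (Fin n × Fin n)} {xy q : Fin n × Fin n}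
    (hsplit : pairsL (n := n) b j = s ++ xy :: t)
    (hq : q ∈ pairsL (n := n) b j) (hlt : colex q xy) : q ∈ s := by
  have hpw := pairsL_pairwise (n := n) b j
  rw [hsplit] at hpw hq
  rcases List.mem_append.1 hq with h | h
  · exact h
  · exfalso
    rcases List.mem_cons.1 h with rfl | h2
    · exact colex_irrefl q hlt
    · rw [List.pairwise_append] at hpw
      have := hpw.2.1
      have hxyq : colex xy q := List.rel_of_pairwise_cons this h2
      exact colex_asymm _ _ hlt hxyq

/-- Any consecutive pair of some `Sl` lies in `pairsL`. -/
lemma consec_mem_pairsL {j : ℕ} {u x y : Fin n} (h : [x, y] <:+: Sl G b j u) :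
    (x, y) ∈ pairsL (n := n) b j := by
  have hx := (infix_pair_mem h).1
  have hy := (infix_pair_mem h).2
  have hlt : x < y := infix_pair_lt (Sl_sorted G b j u) h
  exact (mem_pairsL b).2 ⟨((mem_Sl G b).1 hx).1, ((mem_Sl G b).1 hy).1, hlt⟩

/-- Main coherence lemma: when pair `(x,y)` comes up, every walker for which `(x,y)` is a
consecutive pair is parked at `x`. -/
lemma parkAfter_prefix_infix {j : ℕ} {s t : List (Fin n × Fin n)} {x y : Fin n}
    (hsplit : pairsL (n := n) b j = s ++ (x, y) :: t)
    {u : Fin n} (hinf : [x, y] <:+: Sl G b j u) :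
    parkAfter G b j s u = some x := by
  have hS := Sl_sorted G b j u
  have hSnd := Sl_nodup G b j u
  have hpw := pairsL_pairwise (n := n) b j
  have hspw : s.Pairwise colex := by
    rw [hsplit, List.pairwise_append] at hpw; exact hpw.1
  have hcolexxy : ∀ q ∈ s, colex q (x, y) := by
    rw [hsplit, List.pairwise_append] at hpw
    intro q hq
    exact hpw.2.2 q hq (x, y) (by simp)
  rw [parkAfter_eq]
  rcases head_or_infix_of_mem (infix_pair_mem hinf).1 with hhead | ⟨x', hx'⟩
  · -- x is the head of S : no consecutive pair of S occurs in s
    have hfilter : (s.filter (fun q => decide ([q.1, q.2] <:+: Sl G b j u))) = [] := by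
      apply List.filter_eq_nil_iff.2
      intro q hq
      simp only [decide_eq_true_eq]
      intro hinfq
      have hq1 : q.1 ∈ Sl G b j u := (infix_pair_mem hinfq).1
      have hq2 : q.2 ∈ Sl G b j u := (infix_pair_mem hinfq).2
      have h12 : q.1 < q.2 := infix_pair_lt hS hinfq
      have hxq1 : x ≤ q.1 := head?_le_of_sorted hS hhead hq1
      have hxlt : x < q.2 := lt_of_le_of_lt hxq1 h12
      rcases hcolexxy q hq with hcase | ⟨hcase1, hcase2⟩
      · exact (not_between_of_infix hS hinf hq2) ⟨hxlt, hcase⟩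
      · exact absurd hcase2 (not_lt.2 hxq1)
    rw [hfilter]
    exact hhead
  · -- x has a predecessor x' in S
    have hmemdone : (x', x) ∈ s := by
      refine mem_done_of_colex b hsplit (consec_mem_pairsL G b hx') ?_
      exact Or.inl (infix_pair_lt hS hinf)
    have hgl : (s.filter (fun q => decide ([q.1, q.2] <:+: Sl G b j u))).getLast?
        = some (x', x) := by
      apply getLast?_of_max (r := colex (n := n))
        (hspw.sublist List.filter_sublist) colex_asymm
      · rw [List.mem_filter]
        exact ⟨hmemdone, by simp [hx']⟩
      · intro q hq hne
        rw [List.mem_filter] at hq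
        obtain ⟨hqs, hqinf⟩ := hq
        have hinfq : [q.1, q.2] <:+: Sl G b j u := by simpa using hqinf
        have hq2mem : q.2 ∈ Sl G b j u := (infix_pair_mem hinfq).2
        have hq1mem : q.1 ∈ Sl G b j u := (infix_pair_mem hinfq).1
        have h12 : q.1 < q.2 := infix_pair_lt hS hinfq
        rcases hcolexxy q hqs with hcase | ⟨hcase1, hcase2⟩
        · -- q.2 < y ; show colex q (x', x)
          have hq2x : ¬ (x < q.2 ∧ q.2 < y) := not_between_of_infix hS hinf hq2mem
          have hq2lex : q.2 ≤ x := by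
            by_contra hcon
            exact hq2x ⟨lt_of_not_ge hcon, hcase⟩
          rcases lt_or_eq_of_le hq2lex with h2lt | h2eq
          · exact Or.inl h2lt
          · -- q.2 = x: then q.1 = x' by predecessor uniqueness
            have : q.1 = x' := by
              apply pred_unique_of_infix hS (h2eq ▸ hinfq) hx'
            exfalso
            apply hne
            have : q = (q.1, q.2) := rfl
            rw [this, h2eq, ‹q.1 = x'›]
        · -- q.2 = y, q.1 < x : impossible since x is the predecessor of y
          exfalso
          have hy2 : [q.1, y] <:+: Sl G b j u := by
            have h2 : q.2 = y := hcase1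
            rw [← h2]; exact hinfq
          have hq1x : q.1 = x := pred_unique_of_infix hS hy2 hinf
          exact absurd hcase2 (by rw [hq1x]; exact lt_irrefl x)
    rw [hgl]

/-- After the whole list of pairs, each active walker is parked at its last element. -/
lemma parkAfter_full (j : ℕ) (u : Fin n) :
    parkAfter G b j (pairsL (n := n) b j) u = (Sl G b j u).getLast? := by
  have hS := Sl_sorted G b j u
  have hSnd := Sl_nodup G b j u
  rcases List.eq_nil_or_concat (Sl G b j u) with hnil | ⟨l, v, hconcat⟩
  · rw [parkAfter_eq]
    have : ((pairsL (n := n) b j).filter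
        (fun q => decide ([q.1, q.2] <:+: Sl G b j u))) = [] := by
      apply List.filter_eq_nil_iff.2
      intro q hq
      simp [hnil, List.infix_nil]
    rw [this, hnil]
    rfl
  · have hvmem : v ∈ Sl G b j u := by rw [hconcat]; simp
    have hlast : (Sl G b j u).getLast? = some v := by
      rw [hconcat, List.concat_eq_append]; exact List.getLast?_concat
    rcases head_or_infix_of_mem hvmem with hhead | ⟨x', hx'⟩
    · -- singleton list
      have hsing : Sl G b j u = [v] := eq_singleton_of_head_eq_getLast hSnd hhead hlast
      rw [parkAfter_eq]
      have : ((pairsL (n := n) b j).filter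
          (fun q => decide ([q.1, q.2] <:+: Sl G b j u))) = [] := by
        apply List.filter_eq_nil_iff.2
        intro q hq
        simp only [decide_eq_true_eq, hsing]
        intro hcon
        have := hcon.sublist.length_le
        simp at this
      rw [this, hhead]
      simp [hsing]
    · -- v has a predecessor
      rw [parkAfter_eq]
      have hpw := pairsL_pairwise (n := n) b j
      have hgl : ((pairsL (n := n) b j).filter
          (fun q => decide ([q.1, q.2] <:+: Sl G b j u))).getLast? = some (x', v) := by
        apply getLast?_of_max (r := colex (n := n))
          (hpw.sublist List.filter_sublist) colex_asymm
        · rw [List.mem_filter]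
          exact ⟨consec_mem_pairsL G b hx', by simp [hx']⟩
        · intro q hq hne
          rw [List.mem_filter] at hq
          obtain ⟨hqs, hqinf⟩ := hq
          have hinfq : [q.1, q.2] <:+: Sl G b j u := by simpa using hqinf
          have hq2mem : q.2 ∈ Sl G b j u := (infix_pair_mem hinfq).2
          have hq2le : q.2 ≤ v := by
            rw [hconcat, List.concat_eq_append] at hq2mem
            have hS' := hS
            rw [hconcat, List.concat_eq_append, List.pairwise_append] at hS'
            rcases List.mem_append.1 hq2mem with h | h
            · exact le_of_lt (hS'.2.2 q.2 h v (by simp))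
            · simp at h
              exact le_of_eq h
          rcases lt_or_eq_of_le hq2le with h2lt | h2eq
          · exact Or.inl h2lt
          · have hq1 : q.1 = x' := pred_unique_of_infix hS (h2eq ▸ hinfq) hx'
            exfalso
            apply hne
            have : q = (q.1, q.2) := rfl
            rw [this, h2eq, hq1]
      rw [hgl, hlast]



/-! ### Parked states and episode execution -/

noncomputable def pst (p : Fin n → Option (Fin n)) : Fin n → Finset (Fin n) :=
  fun w => match p w with
  | none => {w}
  | some x => {w, x}

lemma pst_none {p : Fin n → Option (Fin n)} {w : Fin n} (h : p w = none) : pst p w = {w} := by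
  simp [pst, h]

lemma pst_some {p : Fin n → Option (Fin n)} {w x : Fin n} (h : p w = some x) :
    pst p w = {w, x} := by simp [pst, h]

lemma init_eq_pst : init n = pst (fun _ => none) := rfl

lemma walker_not_block {j : ℕ} {x y u : Fin n} (h : u ∈ fires G b j x y) :
    ¬ (u.val / b = j) := by
  have hinf := (mem_fires G b).1 h
  have hy := (infix_pair_mem hinf).2
  exact ((mem_Sl G b).1 hy).2.1

lemma step_run {j : ℕ} {x y : Fin n} (p : Fin n → Option (Fin n))
    (hx : x.val / b = j) (hy : y.val / b = j) (hxy : x < y)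
    (h1 : ∀ u, [x, y] <:+: Sl G b j u → p u = some x)
    (h2 : ∀ w, w.val / b = j → p w = none) :
    run (pst p) (pairEp G b j (x, y)) = pst (parkStep G b j (x, y) p) := by
  have hxney : x ≠ y := ne_of_lt hxy
  have hpx : pst p x = {x} := pst_none (h2 x hx)
  have hpy : pst p y = {y} := pst_none (h2 y hy)
  have hxnotf : x ∉ fires G b j x y := fun h => walker_not_block G b h hx
  have hynotf : y ∉ fires G b j x y := fun h => walker_not_block G b h hy
  unfold pairEp
  rw [run_cons, run_append]
  set t1 := applyGate (x, y) (pst p) with ht1def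
  have ht1y : t1 y = {y, x} := by
    show (if y = (x, y).2 then symmDiff (pst p (x, y).1) (pst p (x, y).2) else pst p y) = _
    rw [if_pos rfl]
    show symmDiff (pst p x) (pst p y) = _
    rw [hpx, hpy, sd_singleton_singleton hxney]
  have ht1w : ∀ w : Fin n, w ≠ y → t1 w = pst p w := by
    intro w hw
    show (if w = (x, y).2 then _ else pst p w) = _
    rw [if_neg hw]
  set t2 := run t1 (List.map (fun u => ((x, y).2, u)) (fires G b j (x, y).1 (x, y).2)) with ht2def
  have ht2 : ∀ w : Fin n, t2 w = if w ∈ fires G b j x y then symmDiff (t1 y) (t1 w) else t1 w := by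
    intro w
    rw [ht2def]
    exact run_fan (fun _ => y) (fires G b j x y) t1 (fires_nodup G b j x y)
      (fun u hu u' hu' => fun hcon => (walker_not_block G b hu' (hcon ▸ hy))) w
  have ht2x : t2 x = {x} := by rw [ht2 x, if_neg hxnotf, ht1w x hxney, hpx]
  have ht2y : t2 y = {y, x} := by rw [ht2 y, if_neg hynotf, ht1y]
  funext w
  show run t2 [(x, y)] w = _
  have hfin : run t2 [(x, y)] w = if w = y then symmDiff (t2 x) (t2 y) else t2 w := rfl
  rw [hfin]
  by_cases hwy : w = y
  · subst hwy
    rw [if_pos rfl, ht2x, ht2y, sd_singleton_pair' hxney]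
    have : parkStep G b j (x, w) p w = none := by
      unfold parkStep
      rw [if_neg, h2 w hy]
      rw [Sl_eq_nil_of_block G b hy]
      simp [List.infix_nil]
    rw [pst_none this]
  · rw [if_neg hwy]
    by_cases hwf : w ∈ fires G b j x y
    · have hwblk : ¬ (w.val / b = j) := walker_not_block G b hwf
      have hwx : w ≠ x := fun h => hwblk (h ▸ hx)
      have hinf : [x, y] <:+: Sl G b j w := (mem_fires G b).1 hwf
      have hpw : pst p w = {w, x} := pst_some (h1 w hinf)
      rw [ht2 w, if_pos hwf, ht1y, ht1w w hwy, hpw, sd_pair_pair hxney hwx hwy]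
      have : parkStep G b j (x, y) p w = some y := by unfold parkStep; rw [if_pos hinf]
      rw [pst_some this]
    · have hninf : ¬ ([x, y] <:+: Sl G b j w) := fun h => hwf ((mem_fires G b).2 h)
      rw [ht2 w, if_neg hwf, ht1w w hwy]
      have hps : parkStep G b j (x, y) p w = p w := by unfold parkStep; rw [if_neg hninf]
      show pst p w = pst (parkStep G b j (x, y) p) w
      unfold pst
      rw [hps]

lemma active_ctrl_mem_head {j : ℕ} {u : Fin n} (h : Sl G b j u ≠ []) :
    (Sl G b j u).head?.getD u ∈ Sl G b j u := by
  rw [List.head?_eq_head h]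
  exact List.head_mem h

lemma active_ctrl_mem_last {j : ℕ} {u : Fin n} (h : Sl G b j u ≠ []) :
    (Sl G b j u).getLast?.getD u ∈ Sl G b j u := by
  rw [List.getLast?_eq_getLast h]
  exact List.getLast_mem h

lemma active_not_block {j : ℕ} {u : Fin n} (h : Sl G b j u ≠ []) : ¬ (u.val / b = j) := by
  obtain ⟨v, hv⟩ := List.exists_mem_of_ne_nil _ h
  exact ((mem_Sl G b).1 hv).2.1

lemma entries_run (j : ℕ) : run (init n) (entries G b j) = pst (park0 G b j) := by
  funext w
  unfold entries
  rw [run_fan _ _ _ (active_nodup G b j) ?hc]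
  case hc =>
    intro u hu u' hu'
    have h1 := active_ctrl_mem_head G b ((mem_active G b).1 hu)
    have hj1 : ((Sl G b j u).head?.getD u).val / b = j := ((mem_Sl G b).1 h1).1
    have hj2 := active_not_block G b ((mem_active G b).1 hu')
    intro hcon
    exact hj2 (hcon ▸ hj1)
  by_cases hw : w ∈ active G b j
  · rw [if_pos hw]
    have hne := (mem_active G b).1 hw
    have hmem := active_ctrl_mem_head G b hne
    have hnew : (Sl G b j w).head?.getD w ≠ w := by
      intro hcon
      exact active_not_block G b hne (hcon ▸ ((mem_Sl G b).1 hmem).1)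
    show symmDiff {(Sl G b j w).head?.getD w} {w} = _
    rw [sd_singleton_singleton hnew]
    have : park0 G b j w = some ((Sl G b j w).head?.getD w) := by
      unfold park0
      rw [List.head?_eq_head hne]
      rfl
    rw [pst_some this]
  · rw [if_neg hw]
    have hnil : Sl G b j w = [] := by
      by_contra hcon
      exact hw ((mem_active G b).2 hcon)
    have : park0 G b j w = none := by unfold park0; rw [hnil]; rfl
    rw [pst_none this]
    rfl

lemma exits_run (j : ℕ) :
    run (pst (fun u => (Sl G b j u).getLast?)) (exits G b j) = init n := by
  funext w
  unfold exits
  rw [run_fan _ _ _ (active_nodup G b j) ?hc]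
  case hc =>
    intro u hu u' hu'
    have h1 := active_ctrl_mem_last G b ((mem_active G b).1 hu)
    have hj1 : ((Sl G b j u).getLast?.getD u).val / b = j := ((mem_Sl G b).1 h1).1
    have hj2 := active_not_block G b ((mem_active G b).1 hu')
    intro hcon
    exact hj2 (hcon ▸ hj1)
  by_cases hw : w ∈ active G b j
  · rw [if_pos hw]
    have hne := (mem_active G b).1 hw
    set c := (Sl G b j w).getLast?.getD w with hcdef
    have hmem : c ∈ Sl G b j w := active_ctrl_mem_last G b hne
    have hcb : c.val / b = j := ((mem_Sl G b).1 hmem).1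
    have hnew : c ≠ w := by
      intro hcon
      exact active_not_block G b hne (hcon ▸ hcb)
    have hpc : pst (fun u => (Sl G b j u).getLast?) c = {c} := by
      apply pst_none
      rw [Sl_eq_nil_of_block G b hcb]
      rfl
    have hpw : pst (fun u => (Sl G b j u).getLast?) w = {w, c} := by
      apply pst_some
      rw [hcdef, List.getLast?_eq_getLast hne]
      rfl
    rw [hpc, hpw, sd_singleton_pair hnew]
    rfl
  · rw [if_neg hw]
    have hnil : Sl G b j w = [] := by
      by_contra hcon
      exact hw ((mem_active G b).2 hcon)
    have : pst (fun u => (Sl G b j u).getLast?) w = {w} := by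
      apply pst_none; rw [hnil]; rfl
    rw [this]
    rfl

lemma body_run {j : ℕ} : ∀ (done todo : List (Fin n × Fin n)),
    pairsL (n := n) b j = done ++ todo →
    run (pst (park0 G b j)) (done.flatMap (pairEp G b j)) = pst (parkAfter G b j done) := by
  intro done
  induction done using List.reverseRecOn with
  | nil =>
    intro todo h
    simp [parkAfter]
  | append_singleton d q ihd =>
    intro todo h
    have hsplit : pairsL (n := n) b j = d ++ (q :: todo) := by rw [h]; simp
    rw [List.flatMap_append, run_append, ihd (q :: todo) hsplit]
    have hq : q ∈ pairsL (n := n) b j := by rw [hsplit]; simp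
    obtain ⟨hq1, hq2, hqlt⟩ := (mem_pairsL b).1 hq
    simp only [List.flatMap_cons, List.flatMap_nil, List.append_nil]
    have hparkfold : parkAfter G b j (d ++ [q]) = parkStep G b j q (parkAfter G b j d) := by
      funext u
      simp [parkAfter, List.foldl_append]
    rw [hparkfold]
    cases q with
    | mk x y =>
      exact step_run G b (parkAfter G b j d) hq1 hq2 hqlt
        (fun u hinf => parkAfter_prefix_infix G b hsplit hinf)
        (fun w hw => parkAfter_of_block G b d hw)

lemma episode_run (j : ℕ) : run (init n) (episode G b j) = init n := by
  unfold episode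
  rw [run_append, run_append, entries_run, body_run G b (pairsL (n := n) b j) [] (by simp)]
  have : parkAfter G b j (pairsL (n := n) b j) = fun u => (Sl G b j u).getLast? :=
    funext (parkAfter_full G b j)
  rw [this]
  exact exits_run G b j


/-! ### Visits -/

def Vis (C : List (Fin n × Fin n)) (S : Finset (Fin n)) : Prop :=
  ∃ C₁ C₂ w, C = C₁ ++ C₂ ∧ run (init n) C₁ w = S

lemma vis_of_prefix {C P : List (Fin n × Fin n)} {S : Finset (Fin n)} {w : Fin n}
    (hP : P <+: C) (hw : run (init n) P w = S) : Vis C S := by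
  obtain ⟨r, hr⟩ := hP
  exact ⟨P, r, w, hr.symm, hw⟩

lemma prefix_episode_of_body {j : ℕ} {X : List (Fin n × Fin n)}
    (hX : X <+: (pairsL (n := n) b j).flatMap (pairEp G b j)) :
    (entries G b j ++ X) <+: episode G b j := by
  obtain ⟨r, hr⟩ := hX
  refine ⟨r ++ exits G b j, ?_⟩
  unfold episode
  rw [← hr]
  simp [List.append_assoc]

lemma prefix_body_of_pair {j : ℕ} {s t : List (Fin n × Fin n)} {q : Fin n × Fin n}
    (hsplit : pairsL (n := n) b j = s ++ q :: t) {X : List (Fin n × Fin n)}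
    (hX : X <+: pairEp G b j q) :
    (s.flatMap (pairEp G b j) ++ X) <+: (pairsL (n := n) b j).flatMap (pairEp G b j) := by
  obtain ⟨r, hr⟩ := hX
  refine ⟨r ++ t.flatMap (pairEp G b j), ?_⟩
  rw [hsplit, List.flatMap_append, List.flatMap_cons, ← hr]
  simp [List.append_assoc]

lemma episode_visits {j : ℕ} {u v : Fin n} (hadj : G.Adj u v) (huv : u < v)
    (hj : v.val / b = j) : Vis (episode G b j) ({u, v} : Finset (Fin n)) := by
  by_cases hu : u.val / b = j
  · -- within-block edge : visited by the presentation gate of (u, v)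
    have hq : (u, v) ∈ pairsL (n := n) b j := (mem_pairsL b).2 ⟨hu, hj, huv⟩
    obtain ⟨s, t, hsplit⟩ := List.append_of_mem hq
    have hpre : (entries G b j ++ (s.flatMap (pairEp G b j) ++ [(u, v)])) <+: episode G b j := by
      apply prefix_episode_of_body
      apply prefix_body_of_pair G b hsplit
      exact ⟨(fires G b j u v).map (fun w => (v, w)) ++ [(u, v)], rfl⟩
    apply vis_of_prefix (w := v) hpre
    rw [← List.append_assoc, run_append, run_append, entries_run,
      body_run G b s ((u, v) :: t) hsplit]
    show applyGate (u, v) (pst (parkAfter G b j s)) v = _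
    have h1 : pst (parkAfter G b j s) u = {u} := pst_none (parkAfter_of_block G b s hu)
    have h2 : pst (parkAfter G b j s) v = {v} := pst_none (parkAfter_of_block G b s hj)
    show (if v = (u, v).2 then symmDiff (pst (parkAfter G b j s) u)
        (pst (parkAfter G b j s) v) else _) = _
    rw [if_pos rfl, h1, h2, sd_singleton_singleton (ne_of_lt huv), Finset.pair_comm]
  · -- cross edge
    have hv : v ∈ Sl G b j u := (mem_Sl G b).2 ⟨hj, hu, hadj, huv⟩
    rcases head_or_infix_of_mem hv with hhead | ⟨x, hx⟩
    · -- entry visit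
      have hpre : entries G b j <+: episode G b j := by
        refine ⟨(pairsL (n := n) b j).flatMap (pairEp G b j) ++ exits G b j, ?_⟩
        unfold episode
        simp [List.append_assoc]
      apply vis_of_prefix (w := u) hpre
      rw [entries_run]
      exact pst_some hhead
    · -- firing visit
      have hq : (x, v) ∈ pairsL (n := n) b j := consec_mem_pairsL G b hx
      obtain ⟨s, t, hsplit⟩ := List.append_of_mem hq
      have hxblk : x.val / b = j := ((mem_Sl G b).1 (infix_pair_mem hx).1).1
      have hxv : x < v := infix_pair_lt (Sl_sorted G b j u) hx
      have hpre : (entries G b j ++ (s.flatMap (pairEp G b j) ++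
          ((x, v) :: (fires G b j x v).map (fun w => (v, w))))) <+: episode G b j := by
        apply prefix_episode_of_body
        apply prefix_body_of_pair G b hsplit
        refine ⟨[(x, v)], ?_⟩
        unfold pairEp
        simp
      apply vis_of_prefix (w := u) hpre
      rw [← List.append_assoc, run_append, run_append, entries_run,
        body_run G b s ((x, v) :: t) hsplit]
      show run (pst (parkAfter G b j s)) ((x, v) :: _) u = _
      rw [run_cons]
      set p := parkAfter G b j s with hpdef
      set t1 := applyGate (x, v) (pst p) with ht1def
      have ht1v : t1 v = {v, x} := by
        show (if v = (x, v).2 then symmDiff (pst p (x, v).1) (pst p (x, v).2) else _) = _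
        rw [if_pos rfl]
        show symmDiff (pst p x) (pst p v) = _
        rw [pst_none (parkAfter_of_block G b s hxblk),
          pst_none (parkAfter_of_block G b s hj), sd_singleton_singleton (ne_of_lt hxv)]
      have huf : u ∈ fires G b j x v := (mem_fires G b).2 hx
      have hublk : ¬ (u.val / b = j) := hu
      have hux : u ≠ x := fun h => hu (h ▸ hxblk)
      have huv' : u ≠ v := ne_of_lt huv
      have ht1u : t1 u = {u, x} := by
        have : t1 u = pst p u := by
          show (if u = (x, v).2 then _ else pst p u) = _
          rw [if_neg huv']
        rw [this]
        exact pst_some (parkAfter_prefix_infix G b hsplit hx)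
      rw [run_fan (fun _ => v) _ _ (fires_nodup G b j x v)
        (fun a ha a' ha' => fun hcon => (walker_not_block G b ha' (hcon ▸ hj)))]
      rw [if_pos huf, ht1v, ht1u, sd_pair_pair (ne_of_lt hxv) hux huv']

/-! ### The full circuit -/

lemma run_flatMap_episodes (l : List ℕ) :
    run (init n) (l.flatMap (episode G b)) = init n := by
  induction l with
  | nil => rfl
  | cons j rest ih =>
    rw [List.flatMap_cons, run_append, episode_run, ih]

lemma vis_flatMap {l : List ℕ} {j : ℕ} (hj : j ∈ l) {S : Finset (Fin n)}
    (h : Vis (episode G b j) S) : Vis (l.flatMap (episode G b)) S := by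
  obtain ⟨s, t, rfl⟩ := List.append_of_mem hj
  obtain ⟨C₁, C₂, w, hsplit, hrun⟩ := h
  refine ⟨s.flatMap (episode G b) ++ C₁, C₂ ++ (t.flatMap (episode G b)), w, ?_, ?_⟩
  · rw [List.flatMap_append, List.flatMap_cons, hsplit]
    simp [List.append_assoc]
  · rw [run_append, run_flatMap_episodes, hrun]

lemma circuit_visits {u v : Fin n} (hb : 0 < b) (hadj : G.Adj u v) :
    Vis (circuit G b) ({u, v} : Finset (Fin n)) := by
  rcases lt_or_gt_of_ne (G.ne_of_adj hadj) with hlt | hgt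
  · have hj : v.val / b ∈ List.range (n / b + 1) := by
      rw [List.mem_range]
      have : v.val / b ≤ n / b := Nat.div_le_div_right (le_of_lt v.isLt)
      omega
    exact vis_flatMap G b hj (episode_visits G b hadj hlt rfl)
  · have hj : u.val / b ∈ List.range (n / b + 1) := by
      rw [List.mem_range]
      have : u.val / b ≤ n / b := Nat.div_le_div_right (le_of_lt u.isLt)
      omega
    have := vis_flatMap G b hj (episode_visits G b hadj.symm hgt rfl)
    rwa [Finset.pair_comm] at this

lemma circuit_run : run (init n) (circuit G b) = init n :=
  run_flatMap_episodes G b _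

lemma circuit_gates_ne : ∀ g ∈ circuit G b, g.1 ≠ g.2 := by
  intro g hg
  unfold circuit at hg
  rw [List.mem_flatMap] at hg
  obtain ⟨j, _, hg⟩ := hg
  unfold episode at hg
  rw [List.mem_append, List.mem_append] at hg
  rcases hg with (hg | hg) | hg
  · unfold entries at hg
    rw [List.mem_map] at hg
    obtain ⟨u, hu, rfl⟩ := hg
    have hne := (mem_active G b).1 hu
    have hmem := active_ctrl_mem_head G b hne
    show (Sl G b j u).head?.getD u ≠ u
    intro hcon
    exact active_not_block G b hne (hcon ▸ ((mem_Sl G b).1 hmem).1)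
  · rw [List.mem_flatMap] at hg
    obtain ⟨q, hq, hg⟩ := hg
    obtain ⟨hq1, hq2, hqlt⟩ := (mem_pairsL b).1 hq
    unfold pairEp at hg
    rw [List.mem_cons, List.mem_append] at hg
    rcases hg with rfl | hg | hg
    · exact ne_of_lt hqlt
    · rw [List.mem_map] at hg
      obtain ⟨u, hu, rfl⟩ := hg
      show q.2 ≠ u
      intro hcon
      exact walker_not_block G b hu (hcon ▸ hq2)
    · rw [List.mem_singleton] at hg
      subst hg
      exact ne_of_lt hqlt
  · unfold exits at hg
    rw [List.mem_map] at hg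
    obtain ⟨u, hu, rfl⟩ := hg
    have hne := (mem_active G b).1 hu
    have hmem := active_ctrl_mem_last G b hne
    show (Sl G b j u).getLast?.getD u ≠ u
    intro hcon
    exact active_not_block G b hne (hcon ▸ ((mem_Sl G b).1 hmem).1)

lemma circuit_isGPN (hb : 0 < b) : IsGPN G (circuit G b) := by
  refine ⟨circuit_gates_ne G b, ?_, ?_⟩
  · intro u v hadj
    obtain ⟨C₁, C₂, w, hsplit, hrun⟩ := circuit_visits G b hb hadj
    refine ⟨C₁.length, w, ?_⟩
    rw [hsplit, runCircuit_eq, List.take_left, hrun]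
  · intro v
    rw [runCircuit_eq, circuit_run]
    rfl


/-! ### Counting -/

section Counting

lemma length_entries (j : ℕ) : (entries G b j).length = (active G b j).length := by
  simp [entries]

lemma length_exits (j : ℕ) : (exits G b j).length = (active G b j).length := by
  simp [exits]

lemma length_active_le (j : ℕ) : (active G b j).length ≤ n := by
  calc (active G b j).length ≤ (List.finRange n).length := List.length_filter_le _ _
  _ = n := List.length_finRange

lemma length_blockL_le (hb : 0 < b) (j : ℕ) : (blockL (n := n) b j).length ≤ b := by
  unfold blockL
  rw [Finset.length_sort]
  have := Finset.card_range b
  calc (Finset.filter (fun v : Fin n => v.val / b = j) Finset.univ).card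
      ≤ (Finset.range b).card := ?_
    _ = b := Finset.card_range b
  apply Finset.card_le_card_of_injOn (fun v => v.val % b)
  · intro v _
    exact Finset.mem_range.2 (Nat.mod_lt _ hb)
  · intro v hv v' hv' heq
    simp only [Finset.mem_coe, Finset.mem_filter] at hv hv'
    apply Fin.ext
    have h1 : v.val = b * (v.val / b) + v.val % b := (Nat.div_add_mod _ _).symm
    have h2 : v'.val = b * (v'.val / b) + v'.val % b := (Nat.div_add_mod _ _).symm
    simp only at heq
    rw [h1, h2, hv.2, hv'.2, heq]

lemma length_pairsL_le (hb : 0 < b) (j : ℕ) : (pairsL (n := n) b j).length ≤ b * b := by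
  unfold pairsL
  rw [List.length_flatMap]
  have hbd : ∀ x ∈ (List.map (List.length ∘ fun y =>
        List.map (fun x => (x, y)) (List.filter (fun x => decide (x < y))
          (blockL (n := n) b j))) (blockL (n := n) b j)), x ≤ b := by
    intro x hx
    rw [List.mem_map] at hx
    obtain ⟨y, hy, rfl⟩ := hx
    have : (List.length ∘ fun y => List.map (fun x => (x, y))
        (List.filter (fun x => decide (x < y)) (blockL (n := n) b j))) y
        = (List.filter (fun x => decide (x < y)) (blockL (n := n) b j)).length := by simp
    rw [this]
    exact le_trans (List.length_filter_le _ _) (length_blockL_le b hb j)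
  have h1 := List.sum_le_card_nsmul _ b hbd
  rw [List.length_map] at h1
  have h2 : (blockL (n := n) b j).length • b ≤ b * b := by
    rw [smul_eq_mul]
    exact Nat.mul_le_mul_right b (length_blockL_le b hb j)
  exact le_trans h1 h2

lemma length_pairEp (j : ℕ) (q : Fin n × Fin n) :
    (pairEp G b j q).length = (fires G b j q.1 q.2).length + 2 := by
  simp [pairEp]

lemma length_episode (j : ℕ) :
    (episode G b j).length = 2 * (active G b j).length
      + ((pairsL (n := n) b j).map (fun q => (fires G b j q.1 q.2).length + 2)).sum := by
  unfold episode
  rw [List.length_append, List.length_append, length_entries, length_exits,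
    List.length_flatMap]
  have : (List.map (fun a => (pairEp G b j a).length) (pairsL (n := n) b j))
      = (pairsL (n := n) b j).map (fun q => (fires G b j q.1 q.2).length + 2) := by
    apply List.map_congr_left
    intro q _
    exact length_pairEp G b j q
  rw [this]
  omega

lemma length_episode_le (hb : 0 < b) (j : ℕ) :
    (episode G b j).length ≤ 2 * n + 2 * (b * b)
      + ((pairsL (n := n) b j).map (fun q => (fires G b j q.1 q.2).length)).sum := by
  rw [length_episode]
  have h1 : ((pairsL (n := n) b j).map (fun q => (fires G b j q.1 q.2).length + 2)).sum
      = ((pairsL (n := n) b j).map (fun q => (fires G b j q.1 q.2).length)).sum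
        + 2 * (pairsL (n := n) b j).length := by
    induction (pairsL (n := n) b j) with
    | nil => simp
    | cons q rest ih => simp [ih]; omega
  rw [h1]
  have h2 := length_active_le G b j
  have h3 := length_pairsL_le (n := n) b hb j
  omega

/-! ### Total number of firing gates is at most the number of edges -/

noncomputable def bigL : List (Fin n × Fin n) :=
  (List.range (n / b + 1)).flatMap (fun j =>
    (pairsL (n := n) b j).flatMap (fun q =>
      (fires G b j q.1 q.2).map (fun u => (u, q.2))))

lemma bigL_length : (bigL G b).length
    = ((List.range (n / b + 1)).map (fun j =>
        ((pairsL (n := n) b j).map (fun q => (fires G b j q.1 q.2).length)).sum)).sum := by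
  unfold bigL
  rw [List.length_flatMap]
  congr 1
  apply List.map_congr_left
  intro j _
  rw [List.length_flatMap]
  congr 1
  apply List.map_congr_left
  intro q _
  simp

lemma bigL_mem {p : Fin n × Fin n} (hp : p ∈ bigL G b) :
    G.Adj p.1 p.2 ∧ p.1 < p.2 := by
  unfold bigL at hp
  rw [List.mem_flatMap] at hp
  obtain ⟨j, _, hp⟩ := hp
  rw [List.mem_flatMap] at hp
  obtain ⟨q, hq, hp⟩ := hp
  rw [List.mem_map] at hp
  obtain ⟨u, hu, rfl⟩ := hp
  have hinf := (mem_fires G b).1 hu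
  have h2 := (infix_pair_mem hinf).2
  have h := (mem_Sl G b).1 h2
  exact ⟨h.2.2.1, h.2.2.2⟩

lemma bigL_mem_block {j : ℕ} {q : Fin n × Fin n} {p : Fin n × Fin n}
    (hq : q ∈ pairsL (n := n) b j)
    (hp : p ∈ (fires G b j q.1 q.2).map (fun u => (u, q.2))) :
    p.2.val / b = j := by
  rw [List.mem_map] at hp
  obtain ⟨u, hu, rfl⟩ := hp
  exact ((mem_pairsL b).1 hq).2.1

lemma bigL_nodup : (bigL G b).Nodup := by
  unfold bigL
  rw [List.nodup_flatMap]
  constructor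
  · intro j _
    rw [List.nodup_flatMap]
    constructor
    · intro q hq
      apply List.Nodup.map
      · intro a a' haa'
        exact (Prod.mk.injEq _ _ _ _ ▸ haa').1
      · exact fires_nodup G b j q.1 q.2
    · refine (pairsL_pairwise (n := n) b j).imp ?_
      intro q q' hcolex
      intro p hp hp'
      rw [List.mem_map] at hp hp'
      obtain ⟨u, hu, rfl⟩ := hp
      obtain ⟨u', hu', heq⟩ := hp'
      have hu2 : u' = u := (Prod.mk.injEq _ _ _ _ ▸ heq).1
      have hq2 : q'.2 = q.2 := (Prod.mk.injEq _ _ _ _ ▸ heq).2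
      subst hu2
      have hinf := (mem_fires G b).1 hu
      have hinf' := (mem_fires G b).1 hu'
      rw [hq2] at hinf'
      have : q'.1 = q.1 := pred_unique_of_infix (Sl_sorted G b j u') hinf' hinf
      have hqq : q' = q := Prod.ext this hq2
      subst hqq
      exact colex_irrefl q' hcolex
  · refine List.pairwise_lt_range.imp ?_
    intro j j' hjj'
    intro p hp hp'
    rw [List.mem_flatMap] at hp hp'
    obtain ⟨q, hq, hp⟩ := hp
    obtain ⟨q', hq', hp'⟩ := hp'
    have h1 := bigL_mem_block G b hq hp
    have h2 := bigL_mem_block G b hq' hp'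
    omega

lemma bigL_le_card : (bigL G b).length ≤ Nat.card G.edgeSet := by
  classical
  have hmapnd : ((bigL G b).map (fun p => s(p.1, p.2))).Nodup := by
    apply List.Nodup.map_on ?_ (bigL_nodup G b)
    intro p hp p' hp' heq
    obtain ⟨_, hlt⟩ := bigL_mem G b hp
    obtain ⟨_, hlt'⟩ := bigL_mem G b hp'
    rw [Sym2.mk_eq_mk_iff] at heq
    rcases heq with h | h
    · rcases p with ⟨a, c⟩
      rcases p' with ⟨a', c'⟩
      simpa using h
    · rcases p with ⟨a, c⟩
      rcases p' with ⟨a', c'⟩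
      simp only [Prod.swap_prod_mk, Prod.mk.injEq] at h
      obtain ⟨rfl, rfl⟩ := h
      simp only at hlt hlt'
      exact absurd hlt' (not_lt.2 (le_of_lt hlt))
  have hcard : ((bigL G b).map (fun p => s(p.1, p.2))).toFinset.card
      = (bigL G b).length := by
    rw [List.toFinset_card_of_nodup hmapnd, List.length_map]
  rw [← hcard]
  have hsub : ((bigL G b).map (fun p => s(p.1, p.2))).toFinset ⊆ G.edgeFinset := by
    intro e he
    rw [List.mem_toFinset, List.mem_map] at he
    obtain ⟨p, hp, rfl⟩ := he
    rw [SimpleGraph.mem_edgeFinset]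
    exact (bigL_mem G b hp).1
  calc ((bigL G b).map (fun p => s(p.1, p.2))).toFinset.card
      ≤ G.edgeFinset.card := Finset.card_le_card hsub
    _ = Nat.card G.edgeSet := by
        rw [Nat.card_coe_set_eq, Set.ncard_eq_toFinset_card']
        try rfl

/-! ### Total circuit length -/

lemma circuit_length_le (hb : 0 < b) :
    (circuit G b).length ≤ (n / b + 1) * (2 * n + 2 * (b * b)) + Nat.card G.edgeSet := by
  have hlen : (circuit G b).length
      = ((List.range (n / b + 1)).map (fun j => (episode G b j).length)).sum := by
    unfold circuit
    rw [List.length_flatMap]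
  rw [hlen]
  have hbd : ∀ j ∈ List.range (n / b + 1), (episode G b j).length
      ≤ (2 * n + 2 * (b * b))
        + ((pairsL (n := n) b j).map (fun q => (fires G b j q.1 q.2).length)).sum :=
    fun j _ => length_episode_le G b hb j
  calc ((List.range (n / b + 1)).map (fun j => (episode G b j).length)).sum
      ≤ ((List.range (n / b + 1)).map (fun j => (2 * n + 2 * (b * b))
        + ((pairsL (n := n) b j).map (fun q => (fires G b j q.1 q.2).length)).sum)).sum := by
        apply List.sum_le_sum
        intro j hj
        exact hbd j hj
    _ = (n / b + 1) * (2 * n + 2 * (b * b))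
        + ((List.range (n / b + 1)).map (fun j =>
          ((pairsL (n := n) b j).map (fun q => (fires G b j q.1 q.2).length)).sum)).sum := by
        rw [List.sum_map_add]
        congr 1
        rw [List.map_const', List.sum_replicate, List.length_range, smul_eq_mul]
    _ ≤ (n / b + 1) * (2 * n + 2 * (b * b)) + Nat.card G.edgeSet := by
        have := bigL_le_card G b
        rw [bigL_length] at this
        omega

end Counting

end Construction

end GPNAux

/-- There is a constant `K > 0` such that every graph on `n ≥ 2` vertices with `m`
edges admits a graphic parity network of size at most `m + K · n^(3/2) · √(ln n)`. -/
theorem stmt2 : ∃ K : ℝ, 0 < K ∧ ∀ n : ℕ, 2 ≤ n → ∀ G : SimpleGraph (Fin n),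
    ∃ C : List (Fin n × Fin n), IsGPN G C ∧
      (C.length : ℝ) ≤ (Nat.card G.edgeSet : ℝ) +
        K * (n : ℝ) ^ ((3 : ℝ) / 2) * Real.sqrt (Real.log n) := by
  have hlog2 : (0:ℝ) < Real.log 2 := Real.log_pos (by norm_num)
  have hs2 : (0:ℝ) < Real.sqrt (Real.log 2) := Real.sqrt_pos.2 hlog2
  refine ⟨16 / Real.sqrt (Real.log 2), by positivity, ?_⟩
  intro n hn G
  set b := Nat.sqrt n with hbdef
  have hb : 0 < b := Nat.sqrt_pos.2 (by omega)
  refine ⟨GPNAux.circuit G b, GPNAux.circuit_isGPN G b hb, ?_⟩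
  -- natural number bound on the length
  have hbb : b * b ≤ n := by
    have := Nat.sqrt_le' n
    rw [pow_two] at this
    exact this
  have hnb : n / b ≤ b + 2 := by
    have h1 : n < (b + 1) ^ 2 := Nat.lt_succ_sqrt' n
    have h2 : n ≤ b * (b + 2) := by nlinarith [h1]
    calc n / b ≤ (b * (b + 2)) / b := Nat.div_le_div_right h2
      _ = b + 2 := by rw [Nat.mul_div_cancel_left _ hb]
  have hlen : (GPNAux.circuit G b).length ≤ Nat.card G.edgeSet + (b + 3) * (4 * n) := by
    have h0 := GPNAux.circuit_length_le G b hb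
    have h1 : (n / b + 1) * (2 * n + 2 * (b * b)) ≤ (b + 3) * (4 * n) := by
      apply Nat.mul_le_mul <;> omega
    omega
  -- real arithmetic
  have hn2 : (2:ℝ) ≤ (n:ℝ) := by exact_mod_cast hn
  have hn0 : (0:ℝ) < (n:ℝ) := by linarith
  have hsqrt_b : (b:ℝ) ≤ Real.sqrt (n:ℝ) := by
    rw [Real.le_sqrt (by positivity) (by positivity), sq]
    exact_mod_cast hbb
  have hpow : (n:ℝ) ^ ((3:ℝ)/2) = (n:ℝ) * Real.sqrt (n:ℝ) := by
    rw [show (3:ℝ)/2 = 1 + 1/2 by norm_num, Real.rpow_add hn0, Real.rpow_one,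
      Real.sqrt_eq_rpow]
  have h1le : (1:ℝ) ≤ Real.sqrt (n:ℝ) := by
    rw [show (1:ℝ) = Real.sqrt 1 by simp]
    exact Real.sqrt_le_sqrt (by linarith)
  have hsn : (0:ℝ) ≤ Real.sqrt (n:ℝ) := Real.sqrt_nonneg _
  have hmain : (((b + 3) * (4 * n) : ℕ) : ℝ) ≤ (16:ℝ) * ((n:ℝ) * Real.sqrt (n:ℝ)) := by
    push_cast
    nlinarith [mul_le_mul_of_nonneg_left hsqrt_b (show (0:ℝ) ≤ 4 * (n:ℝ) by linarith),
      mul_le_mul_of_nonneg_left h1le (show (0:ℝ) ≤ 12 * (n:ℝ) by linarith)]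
  have hlogle : Real.sqrt (Real.log 2) ≤ Real.sqrt (Real.log (n:ℝ)) :=
    Real.sqrt_le_sqrt (Real.log_le_log (by norm_num) hn2)
  have hfinal : (16:ℝ) * ((n:ℝ) * Real.sqrt (n:ℝ))
      ≤ 16 / Real.sqrt (Real.log 2) * (n:ℝ) ^ ((3:ℝ)/2) * Real.sqrt (Real.log (n:ℝ)) := by
    rw [hpow]
    have hX : (0:ℝ) ≤ (n:ℝ) * Real.sqrt (n:ℝ) := by positivity
    have step1 : 16 / Real.sqrt (Real.log 2) * ((n:ℝ) * Real.sqrt (n:ℝ))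
        * Real.sqrt (Real.log 2)
        ≤ 16 / Real.sqrt (Real.log 2) * ((n:ℝ) * Real.sqrt (n:ℝ))
        * Real.sqrt (Real.log (n:ℝ)) := by
      apply mul_le_mul_of_nonneg_left hlogle (by positivity)
    have step0 : 16 / Real.sqrt (Real.log 2) * ((n:ℝ) * Real.sqrt (n:ℝ))
        * Real.sqrt (Real.log 2) = 16 * ((n:ℝ) * Real.sqrt (n:ℝ)) := by
      field_simp
    calc (16:ℝ) * ((n:ℝ) * Real.sqrt (n:ℝ)) = _ := step0.symm
      _ ≤ _ := step1
  have hcast : ((GPNAux.circuit G b).length : ℝ)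
      ≤ (Nat.card G.edgeSet : ℝ) + (((b + 3) * (4 * n) : ℕ) : ℝ) := by
    have := hlen
    push_cast
    exact_mod_cast this
  calc ((GPNAux.circuit G b).length : ℝ)
      ≤ (Nat.card G.edgeSet : ℝ) + (((b + 3) * (4 * n) : ℕ) : ℝ) := hcast
    _ ≤ (Nat.card G.edgeSet : ℝ) + (16:ℝ) * ((n:ℝ) * Real.sqrt (n:ℝ)) := by linarith
    _ ≤ (Nat.card G.edgeSet : ℝ)
        + 16 / Real.sqrt (Real.log 2) * (n:ℝ) ^ ((3:ℝ)/2) * Real.sqrt (Real.log (n:ℝ)) := by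
        linarith
end

section
/- Let G be a perfect cancellation graph with n vertices, m edges, and c connected components. Then G admits a graphic parity network of size exactly m + n − c. -/
/-- A set `U` is `σ`-linked if any two vertices of `U` that are consecutive in the
restriction of the ordering `σ` to `U` are adjacent in `G`. -/
def SigmaLinked {V : Type*} (G : SimpleGraph V) {n : ℕ} (σ : V ≃ Fin n) (U : Set V) :
    Prop :=
  ∀ ⦃a b : V⦄, a ∈ U → b ∈ U → σ a < σ b →
    (∀ w ∈ U, ¬(σ a < σ w ∧ σ w < σ b)) → G.Adj a b

/-- The set of neighbors of `v` occurring after `v` in the ordering `σ`. -/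
def NPlus {V : Type*} (G : SimpleGraph V) {n : ℕ} (σ : V ≃ Fin n) (v : V) : Set V :=
  {u | G.Adj v u ∧ σ v < σ u}

/-- `σ` is a perfect cancellation ordering of `G`: for every vertex `v` and every
connected component `K` of `G − v`, the set `N⁺_σ(v) ∩ K` is `σ`-linked. -/
def IsPCO {V : Type*} [Fintype V] (G : SimpleGraph V)
    (σ : V ≃ Fin (Fintype.card V)) : Prop :=
  ∀ (v : V) (K : (G.induce {u : V | u ≠ v}).ConnectedComponent),
    SigmaLinked G σ (NPlus G σ v ∩ (Subtype.val '' K.supp))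

/-- A perfect cancellation graph is a graph admitting a perfect cancellation ordering. -/
def PerfectCancellationGraph {V : Type*} [Fintype V] (G : SimpleGraph V) : Prop :=
  ∃ σ : V ≃ Fin (Fintype.card V), IsPCO G σ

namespace GPNAux

variable {V : Type*} [DecidableEq V]

def pureSt : V → Finset V := fun v => {v}

def applyCircuit (C : List (V × V)) (t : V → Finset V) : V → Finset V :=
  C.foldl (fun t g => applyGate g t) t

theorem runCircuit_eq_s4 (C : List (V × V)) : runCircuit C = applyCircuit C pureSt := rfl

@[simp] theorem applyCircuit_nil (t : V → Finset V) : applyCircuit ([] : List (V×V)) t = t := rfl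

@[simp] theorem applyCircuit_cons (g : V × V) (C : List (V×V)) (t : V → Finset V) :
    applyCircuit (g :: C) t = applyCircuit C (applyGate g t) := rfl

theorem applyCircuit_append (A B : List (V×V)) (t : V → Finset V) :
    applyCircuit (A ++ B) t = applyCircuit B (applyCircuit A t) := by
  simp [applyCircuit, List.foldl_append]

theorem applyGate_eq_update (g : V × V) (t : V → Finset V) :
    applyGate g t = Function.update t g.2 (symmDiff (t g.1) (t g.2)) := by
  funext w
  by_cases h : w = g.2 <;> simp [applyGate, h, Function.update]

theorem applyGate_ne {g : V × V} (t : V → Finset V) {w : V} (h : w ≠ g.2) :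
    applyGate g t w = t w := if_neg h

theorem applyGate_update {g : V × V} {v : V} (h1 : g.1 ≠ v) (h2 : g.2 ≠ v)
    (t : V → Finset V) (X : Finset V) :
    applyGate g (Function.update t v X) = Function.update (applyGate g t) v X := by
  funext w
  by_cases hw : w = v
  · subst hw
    rw [Function.update_self, applyGate_ne _ (fun h => h2 h.symm), Function.update_self]
  · rw [Function.update_of_ne hw]
    by_cases hg : w = g.2
    · subst hg
      rw [applyGate, if_pos rfl, applyGate, if_pos rfl,
        Function.update_of_ne h1, Function.update_of_ne h2]
    · rw [applyGate_ne _ hg, applyGate_ne _ hg, Function.update_of_ne hw]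

theorem applyCircuit_update {C : List (V × V)} {v : V}
    (h : ∀ g ∈ C, g.1 ≠ v ∧ g.2 ≠ v) (t : V → Finset V) (X : Finset V) :
    applyCircuit C (Function.update t v X) = Function.update (applyCircuit C t) v X := by
  induction C generalizing t with
  | nil => simp
  | cons g C ih =>
    simp only [applyCircuit_cons]
    rw [applyGate_update (h g (by simp)).1 (h g (by simp)).2, ih (fun g hg => h g (by simp [hg]))]

theorem applyCircuit_ne {C : List (V × V)} {w : V}
    (h : ∀ g ∈ C, g.2 ≠ w) (t : V → Finset V) :
    applyCircuit C t w = t w := by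
  induction C generalizing t with
  | nil => rfl
  | cons g C ih =>
    simp only [applyCircuit_cons]
    rw [ih (fun g hg => h g (by simp [hg])), applyGate_ne _ (fun hh => (h g (by simp)) hh.symm)]

end GPNAux

namespace GPNAux2
open GPNAux

set_option linter.unusedSectionVars false

variable {V : Type*} [DecidableEq V]

theorem sd_pair {u v : V} (h : u ≠ v) : symmDiff ({u} : Finset V) {v} = {u, v} := by
  ext x; simp [Finset.mem_symmDiff]; aesop

theorem sd_step {v a b : V} (hab : a ≠ b) (hva : v ≠ a) (hvb : v ≠ b) :
    symmDiff ({a, b} : Finset V) {v, a} = {v, b} := by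
  ext x; simp [Finset.mem_symmDiff]; aesop

theorem sd_final {v u : V} (h : v ≠ u) : symmDiff ({u} : Finset V) {v, u} = {v} := by
  ext x; simp [Finset.mem_symmDiff]; aesop

theorem update_pure (v : V) : Function.update (pureSt : V → Finset V) v {v} = pureSt := by
  funext w
  by_cases h : w = v
  · subst h; simp [pureSt]
  · simp [Function.update_of_ne h]

variable (v₁ : V) (C : List (V × V))

def weaveP : ℕ → List (ℕ × V × V) → List (V × V)
  | _, [] => []
  | p, (t, x, _) :: rest => (C.take t).drop p ++ (x, v₁) :: weaveP t rest

def lastTime : ℕ → List (ℕ × V × V) → ℕ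
  | p, [] => p
  | _, (t, _, _) :: rest => lastTime t rest

def lastTok : V → List (ℕ × V × V) → V
  | a, [] => a
  | _, (_, _, b) :: rest => lastTok b rest

def timesOK : ℕ → List (ℕ × V × V) → Prop
  | p, [] => p ≤ C.length
  | p, (t, _, _) :: rest => p ≤ t ∧ timesOK t rest

def linked : V → List (ℕ × V × V) → Prop
  | _, [] => True
  | a, (t, x, b) :: rest =>
      runCircuit (C.take t) x = {a, b} ∧ x ≠ v₁ ∧ a ≠ b ∧ a ≠ v₁ ∧ b ≠ v₁ ∧ linked b rest

theorem lastTime_le {items : List (ℕ × V × V)} :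
    ∀ {p : ℕ}, timesOK C p items → lastTime p items ≤ C.length := by
  induction items with
  | nil => intro p h; exact h
  | cons i rest ih => intro p h; exact ih h.2

theorem lastTime_ge {items : List (ℕ × V × V)} :
    ∀ {p : ℕ}, timesOK C p items → p ≤ lastTime p items := by
  induction items with
  | nil => intro p h; exact le_refl _
  | cons i rest ih =>
    intro p h
    exact le_trans h.1 (ih h.2)

theorem take_seg {p t : ℕ} (hpt : p ≤ t) :
    C.take p ++ (C.take t).drop p = C.take t := by
  have : (C.take t).take p = C.take p := by
    rw [List.take_take, min_eq_left hpt]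
  rw [← this, List.take_append_drop]

theorem seg_run {p t : ℕ} (hpt : p ≤ t) (s : V → Finset V) :
    applyCircuit ((C.take t).drop p) (applyCircuit (C.take p) s) = applyCircuit (C.take t) s := by
  rw [← applyCircuit_append, take_seg C hpt]

theorem mem_seg {g : V × V} {p t : ℕ} (h : g ∈ (C.take t).drop p) : g ∈ C := by
  have h1 : g ∈ C.take t := List.mem_of_mem_drop h
  exact List.mem_of_mem_take h1

theorem weaveP_run (hC : ∀ g ∈ C, g.1 ≠ v₁ ∧ g.2 ≠ v₁) :
    ∀ (items : List (ℕ × V × V)) (p : ℕ) (a : V), timesOK C p items → linked v₁ C a items →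
    applyCircuit (weaveP v₁ C p items)
        (Function.update (runCircuit (C.take p)) v₁ {v₁, a})
      = Function.update (runCircuit (C.take (lastTime p items))) v₁ {v₁, lastTok a items} := by
  intro items
  induction items with
  | nil => intro p a _ _; simp [weaveP, lastTime, lastTok]
  | cons i rest ih =>
    obtain ⟨t, x, b⟩ := i
    intro p a hT hL
    obtain ⟨hdisp, hxv, hab, hav, hbv, hL'⟩ := hL
    simp only [weaveP, lastTime, lastTok]
    rw [applyCircuit_append, applyCircuit_cons]
    have hseg : ∀ g ∈ (C.take t).drop p, g.1 ≠ v₁ ∧ g.2 ≠ v₁ :=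
      fun g hg => hC g (mem_seg C hg)
    rw [applyCircuit_update hseg, runCircuit_eq_s4, seg_run C hT.1]
    have hstep : applyGate (x, v₁)
        (Function.update (applyCircuit (C.take t) pureSt) v₁ {v₁, a})
        = Function.update (applyCircuit (C.take t) pureSt) v₁ {v₁, b} := by
      rw [applyGate_eq_update]
      have h1 : (Function.update (applyCircuit (C.take t) pureSt) v₁ {v₁, a}) x
          = {a, b} := by
        rw [Function.update_of_ne hxv]; exact hdisp
      have h2 : (Function.update (applyCircuit (C.take t) pureSt) v₁ {v₁, a}) v₁
          = {v₁, a} := Function.update_self _ _ _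
      simp only [h1, h2]
      rw [sd_step hab (Ne.symm hav) (Ne.symm hbv), Function.update_idem]
    rw [hstep, ← runCircuit_eq_s4]
    exact ih t b hT.2 hL'

end GPNAux2

namespace GPNAux2
open GPNAux

variable {V : Type*} [DecidableEq V]
variable (v₁ : V) (C : List (V × V))

theorem timesOK_start : ∀ {p : ℕ} {items : List (ℕ × V × V)}, timesOK C p items → p ≤ C.length := by
  intro p items
  induction items generalizing p with
  | nil => intro h; exact h
  | cons i rest ih => intro h; exact le_trans h.1 (ih h.2)

theorem weaveP_append (A B : List (ℕ × V × V)) (p : ℕ) :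
    weaveP v₁ C p (A ++ B) = weaveP v₁ C p A ++ weaveP v₁ C (lastTime p A) B := by
  induction A generalizing p with
  | nil => simp [weaveP, lastTime]
  | cons i rest ih =>
    obtain ⟨t, x, b⟩ := i
    simp [weaveP, lastTime, ih t, List.append_assoc]

theorem lastTime_append (A B : List (ℕ × V × V)) (p : ℕ) :
    lastTime p (A ++ B) = lastTime (lastTime p A) B := by
  induction A generalizing p with
  | nil => simp [lastTime]
  | cons i rest ih => obtain ⟨t, x, b⟩ := i; simp [lastTime, ih t]

theorem lastTok_append (A B : List (ℕ × V × V)) (a : V) :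
    lastTok a (A ++ B) = lastTok (lastTok a A) B := by
  induction A generalizing a with
  | nil => simp [lastTok]
  | cons i rest ih => obtain ⟨t, x, b⟩ := i; simp [lastTok, ih]

theorem timesOK_append {A B : List (ℕ × V × V)} :
    ∀ {p : ℕ}, timesOK C p (A ++ B) → timesOK C p A ∧ timesOK C (lastTime p A) B := by
  induction A with
  | nil => intro p h; exact ⟨timesOK_start C h, h⟩
  | cons i rest ih =>
    obtain ⟨t, x, b⟩ := i
    intro p h
    obtain ⟨h1, h2⟩ := h
    obtain ⟨ha, hb⟩ := ih h2
    exact ⟨⟨h1, ha⟩, hb⟩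

theorem linked_append {A B : List (ℕ × V × V)} :
    ∀ {a : V}, linked v₁ C a (A ++ B) → linked v₁ C a A ∧ linked v₁ C (lastTok a A) B := by
  induction A with
  | nil => intro a h; exact ⟨trivial, h⟩
  | cons i rest ih =>
    obtain ⟨t, x, b⟩ := i
    intro a h
    obtain ⟨h1, h2, h3, h4, h5, h6⟩ := h
    obtain ⟨ha, hb⟩ := ih h6
    exact ⟨⟨h1, h2, h3, h4, h5, ha⟩, hb⟩

theorem weaveP_length : ∀ {p : ℕ} {items : List (ℕ × V × V)}, timesOK C p items →
    (weaveP v₁ C p items).length + p = lastTime p items + items.length := by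
  intro p items
  induction items generalizing p with
  | nil => intro _; simp [weaveP, lastTime]
  | cons i rest ih =>
    obtain ⟨t, x, b⟩ := i
    intro h
    have ht : t ≤ C.length := timesOK_start C h.2
    have hpt : p ≤ t := h.1
    have := ih h.2
    have h4 : ((C.take t).drop p).length = t - p := by
      simp [List.length_drop, List.length_take]; omega
    simp only [weaveP, lastTime, List.length_append, List.length_cons, h4]
    omega

theorem seg_take {p : ℕ} (hp : p ≤ C.length) :
    ∀ (items : List (ℕ × V × V)) (q : ℕ) (TAIL : List (V × V)), timesOK C q items → q ≤ p →
    (weaveP v₁ C q items ++ (C.drop (lastTime q items) ++ TAIL)).take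
        ((p - q) + (items.takeWhile (fun i => i.1 < p)).length)
      = weaveP v₁ C q (items.takeWhile (fun i => i.1 < p))
        ++ (C.take p).drop (lastTime q (items.takeWhile (fun i => i.1 < p))) := by
  intro items
  induction items with
  | nil =>
    intro q TAIL hT hqp
    simp only [weaveP, lastTime, List.takeWhile_nil, List.nil_append, List.length_nil,
      Nat.add_zero]
    rw [List.take_append_of_le_length (by rw [List.length_drop]; omega), List.take_drop]
    have hq : q + (p - q) = p := by omega
    rw [hq]
  | cons i rest ih =>
    obtain ⟨t, x, b⟩ := i
    intro q TAIL hT hqp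
    have hqt : q ≤ t := hT.1
    have ht : t ≤ C.length := timesOK_start C hT.2
    by_cases h : t < p
    · have htw : (((t, x, b) :: rest).takeWhile (fun i => i.1 < p))
          = (t, x, b) :: rest.takeWhile (fun i => i.1 < p) := by
        simp [List.takeWhile_cons, h]
      rw [htw]
      simp only [weaveP, lastTime]
      have hlen : ((C.take t).drop q).length = t - q := by
        simp [List.length_drop, List.length_take]; omega
      have : (p - q) + ((t, x, b) :: rest.takeWhile (fun i => i.1 < p)).length
          = ((C.take t).drop q).length
            + ((p - t) + (rest.takeWhile (fun i => i.1 < p)).length + 1) := by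
        simp only [List.length_cons, hlen]; omega
      rw [List.append_assoc, List.cons_append]
      rw [this, List.take_length_add_append, List.take_cons (by omega), Nat.add_sub_cancel]
      rw [ih t TAIL hT.2 (le_of_lt h)]
      simp [List.cons_append, List.append_assoc]
    · have htw : (((t, x, b) :: rest).takeWhile (fun i => i.1 < p)) = [] := by
        simp [List.takeWhile_cons, h]
      rw [htw]
      simp only [weaveP, lastTime, List.length_nil, Nat.add_zero, List.nil_append]
      rw [List.append_assoc,
        List.take_append_of_le_length (by simp [List.length_drop, List.length_take]; omega)]
      rw [List.take_drop]
      have h1 : (q + (p - q)) = p := by omega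
      rw [h1, List.take_take, min_eq_left (by omega)]

end GPNAux2

namespace GPNAux2
open GPNAux
set_option linter.unusedSectionVars false

variable {V : Type*} [DecidableEq V]
variable (v₁ : V) (C : List (V × V))

theorem lastTok_ne {a : V} {items : List (ℕ × V × V)} (h : linked v₁ C a items)
    (ha : a ≠ v₁) : lastTok a items ≠ v₁ := by
  induction items generalizing a with
  | nil => exact ha
  | cons i rest ih =>
    obtain ⟨t, x, b⟩ := i
    exact ih h.2.2.2.2.2 h.2.2.2.2.1

theorem applyGate_pure {a v : V} (h : a ≠ v) :
    applyGate (a, v) (pureSt : V → Finset V) = Function.update pureSt v {v, a} := by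
  rw [applyGate_eq_update]
  have : symmDiff (pureSt a) (pureSt v) = {v, a} := by
    show symmDiff ({a} : Finset V) {v} = {v, a}
    rw [sd_pair h, Finset.pair_comm]
  rw [this]

def weaveBlock (u₁ : V) (items : List (ℕ × V × V)) : List (V × V) :=
  (u₁, v₁) :: (weaveP v₁ C 0 items ++ (C.drop (lastTime 0 items) ++ [(lastTok u₁ items, v₁)]))

theorem weaveBlock_length {items : List (ℕ × V × V)} (u₁ : V) (hT : timesOK C 0 items) :
    (weaveBlock v₁ C u₁ items).length = C.length + items.length + 2 := by
  have h1 := weaveP_length v₁ C hT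
  have h2 := lastTime_le C hT
  simp only [weaveBlock, List.length_cons, List.length_append, List.length_drop,
    List.length_cons, List.length_nil]
  omega

variable {v₁ C}

theorem weaveBlock_run {items : List (ℕ × V × V)} {u₁ : V}
    (hC : ∀ g ∈ C, g.1 ≠ v₁ ∧ g.2 ≠ v₁) (hT : timesOK C 0 items)
    (hL : linked v₁ C u₁ items) (hu : u₁ ≠ v₁) (hfin : runCircuit C = pureSt) :
    runCircuit (weaveBlock v₁ C u₁ items) = pureSt := by
  show applyCircuit _ pureSt = pureSt
  rw [weaveBlock, applyCircuit_cons, applyGate_pure hu, applyCircuit_append]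
  have h0 : Function.update pureSt v₁ ({v₁, u₁} : Finset V)
      = Function.update (runCircuit (C.take 0)) v₁ {v₁, u₁} := rfl
  rw [h0, weaveP_run v₁ C hC items 0 u₁ hT hL]
  have hdropmem : ∀ g ∈ C.drop (lastTime 0 items), g.1 ≠ v₁ ∧ g.2 ≠ v₁ :=
    fun g hg => hC g (List.mem_of_mem_drop hg)
  rw [applyCircuit_append, applyCircuit_update hdropmem]
  have hfull : applyCircuit (C.drop (lastTime 0 items))
      (runCircuit (C.take (lastTime 0 items))) = pureSt := by
    rw [runCircuit_eq_s4, ← applyCircuit_append, List.take_append_drop, ← runCircuit_eq_s4, hfin]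
  rw [hfull]
  have hkv := lastTok_ne v₁ C hL hu
  rw [applyCircuit_cons, applyCircuit_nil, applyGate_eq_update]
  simp only [Function.update_self, Function.update_of_ne hkv, Function.update_idem]
  rw [show (pureSt (lastTok u₁ items) : Finset V) = {lastTok u₁ items} from rfl,
    sd_final (Ne.symm hkv), update_pure]

def tokPos (items : List (ℕ × V × V)) (r : ℕ) : ℕ := 1 + lastTime 0 (items.take r) + r

def edgePos (items : List (ℕ × V × V)) (p : ℕ) : ℕ :=
  1 + p + (items.takeWhile (fun i => i.1 < p)).length

theorem weaveBlock_tok {items : List (ℕ × V × V)} {u₁ : V}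
    (hC : ∀ g ∈ C, g.1 ≠ v₁ ∧ g.2 ≠ v₁) (hT : timesOK C 0 items)
    (hL : linked v₁ C u₁ items) (hu : u₁ ≠ v₁) {r : ℕ} (hr : r ≤ items.length) :
    runCircuit ((weaveBlock v₁ C u₁ items).take (tokPos items r)) v₁
      = {v₁, lastTok u₁ (items.take r)} := by
  have hsplit : items = items.take r ++ items.drop r := (List.take_append_drop r items).symm
  have hTA : timesOK C 0 (items.take r) := by
    rw [hsplit] at hT; exact (timesOK_append C hT).1
  have hLA : linked v₁ C u₁ (items.take r) := by
    rw [hsplit] at hL; exact (linked_append v₁ C hL).1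
  have hlenA : (weaveP v₁ C 0 (items.take r)).length = lastTime 0 (items.take r) + r := by
    have := weaveP_length v₁ C hTA
    simp only [List.length_take, min_eq_left hr] at this
    omega
  have hpre : (weaveBlock v₁ C u₁ items).take (tokPos items r)
      = (u₁, v₁) :: weaveP v₁ C 0 (items.take r) := by
    rw [weaveBlock, tokPos]
    have h1 : 1 + lastTime 0 (items.take r) + r = (lastTime 0 (items.take r) + r) + 1 := by omega
    rw [h1, List.take_succ_cons]
    congr 1
    have hw1 : weaveP v₁ C 0 items = weaveP v₁ C 0 (items.take r)
        ++ weaveP v₁ C (lastTime 0 (items.take r)) (items.drop r) := by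
      conv_lhs => rw [hsplit]
      rw [weaveP_append]
    rw [hw1, List.append_assoc, ← hlenA, List.take_left]
  rw [hpre]
  show applyCircuit _ (applyGate _ pureSt) v₁ = _
  rw [applyGate_pure hu]
  have h0 : Function.update pureSt v₁ ({v₁, u₁} : Finset V)
      = Function.update (runCircuit (C.take 0)) v₁ {v₁, u₁} := rfl
  rw [h0, weaveP_run v₁ C hC _ 0 u₁ hTA hLA, Function.update_self]

theorem weaveBlock_edge {items : List (ℕ × V × V)} {u₁ : V}
    (hC : ∀ g ∈ C, g.1 ≠ v₁ ∧ g.2 ≠ v₁) (hT : timesOK C 0 items)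
    (hL : linked v₁ C u₁ items) (hu : u₁ ≠ v₁) {p : ℕ} (hp : p ≤ C.length)
    {w : V} (hw : w ≠ v₁) :
    runCircuit ((weaveBlock v₁ C u₁ items).take (edgePos items p)) w
      = runCircuit (C.take p) w := by
  set A := items.takeWhile (fun i => i.1 < p) with hA
  have hsplit : items = A ++ items.dropWhile (fun i => i.1 < p) :=
    List.takeWhile_append_dropWhile.symm
  have hTA : timesOK C 0 A := by
    rw [hsplit] at hT; exact (timesOK_append C hT).1
  have hLA : linked v₁ C u₁ A := by
    rw [hsplit] at hL; exact (linked_append v₁ C hL).1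
  have hlt : lastTime 0 A ≤ p := by
    have : ∀ (l : List (ℕ × V × V)) (q : ℕ), (∀ i ∈ l, i.1 < p) → q ≤ p →
        lastTime q l ≤ p := by
      intro l
      induction l with
      | nil => intro q _ h; exact h
      | cons i rest ih =>
        intro q hall _
        exact ih i.1 (fun j hj => hall j (by simp [hj]))
          (le_of_lt (hall i (by simp)))
    exact this A 0 (fun i hi => by simpa using List.mem_takeWhile_imp hi) (Nat.zero_le p)
  have hpre : (weaveBlock v₁ C u₁ items).take (edgePos items p)
      = (u₁, v₁) :: (weaveP v₁ C 0 A ++ (C.take p).drop (lastTime 0 A)) := by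
    rw [weaveBlock, edgePos]
    have h1 : 1 + p + A.length = (p + A.length) + 1 := by omega
    rw [h1, List.take_succ_cons]
    congr 1
    have := seg_take v₁ C hp items 0 [(lastTok u₁ items, v₁)] hT (Nat.zero_le p)
    simpa [hA] using this
  rw [hpre]
  show applyCircuit _ (applyGate _ pureSt) w = _
  rw [applyGate_pure hu, applyCircuit_append]
  have h0 : Function.update pureSt v₁ ({v₁, u₁} : Finset V)
      = Function.update (runCircuit (C.take 0)) v₁ {v₁, u₁} := rfl
  rw [h0, weaveP_run v₁ C hC _ 0 u₁ hTA hLA]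
  have hsegmem : ∀ g ∈ (C.take p).drop (lastTime 0 A), g.1 ≠ v₁ ∧ g.2 ≠ v₁ :=
    fun g hg => hC g (mem_seg C hg)
  rw [applyCircuit_update hsegmem, Function.update_of_ne hw, runCircuit_eq_s4, runCircuit_eq_s4,
    seg_run C hlt]

end GPNAux2

namespace GPNAux2
open GPNAux
set_option linter.unusedSectionVars false

variable {V : Type*} [DecidableEq V]
variable (v₁ : V) (C : List (V × V))

theorem takeWhile_length_mono {α : Type*} {q q' : α → Bool}
    (h : ∀ a, q a = true → q' a = true) (l : List α) :
    (l.takeWhile q).length ≤ (l.takeWhile q').length := by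
  induction l with
  | nil => simp
  | cons a l ih =>
    by_cases hq : q a = true
    · rw [List.takeWhile_cons_of_pos hq, List.takeWhile_cons_of_pos (h a hq)]
      simpa using ih
    · rw [List.takeWhile_cons_of_neg (by simpa using hq)]
      simp

theorem le_takeWhile_length {α : Type*} {q : α → Bool} :
    ∀ (l : List α) (r : ℕ), r ≤ l.length → (∀ a ∈ l.take r, q a = true) →
    r ≤ (l.takeWhile q).length := by
  intro l
  induction l with
  | nil => intro r hr _; simpa using hr
  | cons a l ih =>
    intro r hr hall
    match r with
    | 0 => exact Nat.zero_le _
    | r + 1 =>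
      have ha : q a = true := hall a (by simp [List.take_succ_cons])
      rw [List.takeWhile_cons_of_pos ha]
      simp only [List.length_cons, Nat.add_le_add_iff_right]
      exact ih r (by simpa using hr) (fun b hb => hall b (by simp [List.take_succ_cons, hb]))

theorem mem_le_lastTime {items : List (ℕ × V × V)} :
    ∀ {q : ℕ}, timesOK C q items → ∀ i ∈ items, i.1 ≤ lastTime q items := by
  induction items with
  | nil => intro q _ i hi; simp at hi
  | cons j rest ih =>
    intro q hT i hi
    rcases List.mem_cons.1 hi with h | h
    · subst h
      simp only [lastTime]
      exact lastTime_ge C hT.2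
    · exact ih hT.2 i h

theorem edgePos_mono {items : List (ℕ × V × V)} {p p' : ℕ} (h : p < p') :
    edgePos items p < edgePos items p' := by
  have := takeWhile_length_mono
    (q := fun i : ℕ × V × V => decide (i.1 < p)) (q' := fun i => decide (i.1 < p'))
    (by intro a ha; simp at ha ⊢; omega) items
  simp only [edgePos]
  omega

theorem tokPos_lt_edgePos {items : List (ℕ × V × V)} {r p : ℕ}
    (hT : timesOK C 0 items) (hr1 : 1 ≤ r) (hr : r ≤ items.length)
    (hlt : lastTime 0 (items.take r) < p) :
    tokPos items r < edgePos items p := by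
  have hsplit : items = items.take r ++ items.drop r := (List.take_append_drop r items).symm
  have hTA : timesOK C 0 (items.take r) := by
    rw [hsplit] at hT; exact (timesOK_append C hT).1
  have hall : ∀ i ∈ items.take r, decide (i.1 < p) = true := by
    intro i hi
    have := mem_le_lastTime C hTA i hi
    simp; omega
  have hge := le_takeWhile_length items r (by simpa using hr) hall
  simp only [tokPos, edgePos]
  omega

theorem weaveP_gates {items : List (ℕ × V × V)} :
    ∀ {p : ℕ} {g : V × V}, g ∈ weaveP v₁ C p items →
      g ∈ C ∨ ∃ i ∈ items, g = (i.2.1, v₁) := by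
  induction items with
  | nil => intro p g hg; simp [weaveP] at hg
  | cons i rest ih =>
    obtain ⟨t, x, b⟩ := i
    intro p g hg
    simp only [weaveP, List.mem_append, List.mem_cons] at hg
    rcases hg with h | h | h
    · exact Or.inl (mem_seg C h)
    · exact Or.inr ⟨(t, x, b), by simp, h⟩
    · rcases ih h with h' | ⟨j, hj, hgj⟩
      · exact Or.inl h'
      · exact Or.inr ⟨j, by simp [hj], hgj⟩

theorem weaveBlock_gates {items : List (ℕ × V × V)} {u₁ : V} {g : V × V}
    (hg : g ∈ weaveBlock v₁ C u₁ items) :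
    g ∈ C ∨ g = (u₁, v₁) ∨ g = (lastTok u₁ items, v₁) ∨ ∃ i ∈ items, g = (i.2.1, v₁) := by
  simp only [weaveBlock, List.mem_cons, List.mem_append, List.mem_singleton] at hg
  rcases hg with h | h | h | h
  · exact Or.inr (Or.inl h)
  · rcases weaveP_gates v₁ C h with h' | h'
    · exact Or.inl h'
    · exact Or.inr (Or.inr (Or.inr h'))
  · exact Or.inl (List.mem_of_mem_drop h)
  · rcases h with h | h
    · exact Or.inr (Or.inr (Or.inl h))
    · simp at h

end GPNAux2

namespace GPNG
open GPNAux GPNAux2 Finset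
open scoped Classical
set_option linter.unusedSectionVars false

variable {V : Type*} [DecidableEq V] (G : SimpleGraph V) {N : ℕ} (σ : V ≃ Fin N)

def Hs (s : Finset V) : SimpleGraph V where
  Adj a b := G.Adj a b ∧ a ∈ s ∧ b ∈ s
  symm := by constructor; intro a b h; exact ⟨h.1.symm, h.2.2, h.2.1⟩
  loopless := by constructor; intro a h; exact G.loopless.irrefl a h.1

@[simp] theorem Hs_adj {s : Finset V} {a b : V} :
    (Hs G s).Adj a b ↔ G.Adj a b ∧ a ∈ s ∧ b ∈ s := Iff.rfl

def reach (s : Finset V) (a b : V) : Prop := (Hs G s).Reachable a b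

theorem reach_refl (s : Finset V) (a : V) : reach G s a a := SimpleGraph.Reachable.refl a
theorem reach_symm {s : Finset V} {a b : V} (h : reach G s a b) : reach G s b a := h.symm
theorem reach_trans {s : Finset V} {a b c : V} (h : reach G s a b) (h' : reach G s b c) :
    reach G s a c := h.trans h'

theorem reach_mono {s t : Finset V} (hst : s ⊆ t) {a b : V} (h : reach G s a b) :
    reach G t a b := by
  refine SimpleGraph.Reachable.mono ?_ h
  intro x y hxy
  rw [Hs_adj] at hxy ⊢
  exact ⟨hxy.1, hst hxy.2.1, hst hxy.2.2⟩

theorem reach_adj {s : Finset V} {a b : V} (h : G.Adj a b) (ha : a ∈ s) (hb : b ∈ s) :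
    reach G s a b := SimpleGraph.Adj.reachable ⟨h, ha, hb⟩

noncomputable def comp (s : Finset V) (x : V) : Finset V :=
  s.filter (fun y => reach G s x y)

theorem comp_subset {s : Finset V} {x : V} : comp G s x ⊆ s := filter_subset _ _

theorem mem_comp_self {s : Finset V} {x : V} (h : x ∈ s) : x ∈ comp G s x :=
  mem_filter.2 ⟨h, reach_refl G s x⟩

theorem reach_of_mem_comp {s : Finset V} {x y : V} (h : y ∈ comp G s x) : reach G s x y :=
  (mem_filter.1 h).2

theorem mem_comp_of {s : Finset V} {x y : V} (h : reach G s x y) (hy : y ∈ s) :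
    y ∈ comp G s x := mem_filter.2 ⟨hy, h⟩

theorem comp_eq_of_mem {s : Finset V} {x y : V} (h : y ∈ comp G s x) :
    comp G s y = comp G s x := by
  ext z
  simp only [comp, mem_filter, and_congr_right_iff]
  intro _
  constructor
  · intro hz; exact reach_trans G (reach_of_mem_comp G h) hz
  · intro hz; exact reach_trans G (reach_symm G (reach_of_mem_comp G h)) hz

theorem adj_mem_comp {s : Finset V} {x y z : V} (hy : y ∈ comp G s x) (hadj : G.Adj y z)
    (hz : z ∈ s) : z ∈ comp G s x :=
  mem_comp_of G (reach_trans G (reach_of_mem_comp G hy)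
    (reach_adj G hadj (comp_subset G hy) hz)) hz

/-- a walk between vertices of a component stays in the component -/
theorem reach_in_comp {s : Finset V} {x a b : V} (ha : a ∈ comp G s x)
    (h : reach G s a b) : reach G (comp G s x) a b := by
  obtain ⟨w⟩ := h
  induction w with
  | nil => exact reach_refl G _ _
  | @cons a c b hadj p ih =>
    have hc : c ∈ comp G s x := adj_mem_comp G ha hadj.1 hadj.2.2
    exact reach_trans G (reach_adj G hadj.1 ha hc) (ih hc)

/-- a walk starting outside a component avoids it -/
theorem reach_avoid {s : Finset V} {x a b : V} (ha : a ∉ comp G s x)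
    (h : reach G s a b) : reach G (s \ comp G s x) a b := by
  obtain ⟨w⟩ := h
  induction w with
  | nil => exact reach_refl G _ _
  | @cons a c b hadj p ih =>
    have hc : c ∉ comp G s x := by
      intro hc
      exact ha (adj_mem_comp G hc hadj.1.symm hadj.2.1)
    exact reach_trans G
      (reach_adj G hadj.1 (mem_sdiff.2 ⟨hadj.2.1, ha⟩) (mem_sdiff.2 ⟨hadj.2.2, hc⟩)) (ih hc)

theorem comp_sdiff {s : Finset V} {x y : V} (hy : y ∈ s) (hyK : y ∉ comp G s x) :
    comp G (s \ comp G s x) y = comp G s y := by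
  ext z
  unfold comp
  simp only [mem_filter, mem_sdiff]
  constructor
  · intro ⟨⟨hz1, _⟩, hz2⟩
    exact ⟨hz1, reach_mono G (sdiff_subset) hz2⟩
  · intro ⟨hz1, hz2⟩
    have hzK : z ∉ comp G s x := by
      intro hzK
      exact hyK (mem_comp_of G
        (reach_trans G (reach_of_mem_comp G hzK) (reach_symm G hz2)) hy)
    have hzK' : ¬(z ∈ s ∧ reach G s x z) := by
      intro hc; exact hzK (mem_filter.2 ⟨hc.1, hc.2⟩)
    exact ⟨⟨hz1, by simpa [comp] using hzK'⟩, reach_avoid G hyK hz2⟩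

def OE (s : Finset V) (a b : V) : Prop := G.Adj a b ∧ a ∈ s ∧ b ∈ s ∧ σ a < σ b

def Good (s : Finset V) : Prop :=
  ∀ w a b, w ∈ s → a ∈ s → b ∈ s → G.Adj w a → G.Adj w b → σ w < σ a → σ a < σ b →
    reach G (s.erase w) a b →
    (∀ x ∈ s, G.Adj w x → σ a < σ x → σ x < σ b → ¬ reach G (s.erase w) a x) →
    G.Adj a b

theorem Good.mono {s t : Finset V} (hG : Good G σ s) (hts : t ⊆ s)
    (hcond : ∀ a x, a ∈ t → x ∈ s → G.Adj a x → σ a < σ x → x ∈ t) :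
    Good G σ t := by
  intro w a b hw ha hb hwa hwb h1 h2 hre hmid
  have herase : t.erase w ⊆ s.erase w := erase_subset_erase w hts
  set cand := s.filter (fun x => G.Adj w x ∧ σ a < σ x ∧ σ x ≤ σ b ∧
    reach G (s.erase w) a x) with hcand
  have hbcand : b ∈ cand := by
    refine mem_filter.2 ⟨hts hb, hwb, h2, le_refl _, reach_mono G herase hre⟩
  obtain ⟨x₀, hx₀, hmin⟩ := Finset.exists_min_image cand σ ⟨b, hbcand⟩
  obtain ⟨hx₀s, hwx₀, hax₀, hx₀b, hrx₀⟩ := mem_filter.1 hx₀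
  have hadjax₀ : G.Adj a x₀ := by
    refine hG w a x₀ (hts hw) (hts ha) hx₀s hwa hwx₀ h1 hax₀ hrx₀ ?_
    intro y hy hwy hay hyx₀ hry
    have hycand : y ∈ cand :=
      mem_filter.2 ⟨hy, hwy, hay, le_of_lt (lt_of_lt_of_le hyx₀ hx₀b), hry⟩
    exact absurd (hmin y hycand) (by simp only [not_le]; exact hyx₀)
  have hx₀t : x₀ ∈ t := hcond a x₀ ha hx₀s hadjax₀ hax₀
  by_cases hlt : σ x₀ < σ b
  · exfalso
    have haw : a ≠ w := fun h => absurd (h ▸ h1) (lt_irrefl _)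
    have hx₀w : x₀ ≠ w := fun h => absurd (h ▸ lt_trans h1 hax₀) (lt_irrefl _)
    exact hmid x₀ hx₀t hwx₀ hax₀ hlt
      (reach_adj G hadjax₀ (mem_erase.2 ⟨haw, ha⟩) (mem_erase.2 ⟨hx₀w, hx₀t⟩))
  · have : σ x₀ = σ b := le_antisymm hx₀b (not_lt.1 hlt)
    have : x₀ = b := σ.injective (by ext; omega)
    exact this ▸ hadjax₀

end GPNG

namespace GPNG
open GPNAux GPNAux2 Finset
open scoped Classical
set_option linter.unusedSectionVars false

variable {V : Type*} [DecidableEq V] (G : SimpleGraph V) {N : ℕ} (σ : V ≃ Fin N)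

theorem sorted_noMiddle {L : List (Fin N)} (hL : L.Pairwise (· < ·)) :
    L.Chain' (fun a b => ∀ c ∈ L, ¬(a < c ∧ c < b)) := by
  unfold List.Chain'
  rw [List.isChain_iff_getElem]
  intro i hi c hc ⟨h1, h2⟩
  obtain ⟨j, rfl⟩ := List.mem_iff_get.1 hc
  have hmono := hL.sortedLT.strictMono_get
  have hij : (⟨i, by omega⟩ : Fin L.length) < j := hmono.lt_iff_lt.1 h1
  have hji : j < (⟨i + 1, by omega⟩ : Fin L.length) := hmono.lt_iff_lt.1 h2
  have h3 : (i : ℕ) < j.1 := hij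
  have h4 : (j : ℕ) < i + 1 := hji
  omega

theorem chain'_and {α : Type*} {R S : α → α → Prop} {l : List α}
    (hR : l.Chain' R) (hS : l.Chain' S) : l.Chain' (fun a b => R a b ∧ S a b) := by
  unfold List.Chain' at *
  rw [List.isChain_iff_getElem] at *
  intro i hi
  exact ⟨hR i hi, hS i hi⟩

theorem chainList (U : Finset V) : ∃ l : List V,
    (∀ z, z ∈ l ↔ z ∈ U) ∧ l.length = U.card ∧
    l.Chain' (fun a b => σ a < σ b) ∧
    l.Chain' (fun a b => ∀ x ∈ U, ¬(σ a < σ x ∧ σ x < σ b)) := by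
  set LF := (U.image σ).sort (· ≤ ·) with hLF
  have hsor : LF.Pairwise (· < ·) := (Finset.sortedLT_sort _).pairwise
  refine ⟨LF.map σ.symm, ?_, ?_, ?_, ?_⟩
  · intro z
    rw [List.mem_map]
    constructor
    · rintro ⟨c, hc, rfl⟩
      have : c ∈ U.image σ := (Finset.mem_sort _).1 hc
      obtain ⟨u, hu, rfl⟩ := Finset.mem_image.1 this
      simpa using hu
    · intro hz
      exact ⟨σ z, (Finset.mem_sort _).2 (Finset.mem_image_of_mem σ hz), by simp⟩
  · rw [List.length_map, Finset.length_sort, Finset.card_image_of_injective _ σ.injective]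
  · unfold List.Chain'
    rw [List.isChain_map]
    refine List.IsChain.imp ?_ (hsor.isChain)
    intro a b h
    simpa using h
  · unfold List.Chain'
    rw [List.isChain_map]
    refine List.IsChain.imp ?_ (sorted_noMiddle hsor)
    intro a b h x hx hcon
    have : σ x ∈ LF := (Finset.mem_sort _).2 (Finset.mem_image_of_mem σ hx)
    exact h (σ x) this (by simpa using hcon)

end GPNG

namespace GPNG
open GPNAux GPNAux2 Finset
open scoped Classical
set_option linter.unusedSectionVars false

variable {V : Type*} [DecidableEq V] (G : SimpleGraph V) {N : ℕ} (σ : V ≃ Fin N)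

theorem OE_ne {s : Finset V} {a b : V} (h : OE G σ s a b) : a ≠ b :=
  fun e => absurd (e ▸ h.2.2.2) (lt_irrefl _)

theorem pair_ne_single {a b w : V} (hab : a ≠ b) : ({a, b} : Finset V) ≠ {w} := by
  intro h
  have ha : a ∈ ({w} : Finset V) := h ▸ Finset.mem_insert_self a {b}
  have hb : b ∈ ({w} : Finset V) := h ▸ (by simp)
  simp only [Finset.mem_singleton] at ha hb
  exact hab (ha.trans hb.symm)

def BSpec (s : Finset V) (C : List (V × V)) (T : V → V → ℕ) : Prop :=
  (∀ g ∈ C, g.1 ≠ g.2 ∧ g.1 ∈ s ∧ g.2 ∈ s) ∧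
  runCircuit C = pureSt ∧
  (∀ a b, OE G σ s a b → ∃ w, runCircuit (C.take (T a b)) w = {a, b}) ∧
  (∀ a b c, OE G σ s a b → OE G σ s b c → T a b < T b c)

theorem TBounds {s : Finset V} {C : List (V × V)} {T : V → V → ℕ}
    (hB : BSpec G σ s C T) {a b : V} (h : OE G σ s a b) :
    1 ≤ T a b ∧ T a b ≤ C.length := by
  obtain ⟨w, hw⟩ := hB.2.2.1 a b h
  constructor
  · by_contra hc
    have h0 : T a b = 0 := by omega
    rw [h0] at hw
    have : runCircuit (C.take 0) w = {w} := rfl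
    rw [this] at hw
    exact pair_ne_single (OE_ne G σ h) hw.symm
  · by_contra hc
    rw [List.take_of_length_le (by omega), hB.2.1] at hw
    exact pair_ne_single (OE_ne G σ h) hw.symm

theorem disp_wire_mem {s : Finset V} {C : List (V × V)}
    (hg : ∀ g ∈ C, g.2 ∈ s) {t : ℕ} {w a b : V} (hab : a ≠ b)
    (hw : runCircuit (C.take t) w = {a, b}) : w ∈ s := by
  by_contra hws
  have hws2 : ∀ g ∈ C.take t, g.2 ≠ w := by
    intro g hgmem e
    exact hws (e ▸ hg g (List.mem_of_mem_take hgmem))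
  have heq : runCircuit (C.take t) w = {w} := by
    rw [runCircuit_eq_s4]
    exact applyCircuit_ne hws2 pureSt
  rw [heq] at hw
  exact pair_ne_single hab hw.symm

theorem getLastD_mem {α : Type*} : ∀ (l : List α) (a : α), l.getLastD a ∈ a :: l := by
  intro l
  induction l with
  | nil => intro a; simp
  | cons b l ih =>
    intro a
    rw [List.getLastD_cons]
    rcases List.mem_cons.1 (ih b) with h | h
    · rw [h]; exact List.mem_cons_of_mem _ List.mem_cons_self
    · exact List.mem_cons_of_mem _ (List.mem_cons_of_mem _ h)

section MkItems

variable (v₁ : V) (C : List (V × V)) (T : V → V → ℕ) (wire : V → V → V) (R : V → V → Prop)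

def mkItems : List V → List (ℕ × V × V)
  | a :: b :: rest => (T a b, wire a b, b) :: mkItems (b :: rest)
  | _ => []

variable {v₁ C T wire R}
variable (hdisp : ∀ a b, R a b → runCircuit (C.take (T a b)) (wire a b) = {a, b})
  (hwne : ∀ a b, R a b → wire a b ≠ v₁)
  (hne : ∀ a b, R a b → a ≠ b ∧ a ≠ v₁ ∧ b ≠ v₁)
  (hmono : ∀ a b c, R a b → R b c → T a b < T b c)
  (hTle : ∀ a b, R a b → T a b ≤ C.length)

include hdisp hwne hne in
theorem linked_mkItems : ∀ (l : List V) (a : V), (a :: l).Chain' R →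
    linked v₁ C a (mkItems T wire (a :: l)) := by
  intro l
  induction l with
  | nil => intro a _; trivial
  | cons b l' ih =>
    intro a hch
    obtain ⟨hR, hch'⟩ := List.isChain_cons_cons.1 hch
    exact ⟨hdisp _ _ hR, hwne _ _ hR, (hne _ _ hR).1, (hne _ _ hR).2.1,
      (hne _ _ hR).2.2, ih b hch'⟩

include hmono hTle in
theorem timesOK_mkItems : ∀ (l : List V) (a : V) (q : ℕ), (a :: l).Chain' R →
    (∀ b l', l = b :: l' → q ≤ T a b) → q ≤ C.length →
    timesOK C q (mkItems T wire (a :: l)) := by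
  intro l
  induction l with
  | nil => intro a q _ _ h; exact h
  | cons b l' ih =>
    intro a q hch hq hqle
    obtain ⟨hR, hch'⟩ := List.isChain_cons_cons.1 hch
    refine ⟨hq b l' rfl, ?_⟩
    refine ih b (T a b) hch' ?_ (hTle _ _ hR)
    intro c l'' he
    subst he
    exact le_of_lt (hmono a b c hR (List.isChain_cons_cons.1 hch').1)

theorem lastTok_mkItems : ∀ (l : List V) (a : V),
    lastTok a (mkItems T wire (a :: l)) = l.getLastD a := by
  intro l
  induction l with
  | nil => intro a; rfl
  | cons b l' ih =>
    intro a
    rw [List.getLastD_cons, ← ih b]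
    rfl

theorem length_mkItems : ∀ (l : List V) (a : V), (mkItems T wire (a :: l)).length = l.length := by
  intro l
  induction l with
  | nil => intro a; rfl
  | cons b l' ih => intro a; simp only [mkItems, List.length_cons, ih b]

theorem wires_mkItems : ∀ (l : List V) (a : V), (a :: l).Chain' R →
    ∀ i ∈ mkItems T wire (a :: l), ∃ a' b', R a' b' ∧ i = (T a' b', wire a' b', b') := by
  intro l
  induction l with
  | nil => intro a _ i hi; simp [mkItems] at hi
  | cons b l' ih =>
    intro a hch i hi
    obtain ⟨hR, hch'⟩ := List.isChain_cons_cons.1 hch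
    rcases List.mem_cons.1 hi with h | h
    · exact ⟨a, b, hR, h⟩
    · exact ih b hch' i h


theorem coverage_mkItems : ∀ (l : List V) (a : V), (a :: l).Chain' R →
    ∀ z ∈ l, ∃ (r : ℕ) (prev : V), 1 ≤ r ∧ r ≤ (mkItems T wire (a :: l)).length ∧
      lastTok a ((mkItems T wire (a :: l)).take r) = z ∧
      lastTime 0 ((mkItems T wire (a :: l)).take r) = T prev z ∧ R prev z := by
  intro l
  induction l with
  | nil => intro a _ z hz; simp at hz
  | cons b l' ih =>
    intro a hch z hz
    obtain ⟨hR, hch'⟩ := List.isChain_cons_cons.1 hch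
    rcases List.mem_cons.1 hz with h | h
    · subst h
      refine ⟨1, a, le_refl _, ?_, ?_, ?_, hR⟩
      · simp only [mkItems, List.length_cons]; omega
      · rfl
      · rfl
    · obtain ⟨r, prev, h1, h2, h3, h4, h5⟩ := ih b hch' z h
      refine ⟨r + 1, prev, by omega, ?_, ?_, ?_, h5⟩
      · simp only [mkItems, List.length_cons]; omega
      · show lastTok b ((mkItems T wire (b :: l')).take r) = z
        exact h3
      · show lastTime (T a b) ((mkItems T wire (b :: l')).take r) = T prev z
        rw [← h4]
        obtain ⟨j, rest', hjr⟩ : ∃ j rest', (mkItems T wire (b :: l')).take r = j :: rest' := by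
          have hlen : 0 < ((mkItems T wire (b :: l')).take r).length := by
            rw [List.length_take]
            have : 0 < (mkItems T wire (b :: l')).length := by omega
            omega
          exact List.exists_cons_of_ne_nil (List.ne_nil_of_length_pos hlen)
        rw [hjr]
        obtain ⟨t', x', b'⟩ := j
        rfl

end MkItems

end GPNG

namespace GPNG
open GPNAux GPNAux2 Finset
open scoped Classical
set_option linter.unusedSectionVars false
set_option maxHeartbeats 1000000

variable {V : Type*} [DecidableEq V] (G : SimpleGraph V) {N : ℕ} (σ : V ≃ Fin N)

theorem block {K : Finset V} {C : List (V × V)} {T : V → V → ℕ} {v₁ : V}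
    (hB : BSpec G σ K C T) (hv₁ : v₁ ∉ K) (hσK : ∀ z ∈ K, σ v₁ < σ z)
    (a₀ : V) (l' : List V)
    (hlmem : ∀ z, z ∈ (a₀ :: l') ↔ (z ∈ K ∧ G.Adj v₁ z))
    (hchain : (a₀ :: l').Chain' (OE G σ K)) :
    ∃ (W : List (V × V)) (T' : V → V → ℕ), BSpec G σ (insert v₁ K) W T' ∧
      W.length = C.length + (a₀ :: l').length + 1 := by
  have hgC : ∀ g ∈ C, g.1 ≠ g.2 ∧ g.1 ∈ K ∧ g.2 ∈ K := hB.1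
  have hCv : ∀ g ∈ C, g.1 ≠ v₁ ∧ g.2 ≠ v₁ := by
    intro g hg
    constructor
    · intro e; exact hv₁ (e ▸ (hgC g hg).2.1)
    · intro e; exact hv₁ (e ▸ (hgC g hg).2.2)
  set R := OE G σ K with hR
  set wire : V → V → V := fun a b =>
    if h : ∃ w, runCircuit (C.take (T a b)) w = {a, b} then h.choose else v₁ with hwire
  have hdisp : ∀ a b, R a b → runCircuit (C.take (T a b)) (wire a b) = {a, b} := by
    intro a b hr
    have h := hB.2.2.1 a b hr
    simp only [hwire, dif_pos h]
    exact h.choose_spec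
  have hwmem : ∀ a b, R a b → wire a b ∈ K := by
    intro a b hr
    exact disp_wire_mem (fun g hg => (hgC g hg).2.2) (OE_ne G σ hr) (hdisp a b hr)
  have hwne : ∀ a b, R a b → wire a b ≠ v₁ := by
    intro a b hr e; exact hv₁ (e ▸ hwmem a b hr)
  have hneK : ∀ z ∈ K, z ≠ v₁ := fun z hz e => hv₁ (e ▸ hz)
  have hneOE : ∀ a b, R a b → a ≠ b ∧ a ≠ v₁ ∧ b ≠ v₁ := by
    intro a b hr
    exact ⟨OE_ne G σ hr, hneK a hr.2.1, hneK b hr.2.2.1⟩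
  have hmono : ∀ a b c, R a b → R b c → T a b < T b c := hB.2.2.2
  have hTle : ∀ a b, R a b → T a b ≤ C.length := fun a b hr => (TBounds G σ hB hr).2
  have hT1 : ∀ a b, R a b → 1 ≤ T a b := fun a b hr => (TBounds G σ hB hr).1
  set items := mkItems T wire (a₀ :: l') with hitems
  have hTOK : timesOK C 0 items := timesOK_mkItems hmono hTle l' a₀ 0 hchain
    (fun _ _ _ => Nat.zero_le _) (Nat.zero_le _)
  have hLK : linked v₁ C a₀ items := linked_mkItems hdisp hwne hneOE l' a₀ hchain
  have ha₀ : a₀ ∈ K ∧ G.Adj v₁ a₀ := (hlmem a₀).1 (by simp)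
  have hu₁ : a₀ ≠ v₁ := hneK a₀ ha₀.1
  set W := weaveBlock v₁ C a₀ items with hW
  have hfinal : runCircuit W = pureSt := weaveBlock_run hCv hTOK hLK hu₁ hB.2.1
  have hlen : W.length = C.length + (a₀ :: l').length + 1 := by
    rw [hW, weaveBlock_length v₁ C a₀ hTOK, hitems, length_mkItems]
    simp only [List.length_cons]
    omega
  have htokEx : ∀ z ∈ (a₀ :: l'), ∃ q, runCircuit (W.take q) v₁ = {v₁, z} ∧
      ∀ c, R z c → q < edgePos items (T z c) := by
    intro z hz
    rcases List.mem_cons.1 hz with h | h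
    · subst h
      refine ⟨tokPos items 0, ?_, ?_⟩
      · have := weaveBlock_tok (items := items) (u₁ := z) hCv hTOK hLK hu₁
          (r := 0) (Nat.zero_le _)
        exact this
      · intro c hc
        have h1 := hT1 z c hc
        have htp : tokPos items 0 = 1 := rfl
        simp only [htp, edgePos]
        omega
    · obtain ⟨r, prev, hr1, hr2, hr3, hr4, hr5⟩ :=
        coverage_mkItems (T := T) (wire := wire) l' a₀ hchain z h
      refine ⟨tokPos items r, ?_, ?_⟩
      · have := weaveBlock_tok (items := items) (u₁ := a₀) hCv hTOK hLK hu₁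
          (r := r) hr2
        rw [this, hr3]
      · intro c hc
        exact tokPos_lt_edgePos C hTOK hr1 (by rw [hitems]; exact hr2)
          (by rw [hitems, hr4]; exact hmono prev z c hr5 hc)
  set T' : V → V → ℕ := fun a b =>
    if a = v₁ then (if hz : b ∈ (a₀ :: l') then (htokEx b hz).choose else 0)
    else edgePos items (T a b) with hT'
  have hbmem : ∀ {a b : V}, OE G σ (insert v₁ K) a b → a ≠ v₁ → a ∈ K ∧ b ∈ K ∧ R a b := by
    intro a b hoe hav
    have haK : a ∈ K := by
      rcases Finset.mem_insert.1 hoe.2.1 with h | h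
      · exact absurd h hav
      · exact h
    have hbK : b ∈ K := by
      rcases Finset.mem_insert.1 hoe.2.2.1 with h | h
      · exact absurd (h ▸ hoe.2.2.2) (by simp [not_lt, le_of_lt (hσK a haK)])
      · exact h
    exact ⟨haK, hbK, hoe.1, haK, hbK, hoe.2.2.2⟩
  refine ⟨W, T', ⟨?_, hfinal, ?_, ?_⟩, hlen⟩
  · -- gates
    intro g hg
    rcases weaveBlock_gates v₁ C hg with h | h | h | h
    · exact ⟨(hgC g h).1, Finset.mem_insert_of_mem (hgC g h).2.1,
        Finset.mem_insert_of_mem (hgC g h).2.2⟩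
    · rw [h]
      exact ⟨hu₁, Finset.mem_insert_of_mem ha₀.1, Finset.mem_insert_self _ _⟩
    · rw [h]
      have hmem : lastTok a₀ items ∈ (a₀ :: l') := by
        rw [hitems, lastTok_mkItems]
        exact getLastD_mem l' a₀
      have : lastTok a₀ items ∈ K := ((hlmem _).1 hmem).1
      exact ⟨hneK _ this, Finset.mem_insert_of_mem this, Finset.mem_insert_self _ _⟩
    · obtain ⟨i, hi, rfl⟩ := h
      obtain ⟨a', b', hr', he⟩ := wires_mkItems l' a₀ hchain i hi
      rw [he]
      have : wire a' b' ∈ K := hwmem a' b' hr'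
      exact ⟨hwne a' b' hr', Finset.mem_insert_of_mem this, Finset.mem_insert_self _ _⟩
  · -- displays
    intro a b hoe
    by_cases hav : a = v₁
    · subst hav
      have hbne : b ≠ a := fun e => G.loopless.irrefl a (e ▸ hoe.1)
      have hbK : b ∈ K := by
        rcases Finset.mem_insert.1 hoe.2.2.1 with h | h
        · exact absurd h hbne
        · exact h
      have hbl : b ∈ (a₀ :: l') := (hlmem b).2 ⟨hbK, hoe.1⟩
      refine ⟨a, ?_⟩
      have := (htokEx b hbl).choose_spec.1
      simp only [hT', if_pos rfl, dif_pos hbl]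
      exact this
    · obtain ⟨haK, hbK, hrab⟩ := hbmem hoe hav
      refine ⟨wire a b, ?_⟩
      have heq := weaveBlock_edge (items := items) (u₁ := a₀) hCv hTOK hLK hu₁
        (hTle a b hrab) (hwne a b hrab)
      simp only [hT', if_neg hav]
      rw [heq]
      exact hdisp a b hrab
  · -- mono
    intro a b c hab hbc
    have hbv : b ≠ v₁ := by
      intro e
      subst e
      rcases Finset.mem_insert.1 hab.2.1 with h | h
      · exact absurd (h ▸ hab.2.2.2) (lt_irrefl _)
      · exact absurd hab.2.2.2 (by simp [not_lt, le_of_lt (hσK a h)])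
    obtain ⟨hbK, hcK, hrbc⟩ := hbmem hbc hbv
    by_cases hav : a = v₁
    · subst hav
      have hbl : b ∈ (a₀ :: l') := (hlmem b).2 ⟨hbK, hab.1⟩
      have := (htokEx b hbl).choose_spec.2 c hrbc
      simp only [hT', if_pos rfl, dif_pos hbl, if_neg hbv]
      exact this
    · obtain ⟨haK, hbK', hrab⟩ := hbmem hab hav
      simp only [hT', if_neg hav, if_neg hbv]
      exact edgePos_mono (hmono a b c hrab hrbc)

end GPNG

namespace GPNG
open GPNAux GPNAux2 Finset
open scoped Classical
set_option linter.unusedSectionVars false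
set_option maxHeartbeats 1000000

variable {V : Type*} [DecidableEq V] [Fintype V] (G : SimpleGraph V) {N : ℕ} (σ : V ≃ Fin N)

noncomputable def mE (s : Finset V) : ℕ :=
  (Finset.univ.filter (fun p : V × V => OE G σ s p.1 p.2)).card

noncomputable def dE (v₁ : V) (s : Finset V) : ℕ := (s.filter (fun z => G.Adj v₁ z)).card

theorem mE_empty : mE G σ ∅ = 0 := by
  rw [mE, Finset.card_eq_zero]
  ext p
  simp only [mem_filter, Finset.notMem_empty, iff_false, not_and]
  intro _ h
  exact absurd h.2.1 (Finset.notMem_empty _)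

theorem mE_split {t K : Finset V} (hKt : K ⊆ t)
    (hclosed : ∀ z ∈ K, ∀ y ∈ t, G.Adj z y → y ∈ K) :
    mE G σ t = mE G σ K + mE G σ (t \ K) := by
  rw [mE, mE, mE, ← Finset.card_union_of_disjoint, ]
  · congr 1
    ext p
    simp only [mem_filter, mem_union, mem_sdiff, Finset.mem_univ, true_and]
    constructor
    · intro h
      by_cases h1 : p.1 ∈ K
      · exact Or.inl ⟨h.1, h1, hclosed p.1 h1 p.2 h.2.2.1 h.1, h.2.2.2⟩
      · have h2 : p.2 ∉ K := fun h2 =>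
          h1 (hclosed p.2 h2 p.1 h.2.1 h.1.symm)
        exact Or.inr ⟨h.1, mem_sdiff.2 ⟨h.2.1, h1⟩, mem_sdiff.2 ⟨h.2.2.1, h2⟩, h.2.2.2⟩
    · intro h
      rcases h with h | h
      · exact ⟨h.1, hKt h.2.1, hKt h.2.2.1, h.2.2.2⟩
      · exact ⟨h.1, (mem_sdiff.1 h.2.1).1, (mem_sdiff.1 h.2.2.1).1, h.2.2.2⟩
  · rw [Finset.disjoint_left]
    intro p hp hp'
    exact (mem_sdiff.1 (mem_filter.1 hp').2.2.1).2 (mem_filter.1 hp).2.2.1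

theorem dE_split {t K : Finset V} (v₁ : V) (hKt : K ⊆ t) :
    dE G v₁ t = dE G v₁ K + dE G v₁ (t \ K) := by
  rw [dE, dE, dE, ← Finset.card_union_of_disjoint]
  · congr 1
    ext z
    simp only [mem_filter, mem_union, mem_sdiff]
    constructor
    · intro h
      by_cases hz : z ∈ K
      · exact Or.inl ⟨hz, h.2⟩
      · exact Or.inr ⟨⟨h.1, hz⟩, h.2⟩
    · intro h
      rcases h with h | h
      · exact ⟨hKt h.1, h.2⟩
      · exact ⟨h.1.1, h.2⟩
  · rw [Finset.disjoint_left]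
    intro z hz hz'
    exact (mem_sdiff.1 (mem_filter.1 hz').1).2 (mem_filter.1 hz).1

theorem mE_insert_min {s' : Finset V} {v₁ : V} (hv₁ : v₁ ∉ s')
    (hσ : ∀ z ∈ s', σ v₁ < σ z) :
    mE G σ (insert v₁ s') = mE G σ s' + dE G v₁ s' := by
  have himg : (s'.filter (fun z => G.Adj v₁ z)).image (fun z => (v₁, z))
        = Finset.univ.filter (fun p : V × V => OE G σ (insert v₁ s') p.1 p.2 ∧ p.1 = v₁) := by
      ext p
      simp only [Finset.mem_image, mem_filter, Finset.mem_univ, true_and]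
      constructor
      · rintro ⟨z, hz, rfl⟩
        obtain ⟨hzs, hadj⟩ := hz
        exact ⟨⟨hadj, Finset.mem_insert_self _ _, Finset.mem_insert_of_mem hzs, hσ z hzs⟩, rfl⟩
      · rintro ⟨⟨hadj, h1, h2, hlt⟩, he⟩
        refine ⟨p.2, ⟨?_, he ▸ hadj⟩, by rw [← he]⟩
        rcases Finset.mem_insert.1 h2 with h | h
        · exact absurd (he ▸ h ▸ hlt) (lt_irrefl _)
        · exact h
  have hcard : (s'.filter (fun z => G.Adj v₁ z)).card
      = (Finset.univ.filter (fun p : V × V => OE G σ (insert v₁ s') p.1 p.2 ∧ p.1 = v₁)).card := by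
    rw [← himg, Finset.card_image_of_injective _ (fun a b h => by injection h)]
  have hdisj : Disjoint (Finset.univ.filter (fun p : V × V => OE G σ s' p.1 p.2))
      (Finset.univ.filter (fun p : V × V => OE G σ (insert v₁ s') p.1 p.2 ∧ p.1 = v₁)) := by
    rw [Finset.disjoint_left]
    intro p hp hp'
    have h1 := (mem_filter.1 hp).2.2.1
    have h2 := (mem_filter.1 hp').2.2
    exact hv₁ (h2 ▸ h1)
  rw [mE, mE, dE, hcard, ← Finset.card_union_of_disjoint hdisj]
  congr 1
  ext p
  simp only [mem_filter, mem_union, Finset.mem_univ, true_and]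
  constructor
  · intro h
    by_cases h1 : p.1 = v₁
    · exact Or.inr ⟨h, h1⟩
    · have hp1 : p.1 ∈ s' := by
        rcases Finset.mem_insert.1 h.2.1 with h' | h'
        · exact absurd h' h1
        · exact h'
      have hp2 : p.2 ∈ s' := by
        rcases Finset.mem_insert.1 h.2.2.1 with h' | h'
        · exact absurd (h' ▸ h.2.2.2) (by simp [not_lt, le_of_lt (hσ p.1 hp1)])
        · exact h'
      exact Or.inl ⟨h.1, hp1, hp2, h.2.2.2⟩
  · intro h
    rcases h with h | h
    · exact ⟨h.1, Finset.mem_insert_of_mem h.2.1, Finset.mem_insert_of_mem h.2.2.1, h.2.2.2⟩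
    · exact h.1

end GPNG

namespace GPNG
open GPNAux GPNAux2 Finset
open scoped Classical
set_option linter.unusedSectionVars false
set_option maxHeartbeats 1000000

variable {V : Type*} [DecidableEq V] [Fintype V] (G : SimpleGraph V) {N : ℕ} (σ : V ≃ Fin N)

theorem peel_base (v₁ : V) : ∃ C T, BSpec G σ (insert v₁ (∅ : Finset V)) C T ∧
    C.length = mE G σ ∅ + (∅ : Finset V).card + dE G v₁ ∅ := by
  refine ⟨[], fun _ _ => 0, ⟨?_, rfl, ?_, ?_⟩, ?_⟩
  · intro g hg; simp at hg
  · intro a b hoe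
    exfalso
    have ha := mem_insert.1 hoe.2.1
    have hb := mem_insert.1 hoe.2.2.1
    simp only [Finset.notMem_empty, or_false] at ha hb
    have := hoe.1
    rw [ha, hb] at this
    exact G.loopless.irrefl v₁ this
  · intro a b c hab _
    exfalso
    have ha := mem_insert.1 hab.2.1
    have hb := mem_insert.1 hab.2.2.1
    simp only [Finset.notMem_empty, or_false] at ha hb
    have := hab.1
    rw [ha, hb] at this
    exact G.loopless.irrefl v₁ this
  · simp [mE_empty, dE]

theorem peel (v₁ : V) (s' : Finset V) (hv₁ : v₁ ∉ s') (hσs : ∀ z ∈ s', σ v₁ < σ z)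
    (hblocks : ∀ K, (∃ x ∈ s', K = comp G s' x) →
      ∃ W TW, BSpec G σ (insert v₁ K) W TW ∧
        W.length = mE G σ K + K.card + dE G v₁ K) :
    ∀ (n : ℕ) (t : Finset V), t.card ≤ n → t ⊆ s' → (∀ y ∈ t, comp G s' y ⊆ t) →
    ∃ C T, BSpec G σ (insert v₁ t) C T ∧
      C.length = mE G σ t + t.card + dE G v₁ t := by
  intro n
  induction n with
  | zero =>
    intro t ht _ _
    have : t = ∅ := card_eq_zero.1 (Nat.le_antisymm ht (Nat.zero_le _))
    subst this
    exact peel_base G σ v₁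
  | succ n ih =>
    intro t hcard hsub hUC
    by_cases hte : t = ∅
    · subst hte; exact peel_base G σ v₁
    · obtain ⟨x, hx⟩ := nonempty_iff_ne_empty.2 hte
      have hxs' : x ∈ s' := hsub hx
      set K := comp G s' x with hKdef
      have hKt : K ⊆ t := hUC x hx
      have hxK : x ∈ K := mem_comp_self G hxs'
      obtain ⟨W, TW, hWspec, hWlen⟩ := hblocks K ⟨x, hxs', rfl⟩
      set t' := t \ K with ht'def
      have ht'sub : t' ⊆ s' := (sdiff_subset).trans hsub
      have hclosedK : ∀ z ∈ K, ∀ y, y ∈ s' → G.Adj z y → y ∈ K :=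
        fun z hz y hy hadj => adj_mem_comp G hz hadj hy
      have hUC' : ∀ y ∈ t', comp G s' y ⊆ t' := by
        intro y hy z hz
        obtain ⟨hyt, hyK⟩ := mem_sdiff.1 hy
        have hzt : z ∈ t := hUC y hyt hz
        refine mem_sdiff.2 ⟨hzt, ?_⟩
        intro hzK
        have h1 : comp G s' z = comp G s' y := comp_eq_of_mem G hz
        have h2 : comp G s' z = comp G s' x := comp_eq_of_mem G hzK
        have h3 : y ∈ comp G s' y := mem_comp_self G (hsub hyt)
        rw [← h1, h2] at h3
        exact hyK h3
      have hKcard : 1 ≤ K.card := card_pos.2 ⟨x, hxK⟩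
      have ht'card : t'.card ≤ n := by
        have h1 : (t \ K).card = t.card - K.card := card_sdiff_of_subset hKt
        have h2 := card_le_card hKt
        rw [← ht'def] at h1
        omega
      obtain ⟨C', T', hC'spec, hC'len⟩ := ih t' ht'card ht'sub hUC'
      have hfinal : runCircuit (W ++ C') = pureSt := by
        rw [runCircuit_eq_s4, applyCircuit_append, ← runCircuit_eq_s4, hWspec.2.1, ← runCircuit_eq_s4,
          hC'spec.2.1]
      have hedge_loc : ∀ a b, OE G σ (insert v₁ t) a b →
          (OE G σ (insert v₁ K) a b ∧ b ∈ K) ∨ (OE G σ (insert v₁ t') a b ∧ b ∉ K) := by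
        intro a b h
        have hbne : b ≠ v₁ := by
          intro e; subst e
          rcases mem_insert.1 h.2.1 with h' | h'
          · exact absurd (h' ▸ h.2.2.2) (lt_irrefl _)
          · exact absurd h.2.2.2 (not_lt.2 (le_of_lt (hσs a (hsub h'))))
        have hbt : b ∈ t := by
          rcases mem_insert.1 h.2.2.1 with h' | h'
          · exact absurd h' hbne
          · exact h'
        by_cases hbK : b ∈ K
        · left
          refine ⟨⟨h.1, ?_, mem_insert_of_mem hbK, h.2.2.2⟩, hbK⟩
          rcases mem_insert.1 h.2.1 with h' | h'
          · exact h' ▸ mem_insert_self _ _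
          · exact mem_insert_of_mem (hclosedK b hbK a (hsub h') h.1.symm)
        · right
          refine ⟨⟨h.1, ?_, mem_insert_of_mem (mem_sdiff.2 ⟨hbt, hbK⟩), h.2.2.2⟩, hbK⟩
          rcases mem_insert.1 h.2.1 with h' | h'
          · exact h' ▸ mem_insert_self _ _
          · have haK : a ∉ K := fun haK => hbK (hclosedK a haK b (hsub hbt) h.1)
            exact mem_insert_of_mem (mem_sdiff.2 ⟨h', haK⟩)
      refine ⟨W ++ C', fun a b => if b ∈ K then TW a b else W.length + T' a b,
        ⟨?_, hfinal, ?_, ?_⟩, ?_⟩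
      · intro g hg
        rcases List.mem_append.1 hg with h | h
        · obtain ⟨h1, h2, h3⟩ := hWspec.1 g h
          exact ⟨h1, insert_subset_insert _ hKt h2, insert_subset_insert _ hKt h3⟩
        · obtain ⟨h1, h2, h3⟩ := hC'spec.1 g h
          exact ⟨h1, insert_subset_insert _ sdiff_subset h2,
            insert_subset_insert _ sdiff_subset h3⟩
      · intro a b hoe
        rcases hedge_loc a b hoe with ⟨hK, hbK⟩ | ⟨ht', hbK⟩
        · obtain ⟨w, hw⟩ := hWspec.2.2.1 a b hK
          refine ⟨w, ?_⟩
          dsimp only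
          rw [if_pos hbK, List.take_append_of_le_length (TBounds G σ hWspec hK).2]
          exact hw
        · obtain ⟨w, hw⟩ := hC'spec.2.2.1 a b ht'
          refine ⟨w, ?_⟩
          dsimp only
          rw [if_neg hbK, List.take_length_add_append, runCircuit_eq_s4, applyCircuit_append,
            ← runCircuit_eq_s4, hWspec.2.1, ← runCircuit_eq_s4]
          exact hw
      · intro a b c hab hbc
        have hbv : b ≠ v₁ := by
          intro e; subst e
          rcases mem_insert.1 hab.2.1 with h' | h'
          · exact absurd (h' ▸ hab.2.2.2) (lt_irrefl _)
          · exact absurd hab.2.2.2 (not_lt.2 (le_of_lt (hσs a (hsub h'))))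
        rcases hedge_loc b c hbc with ⟨hKbc, hcK⟩ | ⟨ht'bc, hcK⟩
        · have hbK : b ∈ K := by
            rcases mem_insert.1 hKbc.2.1 with h' | h'
            · exact absurd h' hbv
            · exact h'
          rcases hedge_loc a b hab with ⟨hKab, hbK'⟩ | ⟨ht'ab, hbK'⟩
          · dsimp only
            rw [if_pos hbK', if_pos hcK]
            exact hWspec.2.2.2 a b c hKab hKbc
          · exact absurd hbK hbK'
        · have hbt' : b ∈ t' := by
            rcases mem_insert.1 ht'bc.2.1 with h' | h'
            · exact absurd h' hbv
            · exact h'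
          have hbK : b ∉ K := (mem_sdiff.1 hbt').2
          rcases hedge_loc a b hab with ⟨hKab, hbK'⟩ | ⟨ht'ab, hbK'⟩
          · exact absurd hbK' hbK
          · dsimp only
            rw [if_neg hbK, if_neg hcK]
            have := hC'spec.2.2.2 a b c ht'ab ht'bc
            omega
      · rw [List.length_append, hWlen, hC'len]
        have hm : mE G σ t = mE G σ K + mE G σ t' := by
          have h := mE_split G σ hKt (fun z hz y hy hadj => hclosedK z hz y (hsub hy) hadj)
          rw [← ht'def] at h; exact h
        have hd : dE G v₁ t = dE G v₁ K + dE G v₁ t' := by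
          have h := dE_split G (t := t) (K := K) v₁ hKt
          rw [← ht'def] at h; exact h
        have hc1 : t'.card = t.card - K.card := by
          have h := card_sdiff_of_subset hKt
          rw [← ht'def] at h; exact h
        have hc2 := card_le_card hKt
        omega

end GPNG

namespace GPNG
open GPNAux GPNAux2 Finset
open scoped Classical
set_option linter.unusedSectionVars false
set_option maxHeartbeats 1000000

variable {V : Type*} [DecidableEq V] [Fintype V] (G : SimpleGraph V) {N : ℕ} (σ : V ≃ Fin N)

theorem chain'_imp_mem {α : Type*} {R S : α → α → Prop} : ∀ (l : List α),
    (∀ a b, a ∈ l → b ∈ l → R a b → S a b) → l.Chain' R → l.Chain' S := by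
  intro l
  induction l with
  | nil => intro _ _; exact List.IsChain.nil
  | cons a l ih =>
    cases l with
    | nil => intro _ _; exact List.IsChain.singleton _
    | cons b l' =>
      intro h hch
      unfold List.Chain' at hch ⊢
      rw [List.isChain_cons_cons] at hch ⊢
      exact ⟨h a b (by simp) (by simp) hch.1,
        ih (fun x y hx hy => h x y (by simp [hx]) (by simp [hy])) hch.2⟩

theorem touch {s : Finset V} (v₁ : V) :
    ∀ (x y : V), (Hs G s).Walk x y → y = v₁ → x ∈ s.erase v₁ →
    ∃ z, G.Adj v₁ z ∧ z ∈ comp G (s.erase v₁) x := by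
  intro x y w
  induction w with
  | nil =>
    intro he hx
    subst he
    exact absurd rfl (Finset.mem_erase.1 hx).1
  | @cons a c _ hadj p ih =>
    intro he hx
    by_cases hc : c = v₁
    · subst hc
      exact ⟨a, hadj.1.symm, mem_comp_self G hx⟩
    · have hcer : c ∈ s.erase v₁ := mem_erase.2 ⟨hc, hadj.2.2⟩
      obtain ⟨z, hz1, hz2⟩ := ih he hcer
      have hcc : c ∈ comp G (s.erase v₁) a :=
        adj_mem_comp G (mem_comp_self G hx) hadj.1 hcer
      rw [comp_eq_of_mem G hcc] at hz2
      exact ⟨z, hz1, hz2⟩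

theorem main : ∀ (n : ℕ) (s : Finset V), s.card ≤ n → s.Nonempty →
    (∀ a ∈ s, ∀ b ∈ s, reach G s a b) → Good G σ s →
    ∃ C T, BSpec G σ s C T ∧ C.length + 1 = mE G σ s + s.card := by
  intro n
  induction n with
  | zero =>
    intro s hc hne _ _
    exact absurd (card_pos.2 hne) (by omega)
  | succ n ih =>
    intro s hcard hne hconn hGood
    obtain ⟨v₁, hv₁s, hmin⟩ := Finset.exists_min_image s σ hne
    set s' := s.erase v₁ with hs'def
    have hv₁ : v₁ ∉ s' := fun h => (mem_erase.1 h).1 rfl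
    have hσs : ∀ z ∈ s', σ v₁ < σ z := by
      intro z hz
      obtain ⟨hzne, hzs⟩ := mem_erase.1 hz
      exact lt_of_le_of_ne (hmin z hzs) (fun e => hzne (σ.injective e).symm)
    have hblocks : ∀ K, (∃ x ∈ s', K = comp G s' x) →
        ∃ W TW, BSpec G σ (insert v₁ K) W TW ∧
          W.length = mE G σ K + K.card + dE G v₁ K := by
      rintro K ⟨x, hxs', rfl⟩
      have hKsub' : comp G s' x ⊆ s' := comp_subset G
      have hKsub : comp G s' x ⊆ s := hKsub'.trans (erase_subset _ _)
      have hxK : x ∈ comp G s' x := mem_comp_self G hxs'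
      have hconnK : ∀ a ∈ comp G s' x, ∀ b ∈ comp G s' x, reach G (comp G s' x) a b := by
        intro a ha b hb
        have h1 : reach G s' a b := reach_trans G
          (reach_symm G (reach_of_mem_comp G ha)) (reach_of_mem_comp G hb)
        exact reach_in_comp G ha h1
      have hGoodK : Good G σ (comp G s' x) := by
        refine Good.mono G σ hGood hKsub ?_
        intro a y ha hy hadj hlt
        have hyne : y ≠ v₁ := by
          intro e; subst e
          exact absurd hlt (not_lt.2 (le_of_lt (hσs a (hKsub' ha))))
        have hys' : y ∈ s' := mem_erase.2 ⟨hyne, hy⟩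
        exact adj_mem_comp G ha hadj hys'
      have hscard : 1 ≤ s.card := card_pos.2 hne
      have hKcard : (comp G s' x).card ≤ n := by
        have h1 : s'.card = s.card - 1 := card_erase_of_mem hv₁s
        have h2 := card_le_card hKsub'
        omega
      obtain ⟨CK, TK, hKspec, hKlen⟩ := ih (comp G s' x) hKcard ⟨x, hxK⟩ hconnK hGoodK
      set U := (comp G s' x).filter (fun z => G.Adj v₁ z) with hU
      obtain ⟨l, hlmem, hllen, hlsort, hlnomid⟩ := chainList σ U
      have hUne : U.Nonempty := by
        obtain ⟨w⟩ := hconn x (hKsub hxK) v₁ hv₁s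
        obtain ⟨z, hz1, hz2⟩ := touch G v₁ x v₁ w rfl hxs'
        exact ⟨z, mem_filter.2 ⟨hz2, hz1⟩⟩
      obtain ⟨a₀, l', rfl⟩ : ∃ a₀ l', l = a₀ :: l' := by
        cases l with
        | nil =>
          exfalso
          obtain ⟨z, hz⟩ := hUne
          simpa using (hlmem z).2 hz
        | cons a₀ l' => exact ⟨a₀, l', rfl⟩
      have hmemU : ∀ z, z ∈ (a₀ :: l') ↔ (z ∈ comp G s' x ∧ G.Adj v₁ z) := by
        intro z
        rw [hlmem z, hU, mem_filter]
      have hchainOE : (a₀ :: l').Chain' (OE G σ (comp G s' x)) := by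
        have hcomb := chain'_and hlsort hlnomid
        refine chain'_imp_mem _ ?_ hcomb
        rintro a b hal hbl ⟨hab, hnm⟩
        obtain ⟨haK, hav⟩ := (hmemU a).1 hal
        obtain ⟨hbK, hbv⟩ := (hmemU b).1 hbl
        have hadj : G.Adj a b := by
          refine hGood v₁ a b hv₁s (hKsub haK) (hKsub hbK) hav hbv
            (hσs a (hKsub' haK)) hab ?_ ?_
          · exact reach_trans G (reach_symm G (reach_of_mem_comp G haK))
              (reach_of_mem_comp G hbK)
          · intro y hy hady hay hyb hry
            have hyv : y ≠ v₁ := fun e => G.loopless.irrefl v₁ (e ▸ hady)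
            have hys' : y ∈ s' := mem_erase.2 ⟨hyv, hy⟩
            have hyK : y ∈ comp G s' a := mem_comp_of G hry hys'
            rw [comp_eq_of_mem G haK] at hyK
            exact hnm y (mem_filter.2 ⟨hyK, hady⟩) ⟨hay, hyb⟩
        exact ⟨hadj, haK, hbK, hab⟩
      obtain ⟨W, TW, hWspec, hWlen⟩ := block G σ hKspec
        (fun h => hv₁ (hKsub' h)) (fun z hz => hσs z (hKsub' hz)) a₀ l' hmemU hchainOE
      refine ⟨W, TW, hWspec, ?_⟩
      rw [hWlen]
      have hl2 : (a₀ :: l').length = dE G v₁ (comp G s' x) := by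
        rw [hllen, hU]; rfl
      omega
    obtain ⟨C, T, hspec, hlen⟩ := peel G σ v₁ s' hv₁ hσs hblocks s'.card s'
      (le_refl _) (Finset.Subset.refl _) (fun y _ => comp_subset G)
    have hins : insert v₁ s' = s := insert_erase hv₁s
    rw [hins] at hspec
    refine ⟨C, T, hspec, ?_⟩
    have hm := mE_insert_min G σ hv₁ hσs
    rw [hins] at hm
    have hscard : 1 ≤ s.card := card_pos.2 hne
    have hc : s'.card = s.card - 1 := card_erase_of_mem hv₁s
    omega

end GPNG

namespace GPNG
open GPNAux GPNAux2 Finset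
open scoped Classical
set_option linter.unusedSectionVars false
set_option maxHeartbeats 1000000

variable {V : Type*} [DecidableEq V] [Fintype V] (G : SimpleGraph V) {N : ℕ} (σ : V ≃ Fin N)

noncomputable def ncomp (u t : Finset V) : ℕ := (t.image (fun y => comp G u y)).card

theorem peelTop_base : ∃ C T, BSpec G σ (∅ : Finset V) C T ∧
    C.length + 0 = mE G σ ∅ + (∅ : Finset V).card := by
  refine ⟨[], fun _ _ => 0, ⟨?_, rfl, ?_, ?_⟩, ?_⟩
  · intro g hg; simp at hg
  · intro a b hoe; exact absurd hoe.2.1 (Finset.notMem_empty _)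
  · intro a b c hab _; exact absurd hab.2.1 (Finset.notMem_empty _)
  · simp [mE_empty]

theorem peelTop (u : Finset V)
    (hblocks : ∀ K, (∃ x ∈ u, K = comp G u x) →
      ∃ C T, BSpec G σ K C T ∧ C.length + 1 = mE G σ K + K.card) :
    ∀ (n : ℕ) (t : Finset V), t.card ≤ n → t ⊆ u → (∀ y ∈ t, comp G u y ⊆ t) →
    ∃ C T, BSpec G σ t C T ∧ C.length + ncomp G u t = mE G σ t + t.card := by
  intro n
  induction n with
  | zero =>
    intro t ht _ _
    have : t = ∅ := card_eq_zero.1 (Nat.le_antisymm ht (Nat.zero_le _))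
    subst this
    have h0 : ncomp G u (∅ : Finset V) = 0 := by simp [ncomp]
    rw [h0]
    exact peelTop_base G σ
  | succ n ih =>
    intro t hcard hsub hUC
    by_cases hte : t = ∅
    · subst hte
      have h0 : ncomp G u (∅ : Finset V) = 0 := by simp [ncomp]
      rw [h0]
      exact peelTop_base G σ
    · obtain ⟨x, hx⟩ := nonempty_iff_ne_empty.2 hte
      have hxu : x ∈ u := hsub hx
      have hKt : comp G u x ⊆ t := hUC x hx
      have hxK : x ∈ comp G u x := mem_comp_self G hxu
      obtain ⟨CK, TK, hKspec, hKlen⟩ := hblocks (comp G u x) ⟨x, hxu, rfl⟩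
      set K := comp G u x with hKdef
      set t' := t \ K with ht'def
      have ht'sub : t' ⊆ u := (sdiff_subset).trans hsub
      have hclosedK : ∀ z ∈ K, ∀ y, y ∈ u → G.Adj z y → y ∈ K :=
        fun z hz y hy hadj => adj_mem_comp G hz hadj hy
      have hUC' : ∀ y ∈ t', comp G u y ⊆ t' := by
        intro y hy z hz
        obtain ⟨hyt, hyK⟩ := mem_sdiff.1 hy
        have hzt : z ∈ t := hUC y hyt hz
        refine mem_sdiff.2 ⟨hzt, ?_⟩
        intro hzK
        have h1 : comp G u z = comp G u y := comp_eq_of_mem G hz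
        have h2 : comp G u z = comp G u x := comp_eq_of_mem G hzK
        have h3 : y ∈ comp G u y := mem_comp_self G (hsub hyt)
        rw [← h1, h2] at h3
        exact hyK h3
      have hKcard : 1 ≤ K.card := card_pos.2 ⟨x, hxK⟩
      have ht'card : t'.card ≤ n := by
        have h1 : (t \ K).card = t.card - K.card := card_sdiff_of_subset hKt
        have h2 := card_le_card hKt
        rw [← ht'def] at h1
        omega
      obtain ⟨C', T', hC'spec, hC'len⟩ := ih t' ht'card ht'sub hUC'
      have hfinal : runCircuit (CK ++ C') = pureSt := by
        rw [runCircuit_eq_s4, applyCircuit_append, ← runCircuit_eq_s4, hKspec.2.1, ← runCircuit_eq_s4,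
          hC'spec.2.1]
      have hedge_loc : ∀ a b, OE G σ t a b →
          (OE G σ K a b ∧ b ∈ K) ∨ (OE G σ t' a b ∧ b ∉ K) := by
        intro a b h
        by_cases hbK : b ∈ K
        · left
          exact ⟨⟨h.1, hclosedK b hbK a (hsub h.2.1) h.1.symm, hbK, h.2.2.2⟩, hbK⟩
        · right
          have haK : a ∉ K := fun haK => hbK (hclosedK a haK b (hsub h.2.2.1) h.1)
          exact ⟨⟨h.1, mem_sdiff.2 ⟨h.2.1, haK⟩, mem_sdiff.2 ⟨h.2.2.1, hbK⟩, h.2.2.2⟩, hbK⟩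
      have hncomp : ncomp G u t = ncomp G u t' + 1 := by
        have himg : t.image (fun y => comp G u y)
            = insert K (t'.image (fun y => comp G u y)) := by
          ext L
          simp only [Finset.mem_image, Finset.mem_insert]
          constructor
          · rintro ⟨y, hy, rfl⟩
            by_cases hyK : y ∈ K
            · exact Or.inl (comp_eq_of_mem G hyK)
            · exact Or.inr ⟨y, mem_sdiff.2 ⟨hy, hyK⟩, rfl⟩
          · rintro (rfl | ⟨y, hy, rfl⟩)
            · exact ⟨x, hx, rfl⟩
            · exact ⟨y, (mem_sdiff.1 hy).1, rfl⟩
        have hKnot : K ∉ t'.image (fun y => comp G u y) := by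
          intro hK
          obtain ⟨y, hy, he⟩ := Finset.mem_image.1 hK
          have : y ∈ comp G u y := mem_comp_self G (ht'sub hy)
          rw [he] at this
          exact (mem_sdiff.1 hy).2 this
        rw [ncomp, ncomp, himg, Finset.card_insert_of_notMem hKnot]
      refine ⟨CK ++ C', fun a b => if b ∈ K then TK a b else CK.length + T' a b,
        ⟨?_, hfinal, ?_, ?_⟩, ?_⟩
      · intro g hg
        rcases List.mem_append.1 hg with h | h
        · obtain ⟨h1, h2, h3⟩ := hKspec.1 g h
          exact ⟨h1, hKt h2, hKt h3⟩
        · obtain ⟨h1, h2, h3⟩ := hC'spec.1 g h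
          exact ⟨h1, sdiff_subset h2, sdiff_subset h3⟩
      · intro a b hoe
        rcases hedge_loc a b hoe with ⟨hK, hbK⟩ | ⟨ht', hbK⟩
        · obtain ⟨w, hw⟩ := hKspec.2.2.1 a b hK
          refine ⟨w, ?_⟩
          dsimp only
          rw [if_pos hbK, List.take_append_of_le_length (TBounds G σ hKspec hK).2]
          exact hw
        · obtain ⟨w, hw⟩ := hC'spec.2.2.1 a b ht'
          refine ⟨w, ?_⟩
          dsimp only
          rw [if_neg hbK, List.take_length_add_append, runCircuit_eq_s4, applyCircuit_append,
            ← runCircuit_eq_s4, hKspec.2.1, ← runCircuit_eq_s4]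
          exact hw
      · intro a b c hab hbc
        rcases hedge_loc b c hbc with ⟨hKbc, hcK⟩ | ⟨ht'bc, hcK⟩
        · have hbK : b ∈ K := hKbc.2.1
          rcases hedge_loc a b hab with ⟨hKab, hbK'⟩ | ⟨ht'ab, hbK'⟩
          · dsimp only
            rw [if_pos hbK', if_pos hcK]
            exact hKspec.2.2.2 a b c hKab hKbc
          · exact absurd hbK hbK'
        · have hbK : b ∉ K := (mem_sdiff.1 ht'bc.2.1).2
          rcases hedge_loc a b hab with ⟨hKab, hbK'⟩ | ⟨ht'ab, hbK'⟩
          · exact absurd hbK' hbK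
          · dsimp only
            rw [if_neg hbK, if_neg hcK]
            have := hC'spec.2.2.2 a b c ht'ab ht'bc
            omega
      · rw [List.length_append, hncomp]
        have hm : mE G σ t = mE G σ K + mE G σ t' := by
          have h := mE_split G σ hKt (fun z hz y hy hadj => hclosedK z hz y (hsub hy) hadj)
          rw [← ht'def] at h; exact h
        have hc1 : t'.card = t.card - K.card := by
          have h := card_sdiff_of_subset hKt
          rw [← ht'def] at h; exact h
        have hc2 := card_le_card hKt
        omega

end GPNG

namespace GPNG
open GPNAux GPNAux2 Finset
open scoped Classical
set_option linter.unusedSectionVars false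
set_option maxHeartbeats 1000000

variable {V : Type*} [DecidableEq V] [Fintype V] (G : SimpleGraph V) {N : ℕ} (σ : V ≃ Fin N)

theorem Hs_univ : Hs G univ = G := by
  ext a b
  simp [Hs_adj]

theorem reach_univ_iff {a b : V} : reach G univ a b ↔ G.Reachable a b := by
  rw [reach, Hs_univ]

theorem ind_to_hs {w : V} : ∀ (x y : {u : V // u ≠ w}),
    (G.induce {u : V | u ≠ w}).Walk x y → reach G (univ.erase w) x.1 y.1 := by
  intro x y p
  induction p with
  | nil => exact reach_refl G _ _
  | @cons x c _ hadj p ih =>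
    refine reach_trans G (reach_adj G ?_ ?_ ?_) ih
    · exact hadj
    · exact mem_erase.2 ⟨x.2, mem_univ _⟩
    · exact mem_erase.2 ⟨c.2, mem_univ _⟩

theorem hs_to_ind {w : V} : ∀ (x y : V), (Hs G (univ.erase w)).Walk x y →
    ∀ (hx : x ≠ w) (hy : y ≠ w),
    (G.induce {u : V | u ≠ w}).Reachable ⟨x, hx⟩ ⟨y, hy⟩ := by
  intro x y p
  induction p with
  | nil => intro hx hy; rfl
  | @cons x c _ hadj p ih =>
    intro hx hy
    have hcw : c ≠ w := (mem_erase.1 hadj.2.2).1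
    refine SimpleGraph.Reachable.trans ?_ (ih hcw hy)
    exact SimpleGraph.Adj.reachable (by exact hadj.1)

theorem good_univ (σ0 : V ≃ Fin (Fintype.card V)) (hp : IsPCO G σ0) :
    Good G σ0 (univ : Finset V) := by
  intro w a b hw ha hb hwa hwb h1 h2 hre hmid
  have haw : a ≠ w := by
    intro e; rw [e] at h1; exact absurd h1 (lt_irrefl _)
  have hbw : b ≠ w := by
    intro e; rw [e] at h2; exact absurd (lt_trans h1 h2) (lt_irrefl _)
  set K := (G.induce {u : V | u ≠ w}).connectedComponentMk ⟨a, haw⟩ with hK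
  refine hp w K ⟨⟨hwa, h1⟩, ⟨⟨a, haw⟩, ?_, rfl⟩⟩ ⟨⟨hwb, lt_trans h1 h2⟩, ⟨⟨b, hbw⟩, ?_, rfl⟩⟩ h2 ?_
  · rw [SimpleGraph.ConnectedComponent.mem_supp_iff]
  · rw [SimpleGraph.ConnectedComponent.mem_supp_iff, hK]
    apply SimpleGraph.ConnectedComponent.sound
    obtain ⟨p⟩ := hre
    exact (hs_to_ind G a b p haw hbw).symm
  · rintro x ⟨hNP, ⟨⟨x', hx'w⟩, hsupp, rfl⟩⟩ hcon
    have hr : (G.induce {u : V | u ≠ w}).Reachable ⟨a, haw⟩ ⟨x', hx'w⟩ := by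
      have h := (SimpleGraph.ConnectedComponent.mem_supp_iff _ _).1 hsupp
      rw [hK] at h
      exact (SimpleGraph.ConnectedComponent.exact h).symm
    obtain ⟨p⟩ := hr
    exact hmid x' (mem_univ _) hNP.1 hcon.1 hcon.2 (ind_to_hs G _ _ p)

theorem comp_univ_eq_iff {x y : V} :
    comp G univ x = comp G univ y ↔ G.Reachable x y := by
  constructor
  · intro h
    have hx : x ∈ comp G univ x := mem_comp_self G (mem_univ x)
    rw [h] at hx
    exact ((reach_univ_iff G).1 (reach_of_mem_comp G hx)).symm
  · intro h
    have : x ∈ comp G univ y := mem_comp_of G ((reach_univ_iff G).2 h.symm) (mem_univ x)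
    exact comp_eq_of_mem G this

theorem mE_univ_eq : mE G σ univ = Nat.card G.edgeSet := by
  haveI : Fintype ↥G.edgeSet := (Set.toFinite _).fintype
  rw [Nat.card_eq_fintype_card, ← Set.toFinset_card, mE]
  refine Finset.card_bij (fun p _ => s(p.1, p.2)) ?_ ?_ ?_
  · intro p hp
    rw [Set.mem_toFinset, SimpleGraph.mem_edgeSet]
    exact (mem_filter.1 hp).2.1
  · intro p hp q hq he
    obtain ⟨hp1, _, _, hp2⟩ := (mem_filter.1 hp).2
    obtain ⟨hq1, _, _, hq2⟩ := (mem_filter.1 hq).2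
    rcases Sym2.eq_iff.1 he with ⟨e1, e2⟩ | ⟨e1, e2⟩
    · exact Prod.ext e1 e2
    · exfalso
      rw [← e1, ← e2] at hq2
      exact absurd (lt_trans hp2 hq2) (lt_irrefl _)
  · intro e he
    rw [Set.mem_toFinset] at he
    induction e with
    | _ x y =>
      have hadj : G.Adj x y := he
      have hxy : x ≠ y := G.ne_of_adj hadj
      have hσ : σ x ≠ σ y := fun hc => hxy (σ.injective hc)
      rcases lt_or_gt_of_ne hσ with hlt | hgt
      · exact ⟨(x, y), mem_filter.2 ⟨mem_univ _, hadj, mem_univ _, mem_univ _, hlt⟩, rfl⟩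
      · exact ⟨(y, x), mem_filter.2 ⟨mem_univ _, hadj.symm, mem_univ _, mem_univ _, hgt⟩,
          Sym2.eq_swap⟩

theorem ncomp_univ_eq : ncomp G univ univ = Nat.card G.ConnectedComponent := by
  haveI : Fintype G.ConnectedComponent := Fintype.ofFinite _
  rw [Nat.card_eq_fintype_card, ← Finset.card_univ, ncomp]
  refine Finset.card_bij
    (fun L hL => G.connectedComponentMk (Finset.mem_image.1 hL).choose) ?_ ?_ ?_
  · intro L hL; exact mem_univ _
  · intro L hL L' hL' he
    obtain ⟨_, hspec⟩ := (Finset.mem_image.1 hL).choose_spec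
    obtain ⟨_, hspec'⟩ := (Finset.mem_image.1 hL').choose_spec
    have hr := SimpleGraph.ConnectedComponent.exact he
    rw [← hspec, ← hspec']
    exact (comp_univ_eq_iff G).2 hr
  · intro c _
    obtain ⟨y, hy⟩ := Quot.exists_rep c
    refine ⟨comp G univ y, Finset.mem_image.2 ⟨y, mem_univ y, rfl⟩, ?_⟩
    obtain ⟨_, hspec⟩ := (Finset.mem_image.1 (Finset.mem_image.2
      ⟨y, mem_univ y, rfl⟩ : comp G univ y ∈ univ.image (fun z => comp G univ z))).choose_spec
    have hr : G.Reachable _ y := (comp_univ_eq_iff G).1 hspec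
    rw [← hy]
    exact SimpleGraph.ConnectedComponent.sound hr

end GPNG


/-- Every perfect cancellation graph with `n` vertices, `m` edges and `c` connected
components admits a graphic parity network of size exactly `m + n − c`. -/
theorem stmt4 {V : Type*} [Fintype V] [DecidableEq V] (G : SimpleGraph V)
    (h : PerfectCancellationGraph G) :
    ∃ C : List (V × V), IsGPN G C ∧
      C.length = Nat.card G.edgeSet + Fintype.card V - Nat.card G.ConnectedComponent := by
  classical
  open GPNAux GPNAux2 GPNG Finset in
  obtain ⟨σ, hσ⟩ := h
  have hGood : Good G σ univ := good_univ G σ hσ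
  have hblocks : ∀ K, (∃ x ∈ (univ : Finset V), K = comp G univ x) →
      ∃ C T, BSpec G σ K C T ∧ C.length + 1 = mE G σ K + K.card := by
    rintro K ⟨x, -, rfl⟩
    have hKconn : ∀ a ∈ comp G univ x, ∀ b ∈ comp G univ x,
        reach G (comp G univ x) a b := fun a ha b hb =>
      reach_in_comp G ha (reach_trans G (reach_symm G (reach_of_mem_comp G ha))
        (reach_of_mem_comp G hb))
    have hGoodK : Good G σ (comp G univ x) :=
      Good.mono G σ hGood (subset_univ _)
        (fun a y ha hy hadj _ => adj_mem_comp G ha hadj (mem_univ y))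
    exact main G σ (comp G univ x).card _ le_rfl
      ⟨x, mem_comp_self G (mem_univ x)⟩ hKconn hGoodK
  obtain ⟨C, T, hspec, hlen⟩ := peelTop G σ univ hblocks univ.card univ le_rfl
    (Finset.Subset.refl _) (fun y _ => subset_univ _)
  refine ⟨C, ⟨?_, ?_, ?_⟩, ?_⟩
  · exact fun g hg => (hspec.1 g hg).1
  · intro u v hadj
    rcases lt_trichotomy (σ u) (σ v) with hlt | heq | hgt
    · obtain ⟨w, hw⟩ := hspec.2.2.1 u v ⟨hadj, mem_univ _, mem_univ _, hlt⟩
      exact ⟨T u v, w, hw⟩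
    · exfalso
      have := σ.injective heq
      rw [this] at hadj
      exact G.loopless.irrefl v hadj
    · obtain ⟨w, hw⟩ := hspec.2.2.1 v u ⟨hadj.symm, mem_univ _, mem_univ _, hgt⟩
      exact ⟨T v u, w, hw.trans (Finset.pair_comm v u)⟩
  · intro v; exact congrFun hspec.2.1 v
  · have h1 : mE G σ univ = Nat.card G.edgeSet := mE_univ_eq G σ
    have h2 : ncomp G univ univ = Nat.card G.ConnectedComponent := ncomp_univ_eq G
    have h3 : (univ : Finset V).card = Fintype.card V := Finset.card_univ
    omega
end
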